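/- arXiv:1203.3444 — 8 statements merged into one kernel-verified Lean document; each statement's English description precedes it below -/
import Mathlib

section
/- Let n be a positive integer and p ∈ [0,1], and let X be a binomial random variable with parameters n and p, with mean μ = np. Then for every real number k with k ≥ 7μ, one has Pr(X ≥ k) ≤ e^{−k}. -/
/-- If `X ~ Bin(n, p)` with mean `μ = n·p`, then for every real `k ≥ 7μ`,
`Pr(X ≥ k) ≤ e^(−k)`. -/
theorem binomial_upper_tail (n : ℕ) (hn : 0 < n) (p : ENNReal) (hp : p ≤ 1)
    (k : ℝ) (hk : 7 * (n * p.toReal) ≤ k) :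
    (((PMF.binomial p.toNNReal ((ENNReal.toNNReal_mono ENNReal.one_ne_top hp).trans_eq ENNReal.toNNReal_one) n).toMeasure {i : Fin (n + 1) | k ≤ (i : ℝ)}).toReal
      ≤ Real.exp (-k)) := by
  classical
  set q := p.toReal with hqdef
  have hq0 : 0 ≤ q := ENNReal.toReal_nonneg
  have hq1 : q ≤ 1 := by simpa using ENNReal.toReal_mono ENNReal.one_ne_top hp
  have hk0 : (0:ℝ) ≤ k := le_trans (by positivity) hk
  have hval : ∀ i : Fin (n+1),
      ((PMF.binomial p.toNNReal ((ENNReal.toNNReal_mono ENNReal.one_ne_top hp).trans_eq ENNReal.toNNReal_one) n) i).toReal = q ^ (i:ℕ) * (1-q) ^ (n - (i:ℕ)) * (n.choose i) := by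
    intro i
    rw [PMF.binomial_apply, ENNReal.coe_toNNReal (ne_top_of_le_ne_top ENNReal.one_ne_top hp), ENNReal.toReal_mul, ENNReal.toReal_mul, ENNReal.toReal_pow,
      ENNReal.toReal_pow, ENNReal.toReal_natCast,
      ENNReal.toReal_sub_of_le hp ENNReal.one_ne_top, ENNReal.toReal_one, Fin.val_last]
  have hterm_nonneg : ∀ i : Fin (n+1),
      (0:ℝ) ≤ q ^ (i:ℕ) * (1-q) ^ (n - (i:ℕ)) * (n.choose i) := by
    intro i; have : (0:ℝ) ≤ 1 - q := by linarith
    positivity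
  have key : ((PMF.binomial p.toNNReal ((ENNReal.toNNReal_mono ENNReal.one_ne_top hp).trans_eq ENNReal.toNNReal_one) n).toMeasure {i : Fin (n + 1) | k ≤ (i : ℝ)}).toReal
      ≤ Real.exp (-(2*k)) * (q * Real.exp 2 + (1 - q)) ^ n := by
    rw [PMF.toMeasure_apply_fintype]
    rw [ENNReal.toReal_sum (fun i _ =>
      ne_top_of_le_ne_top (PMF.apply_ne_top _ _) (Set.indicator_le_self _ _ i))]
    have step : ∀ i : Fin (n+1),
        (({i : Fin (n + 1) | k ≤ (i : ℝ)}.indicator (PMF.binomial p.toNNReal ((ENNReal.toNNReal_mono ENNReal.one_ne_top hp).trans_eq ENNReal.toNNReal_one) n) i)).toReal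
        ≤ Real.exp (-(2*k)) * ((q * Real.exp 2) ^ (i:ℕ) * (1-q) ^ (n - (i:ℕ)) * (n.choose i)) := by
      intro i
      have hrhs : Real.exp (-(2*k)) * ((q * Real.exp 2) ^ (i:ℕ) * (1-q) ^ (n - (i:ℕ)) * (n.choose i))
          = Real.exp (2 * ((i:ℝ) - k)) * (q ^ (i:ℕ) * (1-q) ^ (n - (i:ℕ)) * (n.choose i)) := by
        have e1 : Real.exp 2 ^ (i:ℕ) = Real.exp (2*((i:ℕ):ℝ)) := by
          rw [← Real.exp_nat_mul]; ring_nf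
        have e2 : Real.exp (2 * (((i:ℕ):ℝ) - k)) = Real.exp (-(2*k)) * Real.exp (2*((i:ℕ):ℝ)) := by
          rw [← Real.exp_add]; ring_nf
        rw [mul_pow, e1, e2]; ring
      rw [hrhs, Set.indicator_apply]
      split_ifs with hi
      · rw [hval i]
        have h1 : (1:ℝ) ≤ Real.exp (2 * ((i:ℝ) - k)) := by
          apply Real.one_le_exp
          have : k ≤ (i:ℝ) := hi
          nlinarith
        nlinarith [hterm_nonneg i]
      · simp only [ENNReal.toReal_zero]
        exact mul_nonneg (Real.exp_pos _).le (mul_nonneg (mul_nonneg (pow_nonneg (by positivity) _) (pow_nonneg (by linarith) _)) (Nat.cast_nonneg _))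
    calc ∑ i : Fin (n+1), (({i : Fin (n + 1) | k ≤ (i : ℝ)}.indicator (PMF.binomial p.toNNReal ((ENNReal.toNNReal_mono ENNReal.one_ne_top hp).trans_eq ENNReal.toNNReal_one) n) i)).toReal
        ≤ ∑ i : Fin (n+1), Real.exp (-(2*k)) * ((q * Real.exp 2) ^ (i:ℕ) * (1-q) ^ (n - (i:ℕ)) * (n.choose i)) :=
          Finset.sum_le_sum (fun i _ => step i)
      _ = Real.exp (-(2*k)) * ∑ i : Fin (n+1), (q * Real.exp 2) ^ (i:ℕ) * (1-q) ^ (n - (i:ℕ)) * (n.choose i) := by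
          rw [Finset.mul_sum]
      _ = Real.exp (-(2*k)) * (q * Real.exp 2 + (1 - q)) ^ n := by
          rw [add_pow]
          rw [Fin.sum_univ_eq_sum_range (fun i => (q * Real.exp 2) ^ i * (1-q) ^ (n - i) * (n.choose i)) (n+1)]
  have hexp2 : Real.exp 2 < 8 := by
    have h := Real.exp_one_lt_d9
    have : Real.exp 2 = Real.exp 1 * Real.exp 1 := by
      rw [← Real.exp_add]; norm_num
    nlinarith [Real.exp_pos 1]
  have hexp2one : (1:ℝ) ≤ Real.exp 2 := Real.one_le_exp (by norm_num)
  have hbound : (q * Real.exp 2 + (1 - q)) ^ n ≤ Real.exp k := by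
    have h1 : q * Real.exp 2 + (1 - q) = 1 + q * (Real.exp 2 - 1) := by ring
    have h2 : (0:ℝ) ≤ q * (Real.exp 2 - 1) := by nlinarith
    have h3 : (q * Real.exp 2 + (1 - q)) ^ n ≤ Real.exp (q * (Real.exp 2 - 1)) ^ n := by
      apply pow_le_pow_left₀ (by linarith)
      rw [h1]
      linarith [Real.add_one_le_exp (q * (Real.exp 2 - 1))]
    have h4 : Real.exp (q * (Real.exp 2 - 1)) ^ n = Real.exp ((n:ℝ) * (q * (Real.exp 2 - 1))) := by
      rw [Real.exp_nat_mul]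
    have h5 : (n:ℝ) * (q * (Real.exp 2 - 1)) ≤ k := by
      have hnq : (0:ℝ) ≤ (n:ℝ) * q := by positivity
      nlinarith
    calc (q * Real.exp 2 + (1 - q)) ^ n ≤ Real.exp (q * (Real.exp 2 - 1)) ^ n := h3
      _ = Real.exp ((n:ℝ) * (q * (Real.exp 2 - 1))) := h4
      _ ≤ Real.exp k := Real.exp_le_exp.mpr h5
  calc ((PMF.binomial p.toNNReal ((ENNReal.toNNReal_mono ENNReal.one_ne_top hp).trans_eq ENNReal.toNNReal_one) n).toMeasure {i : Fin (n + 1) | k ≤ (i : ℝ)}).toReal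
      ≤ Real.exp (-(2*k)) * (q * Real.exp 2 + (1 - q)) ^ n := key
    _ ≤ Real.exp (-(2*k)) * Real.exp k := by
        exact mul_le_mul_of_nonneg_left hbound (Real.exp_pos _).le
    _ = Real.exp (-k) := by rw [← Real.exp_add]; ring_nf
end

section
/- Let k ≥ 2 and n ≥ 3(k−1) be integers with (k−1) dividing n, and set m = n/(k−1). Let G be a graph whose vertex set is a disjoint union V = V(C₁) ∪ … ∪ V(C_{k−1}) of the vertex sets of k−1 pairwise vertex-disjoint cycles C₁, …, C_{k−1}, each of length m, and whose edge set is the union of the edge sets of C₁, …, C_{k−1} together with, for every 1 ≤ i < j ≤ k−1, a perfect matching P_{ij} in the complete bipartite graph between V(C_i) and V(C_j). Then G is k-regular and k-vertex-connected. -/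
/-- A graph `G` (on at least `k+1` vertices) is `k`-vertex-connected if the removal of
any set of fewer than `k` vertices leaves a connected graph. -/
def IsKVertexConnected {V : Type*} (k : ℕ) (G : SimpleGraph V) : Prop :=
  k + 1 ≤ Nat.card V ∧ ∀ S : Set V, S.ncard < k → (G.induce Sᶜ).Connected

/-- Let `k ≥ 2`, `m ≥ 3` (i.e. `n = (k-1)·m ≥ 3(k-1)` with `(k-1) ∣ n`).  Take `k-1`
pairwise vertex-disjoint cycles, each of length `m`, with vertex sets
`{i} × ZMod m` (the cycle edges joining `(i, x)` to `(i, x+1)`), and for every pair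
`i < j` a perfect matching between the `i`-th and the `j`-th cycle, given by a
bijection `π i j` (so `(i, x)` is matched to `(j, π i j x)`).  Then the resulting
graph is `k`-regular and `k`-vertex-connected. -/
theorem regular_and_kConnected_of_cycles_plus_matchings
    (k m : ℕ) (hk : 2 ≤ k) (hm : 3 ≤ m) [NeZero m]
    (π : Fin (k - 1) → Fin (k - 1) → (ZMod m ≃ ZMod m))
    (G : SimpleGraph (Fin (k - 1) × ZMod m)) [DecidableRel G.Adj]
    (hAdj : ∀ i x j y, G.Adj (i, x) (j, y) ↔
      ((i = j ∧ (y = x + 1 ∨ x = y + 1)) ∨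
        (i < j ∧ y = π i j x) ∨ (j < i ∧ x = π j i y))) :
    G.IsRegularOfDegree k ∧ IsKVertexConnected k G := by
  constructor
  · -- regularity
    classical
    have h2 : (2 : ZMod m) ≠ 0 := by
      intro h
      rw [show ((2:ZMod m) = ((2:ℕ):ZMod m)) by push_cast; ring, ZMod.natCast_eq_zero_iff] at h
      exact absurd (Nat.le_of_dvd (by norm_num) h) (by omega)
    have h1 : (1 : ZMod m) ≠ 0 := by
      intro h
      rw [show ((1:ZMod m) = ((1:ℕ):ZMod m)) by push_cast; ring, ZMod.natCast_eq_zero_iff] at h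
      exact absurd (Nat.le_of_dvd (by norm_num) h) (by omega)
    rintro ⟨i, x⟩
    have hN : G.neighborFinset (i, x) =
        ({(i, x+1), (i, x-1)} : Finset (Fin (k-1) × ZMod m)) ∪
          (Finset.univ.erase i).image
            (fun j => (j, if i < j then π i j x else (π j i).symm x)) := by
      ext ⟨j, y⟩
      simp only [SimpleGraph.mem_neighborFinset, hAdj, Finset.mem_union, Finset.mem_insert,
        Finset.mem_singleton, Finset.mem_image, Finset.mem_erase, Finset.mem_univ, true_and, and_true,
        Prod.mk.injEq]
      constructor
      · rintro (⟨rfl, (rfl | hy)⟩ | ⟨hij, rfl⟩ | ⟨hij, rfl⟩)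
        · exact Or.inl (Or.inl ⟨rfl, rfl⟩)
        · refine Or.inl (Or.inr ⟨rfl, ?_⟩)
          rw [hy]; ring
        · exact Or.inr ⟨j, hij.ne', by simp [hij]⟩
        · refine Or.inr ⟨j, hij.ne, ?_⟩
          simp [not_lt.mpr hij.le, hij.not_gt, Equiv.symm_apply_apply]
      · rintro ((⟨rfl, rfl⟩ | ⟨rfl, rfl⟩) | ⟨j', hj', rfl, rfl⟩)
        · exact Or.inl ⟨rfl, Or.inl rfl⟩
        · refine Or.inl ⟨rfl, Or.inr (by ring)⟩
        · rcases lt_or_gt_of_ne (Ne.symm hj') with h | h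
          · exact Or.inr (Or.inl ⟨h, by simp [h]⟩)
          · refine Or.inr (Or.inr ⟨h, by simp [h.not_gt, Equiv.apply_symm_apply]⟩)
    have hdeg : G.degree (i, x) = k := by
      rw [SimpleGraph.degree, hN, Finset.card_union_of_disjoint, Finset.card_image_of_injective,
        Finset.card_erase_of_mem (Finset.mem_univ i)]
      · have hxx : (x + 1 : ZMod m) ≠ x - 1 := by
          intro h
          apply h2
          have : (x + 1) - (x - 1) = 0 := by rw [h]; ring
          calc (2 : ZMod m) = (x+1) - (x-1) := by ring
          _ = 0 := this
        rw [Finset.card_insert_of_notMem (by simp [hxx]), Finset.card_singleton,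
          Finset.card_univ, Fintype.card_fin]
        omega
      · intro a b hab
        exact Prod.ext_iff.mp hab |>.1
      · rw [Finset.disjoint_left]
        rintro ⟨j, y⟩ hmem hmem2
        simp only [Finset.mem_insert, Finset.mem_singleton, Prod.mk.injEq] at hmem
        simp only [Finset.mem_image, Finset.mem_erase, Finset.mem_univ, true_and, and_true,
          Prod.mk.injEq] at hmem2
        obtain ⟨j', hj', rfl, -⟩ := hmem2
        rcases hmem with ⟨rfl, -⟩ | ⟨rfl, -⟩ <;> exact hj' rfl
    exact hdeg
  constructor
  · -- cardinality
    rw [Nat.card_eq_fintype_card, Fintype.card_prod, Fintype.card_fin, ZMod.card]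
    have h3 : 3 * (k - 1) ≤ m * (k - 1) := Nat.mul_le_mul_right _ hm
    have hmul : (k-1) * m = m * (k-1) := Nat.mul_comm _ _
    omega
  intro S hS

  classical
  haveI : NeZero (k - 1) := ⟨by omega⟩
  haveI : Fact (1 < m) := ⟨by omega⟩
  have h2 : (2 : ZMod m) ≠ 0 := by
    intro h
    rw [show ((2:ZMod m) = ((2:ℕ):ZMod m)) by push_cast; ring,
      ZMod.natCast_eq_zero_iff] at h
    exact absurd (Nat.le_of_dvd (by norm_num) h) (by omega)
  set H := G.induce Sᶜ with hH
  have hcongr : ∀ (u v w : ↥Sᶜ), H.Reachable u v → v = w → H.Reachable u w :=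
    fun u v w h e => e ▸ h
  -- single cycle step
  have step : ∀ (i : Fin (k-1)) (x : ZMod m) (hx : (i,x) ∈ Sᶜ) (hx1 : (i,x+1) ∈ Sᶜ),
      H.Adj ⟨(i,x), hx⟩ ⟨(i,x+1), hx1⟩ := by
    intro i x hx hx1
    show G.Adj (i,x) (i,x+1)
    rw [hAdj]
    exact Or.inl ⟨rfl, Or.inl rfl⟩
  -- forward walk
  have walk : ∀ (t : ℕ) (i : Fin (k-1)) (x : ZMod m),
      (∀ s : ℕ, s ≤ t → (i, x + (s : ZMod m)) ∈ Sᶜ) →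
      ∀ (hx : (i,x) ∈ Sᶜ) (ht : (i, x + (t : ZMod m)) ∈ Sᶜ),
      H.Reachable ⟨(i,x), hx⟩ ⟨(i, x + (t : ZMod m)), ht⟩ := by
    intro t
    induction t with
    | zero =>
      intro i x h hx ht
      have : (⟨(i, x + ((0:ℕ) : ZMod m)), ht⟩ : ↥Sᶜ) = ⟨(i,x), hx⟩ :=
        Subtype.ext (by push_cast; ring_nf)
      rw [this]
    | succ t ih =>
      intro i x h hx ht
      have ht' : (i, x + (t : ZMod m)) ∈ Sᶜ := h t (Nat.le_succ t)
      have h1 : H.Reachable ⟨(i,x), hx⟩ ⟨(i, x + (t : ZMod m)), ht'⟩ :=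
        ih i x (fun s hs => h s (hs.trans (Nat.le_succ t))) hx ht'
      have h1' : (i, (x + (t : ZMod m)) + 1) ∈ Sᶜ := by
        rwa [show (x + (t:ZMod m)) + 1 = x + ((t+1:ℕ):ZMod m) by push_cast; ring]
      refine hcongr _ _ _ (h1.trans (step i (x + (t:ZMod m)) ht' h1').reachable) ?_
      exact Subtype.ext (by simp only [Prod.mk.injEq, true_and]; push_cast; ring)
  -- connectivity within a row containing at most one removed vertex
  have row : ∀ (i : Fin (k-1)) (a b : ZMod m),
      (∀ y₁ y₂, (i,y₁) ∈ S → (i,y₂) ∈ S → y₁ = y₂) →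
      ∀ (ha : (i,a) ∈ Sᶜ) (hb : (i,b) ∈ Sᶜ),
      H.Reachable ⟨(i,a), ha⟩ ⟨(i,b), hb⟩ := by
    intro i a b hrow ha hb
    rcases eq_or_ne a b with rfl | hab
    · rfl
    have hcast : ∀ z : ZMod m, ((z.val : ZMod m)) = z := by
      intro z; rw [ZMod.natCast_val, ZMod.cast_id]
    set d := (b - a).val with hd
    set d' := (a - b).val with hd'
    have hba : b - a ≠ 0 := sub_ne_zero_of_ne (Ne.symm hab)
    have hab' : a - b ≠ 0 := sub_ne_zero_of_ne hab
    have hdpos : 0 < d := Nat.pos_of_ne_zero (fun h => hba ((ZMod.val_eq_zero _).mp h))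
    have hd'pos : 0 < d' := Nat.pos_of_ne_zero (fun h => hab' ((ZMod.val_eq_zero _).mp h))
    have hdlt : d < m := ZMod.val_lt _
    have hd'lt : d' < m := ZMod.val_lt _
    have hsum : d + d' = m := by
      have : (a - b) = -(b - a) := by ring
      rw [hd', this, ZMod.neg_val, if_neg hba]
      omega
    have hbd : a + (d : ZMod m) = b := by rw [hd, hcast]; ring
    have had : b + (d' : ZMod m) = a := by rw [hd', hcast]; ring
    by_cases hcase : ∀ s : ℕ, 0 < s → s < d → (i, a + (s : ZMod m)) ∉ S
    · have hall : ∀ s : ℕ, s ≤ d → (i, a + (s : ZMod m)) ∈ Sᶜ := by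
        intro s hs
        rcases Nat.eq_zero_or_pos s with rfl | hspos
        · simpa using ha
        rcases eq_or_lt_of_le hs with rfl | hlt
        · rw [hbd]; exact hb
        · exact hcase s hspos hlt
      exact hcongr _ _ _ (walk d i a hall ha (by rw [hbd]; exact hb))
        (Subtype.ext (show ((i, a + (d:ZMod m)) : Fin (k-1) × ZMod m) = (i, b) by rw [hbd]))
    · push_neg at hcase
      obtain ⟨s, hspos, hslt, hsS⟩ := hcase
      have hall : ∀ s' : ℕ, s' ≤ d' → (i, b + (s' : ZMod m)) ∈ Sᶜ := by
        intro s' hs'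
        rcases Nat.eq_zero_or_pos s' with rfl | hs'pos
        · simpa using hb
        rcases eq_or_lt_of_le hs' with rfl | hlt
        · rw [had]; exact ha
        intro hmem
        have heq : a + (s : ZMod m) = b + (s' : ZMod m) := by
          rw [hrow _ _ hsS hmem]
        rw [← hbd] at heq
        have : ((s : ℕ) : ZMod m) = ((d + s' : ℕ) : ZMod m) := by
          push_cast
          linear_combination heq
        have hmod := (ZMod.natCast_eq_natCast_iff _ _ _).mp this
        have h1 : s % m = (d + s') % m := hmod
        rw [Nat.mod_eq_of_lt (by omega), Nat.mod_eq_of_lt (by omega)] at h1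
        omega
      exact (hcongr _ _ _ (walk d' i b hall hb (by rw [had]; exact ha))
        (Subtype.ext (show ((i, b + (d':ZMod m)) : Fin (k-1) × ZMod m) = (i, a) by rw [had]))).symm
  -- matching adjacency
  have match_adj : ∀ (i j : Fin (k-1)) (x : ZMod m), i < j → G.Adj (i,x) (j, π i j x) := by
    intro i j x hij; rw [hAdj]; exact Or.inr (Or.inl ⟨hij, rfl⟩)
  have match_adj' : ∀ (i j : Fin (k-1)) (x : ZMod m), j < i → G.Adj (i,x) (j, (π j i).symm x) := by
    intro i j x hij; rw [hAdj]
    exact Or.inr (Or.inr ⟨hij, (Equiv.apply_symm_apply _ _).symm⟩)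
  have hfin : S.Finite := Set.toFinite S
  set T := hfin.toFinset with hT
  have hmemT : ∀ v, v ∈ T ↔ v ∈ S := fun v => Set.Finite.mem_toFinset hfin
  have hcardT : T.card < k := by
    rw [← Set.ncard_eq_toFinset_card S hfin]; exact hS
  set cnt : Fin (k-1) → ℕ := fun i => (T.filter (fun v => v.1 = i)).card with hcnt
  have hsum : ∑ i, cnt i = T.card :=
    (Finset.card_eq_sum_card_fiberwise (fun v _ => Finset.mem_univ v.1)).symm
  rw [SimpleGraph.connected_iff_exists_forall_reachable]
  by_cases hA : ∃ j, cnt j = 0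
  · obtain ⟨j, hj⟩ := hA
    have hrowj : ∀ y : ZMod m, (j, y) ∉ S := by
      intro y hy
      have hmemf : ((j,y) : Fin (k-1) × ZMod m) ∈ T.filter (fun v => v.1 = j) :=
        Finset.mem_filter.mpr ⟨(hmemT _).mpr hy, rfl⟩
      rw [Finset.card_eq_zero.mp hj] at hmemf
      exact absurd hmemf (Finset.notMem_empty _)
    have hbase : ((j, (0:ZMod m)) : Fin (k-1) × ZMod m) ∈ Sᶜ := hrowj 0
    refine ⟨⟨(j,0), hbase⟩, ?_⟩
    rintro ⟨⟨i, x⟩, hw⟩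
    rcases eq_or_ne i j with rfl | hij
    · exact row i 0 x (fun y₁ y₂ h₁ _ => absurd h₁ (hrowj y₁)) hbase hw
    rcases lt_or_gt_of_ne hij with h | h
    · have hadj := match_adj i j x h
      have hy : ((j, π i j x) : Fin (k-1) × ZMod m) ∈ Sᶜ := hrowj _
      have h1 : H.Reachable ⟨(j,0), hbase⟩ ⟨(j, π i j x), hy⟩ :=
        row j 0 _ (fun y₁ y₂ h₁ _ => absurd h₁ (hrowj y₁)) hbase hy
      exact h1.trans (SimpleGraph.Adj.reachable
        (show H.Adj ⟨(j, π i j x), hy⟩ ⟨(i,x), hw⟩ from hadj.symm))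
    · have hadj := match_adj' i j x h
      have hy : ((j, (π j i).symm x) : Fin (k-1) × ZMod m) ∈ Sᶜ := hrowj _
      have h1 : H.Reachable ⟨(j,0), hbase⟩ ⟨(j, (π j i).symm x), hy⟩ :=
        row j 0 _ (fun y₁ y₂ h₁ _ => absurd h₁ (hrowj y₁)) hbase hy
      exact h1.trans (SimpleGraph.Adj.reachable
        (show H.Adj ⟨(j, (π j i).symm x), hy⟩ ⟨(i,x), hw⟩ from hadj.symm))
  · push_neg at hA
    have h1le : ∀ i, 1 ≤ cnt i := fun i => Nat.one_le_iff_ne_zero.mpr (hA i)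
    have hone : ∀ i, cnt i = 1 := by
      intro i0
      by_contra hne
      have h2le : 2 ≤ cnt i0 := by have := h1le i0; omega
      have hge : (Finset.univ.erase i0).card • 1 ≤ ∑ x ∈ Finset.univ.erase i0, cnt x :=
        Finset.card_nsmul_le_sum _ _ _ (fun x _ => h1le x)
      have hins : cnt i0 + ∑ x ∈ Finset.univ.erase i0, cnt x = ∑ x, cnt x :=
        Finset.add_sum_erase _ _ (Finset.mem_univ i0)
      rw [Finset.card_erase_of_mem (Finset.mem_univ i0), Finset.card_univ,
        Fintype.card_fin] at hge
      simp only [smul_eq_mul, mul_one] at hge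
      omega
    have hrows : ∀ i : Fin (k-1), ∀ y₁ y₂, (i,y₁) ∈ S → (i,y₂) ∈ S → y₁ = y₂ := by
      intro i y₁ y₂ h₁ h₂
      have hc : (T.filter (fun v => v.1 = i)).card ≤ 1 := le_of_eq (hone i)
      have m₁ : ((i,y₁) : Fin (k-1) × ZMod m) ∈ T.filter (fun v => v.1 = i) :=
        Finset.mem_filter.mpr ⟨(hmemT _).mpr h₁, rfl⟩
      have m₂ : ((i,y₂) : Fin (k-1) × ZMod m) ∈ T.filter (fun v => v.1 = i) :=
        Finset.mem_filter.mpr ⟨(hmemT _).mpr h₂, rfl⟩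
      exact congrArg Prod.snd (Finset.card_le_one.mp hc _ m₁ _ m₂)
    obtain ⟨v0, hv0⟩ := Finset.card_eq_one.mp (hone 0)
    have hbase : ((0, v0.2 + 1) : Fin (k-1) × ZMod m) ∈ Sᶜ := by
      intro hmem
      have hmemf : ((0, v0.2+1) : Fin (k-1) × ZMod m) ∈ T.filter (fun v => v.1 = 0) :=
        Finset.mem_filter.mpr ⟨(hmemT _).mpr hmem, rfl⟩
      rw [hv0, Finset.mem_singleton] at hmemf
      have h1 : v0.2 + 1 = v0.2 := congrArg Prod.snd hmemf
      exact one_ne_zero (by linear_combination h1)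
    refine ⟨⟨(0, v0.2 + 1), hbase⟩, ?_⟩
    rintro ⟨⟨i, x⟩, hw⟩
    rcases eq_or_ne i 0 with rfl | hi0
    · exact row 0 (v0.2+1) x (hrows 0) hbase hw
    have h0i : (0 : Fin (k-1)) < i := (Fin.pos_iff_ne_zero' i).mpr hi0
    obtain ⟨u0, hu0⟩ := Finset.card_eq_one.mp (hone i)
    have hbad1 : ∀ y : ZMod m, ((0, y) : Fin (k-1) × ZMod m) ∈ S → y = v0.2 := by
      intro y hy
      have hmemf : ((0,y) : Fin (k-1) × ZMod m) ∈ T.filter (fun v => v.1 = 0) :=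
        Finset.mem_filter.mpr ⟨(hmemT _).mpr hy, rfl⟩
      rw [hv0, Finset.mem_singleton] at hmemf
      exact congrArg Prod.snd hmemf
    have hbad2 : ∀ y : ZMod m, ((i, π 0 i y) : Fin (k-1) × ZMod m) ∈ S →
        y = (π 0 i).symm u0.2 := by
      intro y hy
      have hmemf : ((i, π 0 i y) : Fin (k-1) × ZMod m) ∈ T.filter (fun v => v.1 = i) :=
        Finset.mem_filter.mpr ⟨(hmemT _).mpr hy, rfl⟩
      rw [hu0, Finset.mem_singleton] at hmemf
      have h1 : π 0 i y = u0.2 := congrArg Prod.snd hmemf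
      rw [← h1, Equiv.symm_apply_apply]
    obtain ⟨y, hy1, hy2⟩ : ∃ y : ZMod m, y ≠ v0.2 ∧ y ≠ (π 0 i).symm u0.2 := by
      have hne : ({v0.2, (π 0 i).symm u0.2} : Finset (ZMod m)) ≠ Finset.univ := by
        intro hcontra
        have hcard := congrArg Finset.card hcontra
        rw [Finset.card_univ, ZMod.card] at hcard
        have hle : ({v0.2, (π 0 i).symm u0.2} : Finset (ZMod m)).card ≤ 2 :=
          (Finset.card_insert_le _ _).trans (by simp)
        omega
      have hex : ∃ y, y ∉ ({v0.2, (π 0 i).symm u0.2} : Finset (ZMod m)) := by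
        by_contra hcon
        push_neg at hcon
        exact hne (Finset.eq_univ_iff_forall.mpr hcon)
      obtain ⟨y, hy⟩ := hex
      simp only [Finset.mem_insert, Finset.mem_singleton, not_or] at hy
      exact ⟨y, hy.1, hy.2⟩
    have hyS : ((0, y) : Fin (k-1) × ZMod m) ∈ Sᶜ := fun hmem => hy1 (hbad1 y hmem)
    have hpyS : ((i, π 0 i y) : Fin (k-1) × ZMod m) ∈ Sᶜ := fun hmem => hy2 (hbad2 y hmem)
    have r1 : H.Reachable ⟨(0, v0.2+1), hbase⟩ ⟨(0, y), hyS⟩ :=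
      row 0 _ _ (hrows 0) hbase hyS
    have hadj : G.Adj (0, y) (i, π 0 i y) := by
      rw [hAdj]; exact Or.inr (Or.inl ⟨h0i, rfl⟩)
    have r2 : H.Reachable ⟨(0,y), hyS⟩ ⟨(i, π 0 i y), hpyS⟩ :=
      SimpleGraph.Adj.reachable (show H.Adj ⟨(0,y), hyS⟩ ⟨(i, π 0 i y), hpyS⟩ from hadj)
    have r3 : H.Reachable ⟨(i, π 0 i y), hpyS⟩ ⟨(i, x), hw⟩ :=
      row i _ _ (hrows i) hpyS hw
    exact (r1.trans r2).trans r3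
end

section
/- Let G = (U₁ ∪ U₂, E) be a bipartite graph with parts U₁ and U₂ of equal size |U₁| = |U₂| = n, and let r ≤ n/2 be a positive integer such that: (B1) for each i ∈ {1,2} and every X ⊆ U_i with |X| ≤ r, the neighborhood satisfies |N(X)| ≥ |X|; and (B2) for every X ⊆ U₁ and Y ⊆ U₂ with |X| = |Y| = r there is at least one edge between X and Y. Then G has a perfect matching. -/
/-- `G.nbhd X` is the set of vertices having at least one neighbor in `X`. -/
def SimpleGraph.nbhd {V : Type*} (G : SimpleGraph V) (X : Set V) : Set V :=
  {v | ∃ x ∈ X, G.Adj x v}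

/-- Let `G` be a bipartite graph with parts `U₁`, `U₂` of equal size `n`, and let
`1 ≤ r ≤ n/2` be such that (B1) for `i ∈ {1,2}`, every `X ⊆ Uᵢ` with `|X| ≤ r`
satisfies `|N(X)| ≥ |X|`, and (B2) any `X ⊆ U₁`, `Y ⊆ U₂` with `|X| = |Y| = r`
span at least one edge.  Then `G` has a perfect matching. -/
theorem perfect_matching_of_expansion {V : Type*} [Fintype V] (G : SimpleGraph V)
    (U₁ U₂ : Set V) (hdisj : Disjoint U₁ U₂) (hcover : U₁ ∪ U₂ = Set.univ)
    (n : ℕ) (hU₁ : U₁.ncard = n) (hU₂ : U₂.ncard = n)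
    (hbip : ∀ u v, G.Adj u v → (u ∈ U₁ ∧ v ∈ U₂) ∨ (u ∈ U₂ ∧ v ∈ U₁))
    (r : ℕ) (hr0 : 1 ≤ r) (hr : r ≤ n / 2)
    (hB1 : ∀ X : Set V, (X ⊆ U₁ ∨ X ⊆ U₂) → X.ncard ≤ r →
      X.ncard ≤ (G.nbhd X).ncard)
    (hB2 : ∀ X Y : Set V, X ⊆ U₁ → Y ⊆ U₂ → X.ncard = r → Y.ncard = r →
      ∃ x ∈ X, ∃ y ∈ Y, G.Adj x y) :
    ∃ M : G.Subgraph, M.IsPerfectMatching := by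
  classical
  -- neighbors of a vertex of U₁ lie in U₂, and vice versa
  have hadj12 : ∀ {a v : V}, a ∈ U₁ → G.Adj a v → v ∈ U₂ := by
    intro a v ha h
    rcases hbip a v h with ⟨_, hv⟩ | ⟨ha2, _⟩
    · exact hv
    · exact absurd ha2 (Set.disjoint_left.mp hdisj ha)
  have hadj21 : ∀ {a v : V}, a ∈ U₂ → G.Adj a v → v ∈ U₁ := by
    intro a v ha h
    rcases hbip a v h with ⟨ha1, _⟩ | ⟨_, hv⟩
    · exact absurd ha (Set.disjoint_left.mp hdisj ha1)
    · exact hv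
  -- Hall's condition on U₁
  have hall : ∀ X : Set V, X ⊆ U₁ → X.ncard ≤ (G.nbhd X).ncard := by
    intro X hX
    by_cases hXr : X.ncard ≤ r
    · exact hB1 X (Or.inl hX) hXr
    push_neg at hXr
    have hNX : G.nbhd X ⊆ U₂ := by
      rintro v ⟨x, hx, hxv⟩
      exact hadj12 (hX hx) hxv
    set Y : Set V := U₂ \ G.nbhd X with hYdef
    have hYU : Y ⊆ U₂ := Set.diff_subset
    -- Y has fewer than r elements
    have hYr : Y.ncard ≤ r := by
      by_contra hc
      push_neg at hc
      obtain ⟨X', hX'X, hX'card⟩ := Set.exists_subset_card_eq (le_of_lt hXr)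
      obtain ⟨Y', hY'Y, hY'card⟩ := Set.exists_subset_card_eq (le_of_lt hc)
      obtain ⟨x, hx, y, hy, hxy⟩ :=
        hB2 X' Y' (fun a ha => hX (hX'X ha)) (fun a ha => hYU (hY'Y ha)) hX'card hY'card
      exact (hY'Y hy).2 ⟨x, hX'X hx, hxy⟩
    -- N(Y) avoids X and lies in U₁
    have hNY : G.nbhd Y ⊆ U₁ \ X := by
      rintro v ⟨y, hy, hyv⟩
      refine ⟨hadj21 (hYU hy) hyv, fun hvX => ?_⟩
      exact (hy : y ∈ Y).2 ⟨v, hvX, hyv.symm⟩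
    have h1 : Y.ncard ≤ (U₁ \ X).ncard :=
      (hB1 Y (Or.inr hYU) hYr).trans (Set.ncard_le_ncard hNY (Set.toFinite _))
    have h2 : (U₁ \ X).ncard = n - X.ncard := by
      rw [Set.ncard_diff hX (Set.toFinite _), hU₁]
    have h3 : (G.nbhd X).ncard = n - Y.ncard := by
      have : G.nbhd X = U₂ \ Y := by
        rw [hYdef, Set.diff_diff_cancel_left hNX]
      rw [this, Set.ncard_diff hYU (Set.toFinite _), hU₂]
    have hXn : X.ncard ≤ n := by
      rw [← hU₁]; exact Set.ncard_le_ncard hX (Set.toFinite _)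
    omega
  -- translate Hall's condition to the subtype formulation
  have hallF : ∀ A : Finset U₁, A.card ≤
      ({b : U₂ | ∃ a ∈ A, G.Adj a b} : Finset U₂).card := by
    intro A
    set X : Set V := Subtype.val '' (A : Set U₁) with hXdef
    have hXU : X ⊆ U₁ := by rintro v ⟨a, _, rfl⟩; exact a.2
    have hAcard : X.ncard = A.card := by
      rw [hXdef, Set.ncard_image_of_injective _ Subtype.val_injective,
        Set.ncard_coe_finset]
    have himg : Subtype.val '' (({b : U₂ | ∃ a ∈ A, G.Adj a b} : Finset U₂) : Set U₂)
        = G.nbhd X := by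
      ext v
      constructor
      · rintro ⟨b, hb, rfl⟩
        rw [Finset.mem_coe, Finset.mem_filter] at hb
        obtain ⟨-, a, ha, hab⟩ := hb
        exact ⟨a, ⟨a, ha, rfl⟩, hab⟩
      · rintro ⟨x, ⟨a, ha, rfl⟩, hav⟩
        refine ⟨⟨v, hadj12 a.2 hav⟩, ?_, rfl⟩
        rw [Finset.mem_coe, Finset.mem_filter]
        exact ⟨Finset.mem_univ _, a, ha, hav⟩
    calc A.card = X.ncard := hAcard.symm
      _ ≤ (G.nbhd X).ncard := hall X hXU
      _ = _ := by
          rw [← himg, Set.ncard_image_of_injective _ Subtype.val_injective,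
            Set.ncard_coe_finset]
  obtain ⟨f, hfinj, hfadj⟩ :=
    (Fintype.all_card_le_filter_rel_iff_exists_injective
      (fun (a : U₁) (b : U₂) => G.Adj a b)).mp hallF
  -- f is bijective since |U₁| = |U₂|
  have hcard : Fintype.card U₁ = Fintype.card U₂ := by
    rw [Set.ncard_eq_toFinset_card', Set.toFinset_card] at hU₁ hU₂
    omega
  have hfbij : Function.Bijective f :=
    (Fintype.bijective_iff_injective_and_card f).mpr ⟨hfinj, hcard⟩
  -- build the matching subgraph
  refine ⟨{ verts := Set.univ
            Adj := fun u v => (∃ hu : u ∈ U₁, (f ⟨u, hu⟩ : V) = v) ∨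
              (∃ hv : v ∈ U₁, (f ⟨v, hv⟩ : V) = u)
            adj_sub := ?_
            edge_vert := fun _ => Set.mem_univ _
            symm := ⟨fun u v h => h.symm⟩ }, ?_, fun _ => Set.mem_univ _⟩
  · rintro u v (⟨hu, rfl⟩ | ⟨hv, rfl⟩)
    · exact hfadj ⟨u, hu⟩
    · exact (hfadj ⟨v, hv⟩).symm
  · intro v _
    have h : v ∈ U₁ ∪ U₂ := hcover ▸ Set.mem_univ v
    rcases h with hv1 | hv2
    · refine ⟨(f ⟨v, hv1⟩ : V), Or.inl ⟨hv1, rfl⟩, ?_⟩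
      rintro w (⟨hv1', rfl⟩ | ⟨hw, hfw⟩)
      · rfl
      · exact absurd hv1 (Set.disjoint_right.mp hdisj (hfw ▸ (f ⟨w, hw⟩).2))
    · obtain ⟨u, hu⟩ := hfbij.surjective ⟨v, hv2⟩
      refine ⟨(u : V), Or.inr ⟨u.2, by rw [Subtype.coe_eta, hu]⟩, ?_⟩
      rintro w (⟨hv1, _⟩ | ⟨hw, hfw⟩)
      · exact absurd hv2 (Set.disjoint_left.mp hdisj hv1)
      · have : f ⟨w, hw⟩ = ⟨v, hv2⟩ := Subtype.ext hfw
        have := hfinj (this.trans hu.symm)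
        exact congrArg Subtype.val this
end

section
/- Let K ≥ 2 and 1 ≤ α < K be real numbers, let p = p(n) = (ln n)^K / n, and let f = f(n) be a function satisfying 1 ≤ f(n) and f(n) = O((ln ln n)³). Then there is a constant c > 0 such that a.a.s. the random graph G ~ G(n,p) satisfies: for every two disjoint vertex subsets U, W with |U| = |W| = ⌊n·f(n)^{−1}·(ln n)^{−α}⌋, the number of edges with one endpoint in U and one endpoint in W is at least c·n·f(n)^{−2}·(ln n)^{K−2α}. -/
/-- The set `E(U,W)` of edges of `G` with one endpoint in `U` and one endpoint in `W`. -/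
def SimpleGraph.edgesBetween {V : Type*} (G : SimpleGraph V) (U W : Set V) :
    Set (Sym2 V) :=
  {e | e ∈ G.edgeSet ∧ ∃ u ∈ U, ∃ w ∈ W, e = s(u, w)}

open Classical in
/-- The probability, under the binomial random graph `G(n,p)`, of the event
`A ⊆ SimpleGraph (Fin n)`. -/
noncomputable def gnpProb (n : ℕ) (p : ℝ) (A : Set (SimpleGraph (Fin n))) : ℝ :=
  ∑ G ∈ Finset.univ.filter (· ∈ A),
    p ^ G.edgeSet.ncard * (1 - p) ^ (n.choose 2 - G.edgeSet.ncard)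

/-- A sequence of events holds asymptotically almost surely in `G(n, p(n))` if its
probability tends to `1` as `n → ∞`. -/
def GnpAAS (p : ℕ → ℝ) (A : ∀ n : ℕ, Set (SimpleGraph (Fin n))) : Prop :=
  Filter.Tendsto (fun n => gnpProb n (p n) (A n)) Filter.atTop (nhds 1)

open Finset Real

noncomputable def allPairs (n : ℕ) : Finset (Sym2 (Fin n)) :=
  Finset.univ.filter (fun e => ¬ e.IsDiag)

lemma card_allPairs (n : ℕ) : (allPairs n).card = n.choose 2 := by
  classical
  have h := SimpleGraph.card_edgeFinset_top_eq_card_choose_two (V := Fin n)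
  rw [Fintype.card_fin] at h
  rw [← h]
  congr 1
  ext e
  simp [allPairs, SimpleGraph.mem_edgeFinset, SimpleGraph.edgeSet_top]

lemma mem_allPairs {n : ℕ} {e : Sym2 (Fin n)} : e ∈ allPairs n ↔ ¬ e.IsDiag := by
  simp [allPairs]

lemma edgeSet_fromEdgeSet_coe {n : ℕ} {T : Finset (Sym2 (Fin n))} (hT : T ⊆ allPairs n) :
    (SimpleGraph.fromEdgeSet (↑T : Set (Sym2 (Fin n)))).edgeSet = ↑T := by
  rw [SimpleGraph.edgeSet_fromEdgeSet]
  ext e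
  simp only [Set.mem_diff, Set.mem_setOf_eq, Finset.mem_coe, and_iff_left_iff_imp]
  intro he
  exact mem_allPairs.1 (hT he)

open Classical in
/-- Reindex the `gnpProb` sum over graphs as a sum over subsets of `allPairs`. -/
lemma gnpProb_eq (n : ℕ) (p : ℝ) (A : Set (SimpleGraph (Fin n))) :
    gnpProb n p A = ∑ T ∈ (allPairs n).powerset,
      (if SimpleGraph.fromEdgeSet (↑T : Set (Sym2 (Fin n))) ∈ A then
        p ^ T.card * (1 - p) ^ (n.choose 2 - T.card) else 0) := by
  classical
  rw [gnpProb, Finset.sum_filter]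
  refine Finset.sum_bij' (fun G _ => G.edgeFinset) (fun T _ => SimpleGraph.fromEdgeSet ↑T)
    (fun G _ => ?_) (fun T _ => Finset.mem_univ _) (fun G _ => ?_) (fun T hT => ?_)
    (fun G _ => ?_)
  · rw [Finset.mem_powerset]
    intro e he
    exact mem_allPairs.2 (G.not_isDiag_of_mem_edgeFinset he)
  · rw [SimpleGraph.coe_edgeFinset, SimpleGraph.fromEdgeSet_edgeSet]
  · rw [Finset.mem_powerset] at hT
    apply Finset.coe_injective
    rw [SimpleGraph.coe_edgeFinset, edgeSet_fromEdgeSet_coe hT]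
  · have hcard : G.edgeSet.ncard = G.edgeFinset.card := by
      rw [← SimpleGraph.coe_edgeFinset, Set.ncard_coe_finset]
    rw [SimpleGraph.coe_edgeFinset, SimpleGraph.fromEdgeSet_edgeSet, hcard]

lemma sum_pow_mul_pow {ι : Type*} [DecidableEq ι] (s : Finset ι) (a b : ℝ) :
    ∑ T ∈ s.powerset, a ^ T.card * b ^ (s.card - T.card) = (a + b) ^ s.card := by
  rw [← Finset.prod_const, Finset.prod_add]
  refine Finset.sum_congr rfl fun T hT => ?_
  rw [Finset.mem_powerset] at hT
  rw [Finset.prod_const, Finset.prod_const, Finset.card_sdiff_of_subset hT]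

lemma gnpProb_univ (n : ℕ) (p : ℝ) : gnpProb n p Set.univ = 1 := by
  classical
  rw [gnpProb_eq]
  simp only [Set.mem_univ, if_true]

  rw [← card_allPairs n, sum_pow_mul_pow]
  simp

lemma gnpProb_nonneg {n : ℕ} {p : ℝ} (hp0 : 0 ≤ p) (hp1 : p ≤ 1) 
    (A : Set (SimpleGraph (Fin n))) : 0 ≤ gnpProb n p A := by
  apply Finset.sum_nonneg
  intro G _
  have : (0:ℝ) ≤ 1 - p := by linarith
  positivity

lemma gnpProb_add_compl {n : ℕ} {p : ℝ} (A : Set (SimpleGraph (Fin n))) :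
    gnpProb n p A + gnpProb n p Aᶜ = 1 := by
  classical
  have h : gnpProb n p A + gnpProb n p Aᶜ = gnpProb n p Set.univ := by
    rw [gnpProb_eq, gnpProb_eq, gnpProb_eq, ← Finset.sum_add_distrib]
    refine Finset.sum_congr rfl fun T _ => ?_
    by_cases h : SimpleGraph.fromEdgeSet (↑T : Set (Sym2 (Fin n))) ∈ A <;>
      simp [h]
  rw [h, gnpProb_univ]

lemma gnpProb_le_sum {n : ℕ} {p : ℝ} (hp0 : 0 ≤ p) (hp1 : p ≤ 1)
    {ι : Type*} (I : Finset ι) (B : ι → Set (SimpleGraph (Fin n)))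
    (A : Set (SimpleGraph (Fin n))) (hsub : ∀ G ∈ A, ∃ i ∈ I, G ∈ B i) :
    gnpProb n p A ≤ ∑ i ∈ I, gnpProb n p (B i) := by
  classical
  have hw : ∀ G : SimpleGraph (Fin n),
      (0:ℝ) ≤ p ^ G.edgeSet.ncard * (1 - p) ^ (n.choose 2 - G.edgeSet.ncard) := by
    intro G
    have : (0:ℝ) ≤ 1 - p := by linarith
    positivity
  rw [gnpProb, Finset.sum_filter]
  calc ∑ G : SimpleGraph (Fin n), (if G ∈ A then
          p ^ G.edgeSet.ncard * (1 - p) ^ (n.choose 2 - G.edgeSet.ncard) else 0)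
      ≤ ∑ G : SimpleGraph (Fin n), ∑ i ∈ I, (if G ∈ B i then
          p ^ G.edgeSet.ncard * (1 - p) ^ (n.choose 2 - G.edgeSet.ncard) else 0) := by
        refine Finset.sum_le_sum fun G _ => ?_
        by_cases hG : G ∈ A
        · obtain ⟨i, hi, hBi⟩ := hsub G hG
          rw [if_pos hG]
          have := Finset.single_le_sum (f := fun i => (if G ∈ B i then
            p ^ G.edgeSet.ncard * (1 - p) ^ (n.choose 2 - G.edgeSet.ncard) else 0))
            (fun j _ => by by_cases h : G ∈ B j <;> simp [h, hw G]) hi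
          simpa [if_pos hBi] using this
        · rw [if_neg hG]
          exact Finset.sum_nonneg fun j _ => by by_cases h : G ∈ B j <;> simp [h, hw G]
    _ = ∑ i ∈ I, gnpProb n p (B i) := by
        rw [Finset.sum_comm]
        refine Finset.sum_congr rfl fun i _ => ?_
        rw [gnpProb, Finset.sum_filter]

open Classical in
lemma gnpProb_between_lt {n : ℕ} {p : ℝ} (hp0 : 0 ≤ p) (hp1 : p ≤ 1)
    (U W : Finset (Fin n)) (hUW : Disjoint U W) (t : ℝ) :
    gnpProb n p {G | ((G.edgesBetween ↑U ↑W).ncard : ℝ) < t} ≤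
      Real.exp t * (p * Real.exp (-1) + (1 - p)) ^ (U.card * W.card) := by
  classical
  have hq : (0:ℝ) ≤ 1 - p := by linarith
  set q : ℝ := 1 - p with hqdef
  set S : Finset (Sym2 (Fin n)) := (U ×ˢ W).image (fun x => s(x.1, x.2)) with hSdef
  have hdisj : ∀ a, a ∈ U → a ∈ W → False := fun a ha hb =>
    (Finset.disjoint_left.1 hUW) ha hb
  have hScard : S.card = U.card * W.card := by
    rw [hSdef, Finset.card_image_of_injOn, Finset.card_product]
    rintro ⟨u, w⟩ huw ⟨u', w'⟩ huw' he
    simp only [Finset.mem_coe, Finset.mem_product] at huw huw'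
    rw [Sym2.eq_iff] at he
    rcases he with ⟨h1, h2⟩ | ⟨h1, h2⟩
    · exact Prod.ext h1 h2
    · have h1' : u = w' := h1
      exact (hdisj u huw.1 (h1' ▸ huw'.2)).elim
  have hSsub : S ⊆ allPairs n := by
    intro e he
    rw [hSdef, Finset.mem_image] at he
    obtain ⟨⟨u, w⟩, huw, rfl⟩ := he
    simp only [Finset.mem_product] at huw
    rw [mem_allPairs, Sym2.isDiag_iff_proj_eq]
    intro h
    have h' : u = w := h
    exact hdisj u huw.1 (h' ▸ huw.2)
  have hmemS : ∀ e : Sym2 (Fin n), e ∈ S ↔ ∃ u ∈ U, ∃ w ∈ W, e = s(u, w) := by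
    intro e
    rw [hSdef, Finset.mem_image]
    constructor
    · rintro ⟨⟨u, w⟩, huw, rfl⟩
      simp only [Finset.mem_product] at huw
      exact ⟨u, huw.1, w, huw.2, rfl⟩
    · rintro ⟨u, hu, w, hw, rfl⟩
      exact ⟨(u, w), Finset.mem_product.2 ⟨hu, hw⟩, rfl⟩
  have key : ∀ T ∈ (allPairs n).powerset,
      (SimpleGraph.fromEdgeSet (↑T : Set (Sym2 (Fin n)))).edgesBetween ↑U ↑W
        = ↑(T ∩ S) := by
    intro T hT
    rw [Finset.mem_powerset] at hT
    ext e
    simp only [SimpleGraph.edgesBetween, Set.mem_setOf_eq,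
      edgeSet_fromEdgeSet_coe hT, Finset.coe_inter, Set.mem_inter_iff,
      Finset.mem_coe]
    rw [hmemS e]
  rw [gnpProb_eq]
  have hM : (allPairs n).card = n.choose 2 := card_allPairs n
  calc ∑ T ∈ (allPairs n).powerset,
        (if SimpleGraph.fromEdgeSet (↑T : Set (Sym2 (Fin n))) ∈
            {G : SimpleGraph (Fin n) | ((G.edgesBetween ↑U ↑W).ncard : ℝ) < t} then
          p ^ T.card * q ^ (n.choose 2 - T.card) else 0)
      ≤ ∑ T ∈ (allPairs n).powerset,
        Real.exp t * Real.exp (-1) ^ (T ∩ S).card * (p ^ T.card * q ^ (n.choose 2 - T.card)) := by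
        refine Finset.sum_le_sum fun T hT => ?_
        have hw : (0:ℝ) ≤ p ^ T.card * q ^ (n.choose 2 - T.card) := by positivity
        by_cases hc : SimpleGraph.fromEdgeSet (↑T : Set (Sym2 (Fin n))) ∈
            {G : SimpleGraph (Fin n) | ((G.edgesBetween ↑U ↑W).ncard : ℝ) < t}
        · rw [if_pos hc]
          have hcard : ((SimpleGraph.fromEdgeSet (↑T : Set (Sym2 (Fin n)))).edgesBetween
              ↑U ↑W).ncard = (T ∩ S).card := by
            rw [key T hT, Set.ncard_coe_finset]
          rw [Set.mem_setOf_eq, hcard] at hc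
          have h1 : (1:ℝ) ≤ Real.exp t * Real.exp (-1) ^ (T ∩ S).card := by
            rw [← Real.exp_nat_mul, ← Real.exp_add]
            rw [Real.one_le_exp_iff]
            have hck := hc
            push_cast
            linarith
          nlinarith [hw, h1]
        · rw [if_neg hc]
          have h2 : (0:ℝ) ≤ Real.exp t * Real.exp (-1) ^ (T ∩ S).card := by positivity
          nlinarith [hw, h2]
    _ = Real.exp t * (p * Real.exp (-1) + q) ^ S.card := by
        have step : ∀ T ∈ (allPairs n).powerset,
            Real.exp t * Real.exp (-1) ^ (T ∩ S).card * (p ^ T.card * q ^ (n.choose 2 - T.card))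
            = Real.exp t * ((∏ e ∈ T, (if e ∈ S then p * Real.exp (-1) else p)) *
                ∏ e ∈ (allPairs n) \ T, q) := by
          intro T hT
          rw [Finset.mem_powerset] at hT
          have hprod : (∏ e ∈ T, (if e ∈ S then p * Real.exp (-1) else p))
              = Real.exp (-1) ^ (T ∩ S).card * p ^ T.card := by
            rw [Finset.prod_ite, Finset.prod_const, Finset.prod_const,
              Finset.filter_mem_eq_inter]
            have hcards : (T.filter (fun e => ¬ e ∈ S)).card = T.card - (T ∩ S).card := by
              have := Finset.card_filter_add_card_filter_not
                (s := T) (p := fun e => e ∈ S)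
              rw [Finset.filter_mem_eq_inter] at this
              omega
            rw [hcards, mul_pow]
            have hle : (T ∩ S).card ≤ T.card := Finset.card_le_card Finset.inter_subset_left
            rw [mul_comm (p ^ (T ∩ S).card), mul_assoc, ← pow_add]
            congr 2
            omega
          rw [hprod, Finset.prod_const, Finset.card_sdiff_of_subset hT, hM]
          ring
        rw [Finset.sum_congr rfl step, ← Finset.mul_sum,
          ← Finset.prod_add (fun e => if e ∈ S then p * Real.exp (-1) else p)
            (fun _ => q) (allPairs n)]
        congr 1
        rw [← Finset.prod_sdiff hSsub]
        have h1 : ∀ e ∈ allPairs n \ S,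
            ((if e ∈ S then p * Real.exp (-1) else p) + q) = 1 := by
          intro e he
          rw [if_neg (Finset.mem_sdiff.1 he).2, hqdef]
          ring
        have h2 : ∀ e ∈ S,
            ((if e ∈ S then p * Real.exp (-1) else p) + q) = p * Real.exp (-1) + q := by
          intro e he
          rw [if_pos he]
        rw [Finset.prod_congr rfl h1, Finset.prod_congr rfl h2,
          Finset.prod_const_one, Finset.prod_const, one_mul]
    _ = Real.exp t * (p * Real.exp (-1) + q) ^ (U.card * W.card) := by rw [hScard]

lemma failure_bound {n m : ℕ} {p t : ℝ} (hm : 1 ≤ m) (hmn : (m:ℝ) ≤ n) (hp0 : 0 ≤ p)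
    (hp1 : p ≤ 1)
    (hexp : 2*(m:ℝ)*Real.log ((n:ℝ)/m) + 2*m + t ≤ p*(m:ℝ)^2/2 - m) :
    ((n.choose m : ℝ))^2 * (Real.exp t * (p * Real.exp (-1) + (1 - p)) ^ (m*m))
      ≤ Real.exp (-(m:ℝ)) := by
  have hm0 : (0:ℝ) < m := by exact_mod_cast hm
  have hnm1 : (1:ℝ) ≤ (n:ℝ)/m := by rw [le_div_iff₀ hm0]; linarith
  have hnm0 : (0:ℝ) < (n:ℝ)/m := by linarith
  have hC : (n.choose m : ℝ) ≤ ((n:ℝ)/m)^m * Real.exp m := by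
    calc (n.choose m : ℝ) ≤ ((n:ℝ)^m : ℝ) / (m.factorial) := by
          exact_mod_cast Nat.choose_le_pow_div m n
      _ = ((n:ℝ)/m)^m * ((m:ℝ)^m / m.factorial) := by
          rw [div_pow]
          field_simp
      _ ≤ ((n:ℝ)/m)^m * Real.exp m := by
          have h1 := Real.pow_div_factorial_le_exp (x := (m:ℝ)) (le_of_lt hm0) m
          have h2 : (0:ℝ) ≤ ((n:ℝ)/m)^m := by positivity
          exact mul_le_mul_of_nonneg_left h1 h2
  have hCe : ((n:ℝ)/m)^m = Real.exp ((m:ℝ) * Real.log ((n:ℝ)/m)) := by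
    rw [Real.exp_nat_mul, Real.exp_log hnm0]
  have hexp1 : (2:ℝ) ≤ Real.exp 1 := by
    have := Real.add_one_le_exp (1:ℝ); linarith
  have heinv : Real.exp (-1) ≤ 1/2 := by
    rw [Real.exp_neg]
    rw [inv_le_comm₀ (Real.exp_pos 1) (by norm_num)]
    linarith
  have hB : (p * Real.exp (-1) + (1 - p)) ≤ Real.exp (-(p/2)) := by
    have h1 : p * Real.exp (-1) + (1 - p) ≤ 1 - p/2 := by
      have := mul_le_mul_of_nonneg_left heinv hp0
      linarith
    have h2 : 1 - p/2 ≤ Real.exp (-(p/2)) := by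
      have := Real.add_one_le_exp (-(p/2)); linarith
    linarith
  have hB0 : (0:ℝ) ≤ p * Real.exp (-1) + (1 - p) := by
    have : (0:ℝ) ≤ p * Real.exp (-1) := by positivity
    linarith
  have hch0 : (0:ℝ) ≤ (n.choose m : ℝ) := by positivity
  calc ((n.choose m : ℝ))^2 * (Real.exp t * (p * Real.exp (-1) + (1 - p)) ^ (m*m))
      ≤ (((n:ℝ)/m)^m * Real.exp m)^2 * (Real.exp t * (Real.exp (-(p/2))) ^ (m*m)) := by
        gcongr
    _ = Real.exp (2*(m:ℝ)*Real.log ((n:ℝ)/m) + 2*m + t + (m*m : ℕ)*(-(p/2))) := by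
        rw [hCe, ← Real.exp_nat_mul, ← Real.exp_add, ← Real.exp_add, ← Real.exp_nat_mul, ← Real.exp_add]
        push_cast
        ring_nf
    _ ≤ Real.exp (-(m:ℝ)) := by
        rw [Real.exp_le_exp]
        push_cast
        ring_nf
        ring_nf at hexp
        linarith [hexp]

open Classical in
lemma union_step {n : ℕ} {p t : ℝ} (hp0 : 0 ≤ p) (hp1 : p ≤ 1) (m : ℕ) :
    gnpProb n p {G : SimpleGraph (Fin n) | ∃ U W : Finset (Fin n), Disjoint U W ∧
        U.card = m ∧ W.card = m ∧ ((G.edgesBetween ↑U ↑W).ncard : ℝ) < t}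
      ≤ (n.choose m : ℝ)^2 * (Real.exp t * (p * Real.exp (-1) + (1 - p)) ^ (m*m)) := by
  classical
  set I : Finset (Finset (Fin n) × Finset (Fin n)) :=
    ((Finset.univ.powersetCard m) ×ˢ (Finset.univ.powersetCard m)).filter
      (fun UW => Disjoint UW.1 UW.2) with hI
  have hB0 : (0:ℝ) ≤ p * Real.exp (-1) + (1 - p) := by
    have : (0:ℝ) ≤ p * Real.exp (-1) := by positivity
    linarith
  have hsub : ∀ G ∈ {G : SimpleGraph (Fin n) | ∃ U W : Finset (Fin n), Disjoint U W ∧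
      U.card = m ∧ W.card = m ∧ ((G.edgesBetween ↑U ↑W).ncard : ℝ) < t},
      ∃ i ∈ I, G ∈ {G' : SimpleGraph (Fin n) |
        ((G'.edgesBetween ↑i.1 ↑i.2).ncard : ℝ) < t} := by
    rintro G ⟨U, W, hd, hU, hW, hlt⟩
    refine ⟨(U, W), ?_, hlt⟩
    rw [hI, Finset.mem_filter, Finset.mem_product]
    exact ⟨⟨Finset.mem_powersetCard.2 ⟨Finset.subset_univ _, hU⟩,
      Finset.mem_powersetCard.2 ⟨Finset.subset_univ _, hW⟩⟩, hd⟩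
  refine le_trans (gnpProb_le_sum hp0 hp1 I _ _ hsub) ?_
  have hbound : ∀ i ∈ I, gnpProb n p {G' : SimpleGraph (Fin n) |
      ((G'.edgesBetween ↑i.1 ↑i.2).ncard : ℝ) < t}
      ≤ Real.exp t * (p * Real.exp (-1) + (1 - p)) ^ (m*m) := by
    rintro ⟨U, W⟩ hi
    rw [hI, Finset.mem_filter, Finset.mem_product] at hi
    have hU : U.card = m := (Finset.mem_powersetCard.1 hi.1.1).2
    have hW : W.card = m := (Finset.mem_powersetCard.1 hi.1.2).2
    have := gnpProb_between_lt hp0 hp1 U W hi.2 t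
    rwa [hU, hW] at this
  refine le_trans (Finset.sum_le_card_nsmul I _ _ hbound) ?_
  rw [nsmul_eq_mul]
  have hIcard : (I.card : ℝ) ≤ ((n.choose m : ℝ))^2 := by
    have h1 : I.card ≤ n.choose m * n.choose m := by
      refine le_trans (Finset.card_filter_le _ _) ?_
      rw [Finset.card_product, Finset.card_powersetCard,
        Finset.card_univ, Fintype.card_fin]
    calc (I.card : ℝ) ≤ ((n.choose m * n.choose m : ℕ) : ℝ) := by exact_mod_cast h1
      _ = ((n.choose m : ℝ))^2 := by push_cast; ring
  have hrhs0 : (0:ℝ) ≤ Real.exp t * (p * Real.exp (-1) + (1 - p)) ^ (m*m) := by positivity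
  exact mul_le_mul_of_nonneg_right hIcard hrhs0

set_option maxHeartbeats 2000000 in
/-- Let `K ≥ 2`, `1 ≤ α < K`, `p = (ln n)^K / n`, and let `f` satisfy `1 ≤ f(n)` and
`f(n) = O((ln ln n)³)`.  Then there is a constant `c > 0` such that a.a.s.
`G ~ G(n,p)` satisfies: for every two disjoint vertex subsets `U`, `W` of size
`⌊n·f(n)⁻¹·(ln n)^{−α}⌋`, we have `|E(U,W)| ≥ c·n·f(n)⁻²·(ln n)^{K−2α}`. -/
theorem gnp_edgesBetween_lower_bound (K α : ℝ) (hK : 2 ≤ K) (hα₁ : 1 ≤ α) (hα₂ : α < K)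
    (f : ℕ → ℝ) (hf₁ : ∀ n, 1 ≤ f n)
    (hf₂ : f =O[Filter.atTop] fun n => (Real.log (Real.log n)) ^ 3) :
    ∃ c : ℝ, 0 < c ∧
      GnpAAS (fun n => (Real.log n) ^ K / n)
        (fun n => {G | ∀ U W : Finset (Fin n), Disjoint U W →
          U.card = ⌊(n : ℝ) * (f n)⁻¹ * (Real.log n) ^ (-α)⌋₊ →
          W.card = ⌊(n : ℝ) * (f n)⁻¹ * (Real.log n) ^ (-α)⌋₊ →
          c * n * (f n)⁻¹ ^ 2 * (Real.log n) ^ (K - 2 * α) ≤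
            ((G.edgesBetween ↑U ↑W).ncard : ℝ)}) := by
  classical
  refine ⟨1/32, by norm_num, ?_⟩
  set P : ℕ → ℝ := fun n => (Real.log n) ^ K / n with hPdef
  set M : ℕ → ℕ := fun n => ⌊(n : ℝ) * (f n)⁻¹ * (Real.log n) ^ (-α)⌋₊ with hMdef
  set T : ℕ → ℝ := fun n => 1/32 * n * (f n)⁻¹ ^ 2 * (Real.log n) ^ (K - 2 * α) with hTdef
  set E : ∀ n : ℕ, Set (SimpleGraph (Fin n)) := fun n => {G | ∀ U W : Finset (Fin n),
    Disjoint U W → U.card = M n → W.card = M n →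
      T n ≤ ((G.edgesBetween ↑U ↑W).ncard : ℝ)} with hEdef
  show Filter.Tendsto (fun n => gnpProb n (P n) (E n)) Filter.atTop (nhds 1)
  -- basic tendsto facts
  have hnat : Filter.Tendsto (fun n : ℕ => (n:ℝ)) Filter.atTop Filter.atTop :=
    tendsto_natCast_atTop_atTop
  have hlogt : Filter.Tendsto (fun n : ℕ => Real.log n) Filter.atTop Filter.atTop :=
    Real.tendsto_log_atTop.comp hnat
  have hloglogt : Filter.Tendsto (fun n : ℕ => Real.log (Real.log n))
      Filter.atTop Filter.atTop := Real.tendsto_log_atTop.comp hlogt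
  obtain ⟨C₀, hC₀⟩ := hf₂.bound
  set C' : ℝ := max C₀ 1 with hC'def
  have hC'1 : (1:ℝ) ≤ C' := le_max_right _ _
  have hC'0 : (0:ℝ) < C' := lt_of_lt_of_le one_pos hC'1
  have hα30 : (0:ℝ) < 16*(α+3)*C' := mul_pos (mul_pos (by norm_num) (by linarith)) hC'0
  -- eventual facts
  have hE1 : ∀ᶠ n : ℕ in Filter.atTop, (16:ℝ) ≤ (n:ℝ) := hnat.eventually_ge_atTop 16
  have hE2 : ∀ᶠ n : ℕ in Filter.atTop, (1:ℝ) ≤ Real.log n := hlogt.eventually_ge_atTop 1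
  have hE3 : ∀ᶠ n : ℕ in Filter.atTop, (1:ℝ) ≤ Real.log (Real.log n) :=
    hloglogt.eventually_ge_atTop 1
  have hE5 : ∀ᶠ n : ℕ in Filter.atTop,
      ‖Real.log (n:ℝ) ^ K‖ ≤ 1 * ‖((n:ℝ)) ^ (1:ℝ)‖ :=
    ((isLittleO_log_rpow_rpow_atTop K one_pos).comp_tendsto hnat).def one_pos
  have hE6 : ∀ᶠ n : ℕ in Filter.atTop,
      ‖Real.log (Real.log n) ^ (3:ℝ)‖ ≤ (1/C') * ‖(Real.log n) ^ (1:ℝ)‖ :=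
    ((isLittleO_log_rpow_rpow_atTop 3 one_pos).comp_tendsto hlogt).def
      (by positivity)
  have hE7 : ∀ᶠ n : ℕ in Filter.atTop,
      ‖Real.log (Real.log n) ^ (4:ℝ)‖ ≤ (1/(16*(α+3)*C')) * ‖(Real.log n) ^ (K-α)‖ :=
    ((isLittleO_log_rpow_rpow_atTop 4 (by linarith : (0:ℝ) < K - α)).comp_tendsto
      hlogt).def (by positivity)
  have hE8 : ∀ᶠ n : ℕ in Filter.atTop,
      ‖Real.log (n:ℝ) ^ (α+1)‖ ≤ 1 * ‖((n:ℝ)) ^ (1/2:ℝ)‖ :=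
    ((isLittleO_log_rpow_rpow_atTop (α+1) (by norm_num : (0:ℝ) < 1/2)).comp_tendsto
      hnat).def one_pos
  -- the big eventual estimate
  have hmain : ∀ᶠ n : ℕ in Filter.atTop,
      (0 ≤ P n ∧ P n ≤ 1) ∧ ((n:ℝ) ^ (1/2:ℝ) / 2 ≤ (M n : ℝ)) ∧
        gnpProb n (P n) ((E n)ᶜ) ≤ Real.exp (-(M n : ℝ)) := by
    filter_upwards [hE1, hE2, hE3, hC₀, hE5, hE6, hE7, hE8]
      with n h16 hL1 hLL1 hfB h5 h6 h7 h8
    set L : ℝ := Real.log n with hLdef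
    set LL : ℝ := Real.log L with hLLdef
    have hL0 : (0:ℝ) < L := lt_of_lt_of_le one_pos hL1
    have hLL0 : (0:ℝ) < LL := lt_of_lt_of_le one_pos hLL1
    have hn0 : (0:ℝ) < (n:ℝ) := by linarith only [h16]
    have hf0 : (0:ℝ) < f n := lt_of_lt_of_le one_pos (hf₁ n)
    set x : ℝ := (n : ℝ) * (f n)⁻¹ * L ^ (-α) with hxdef
    have hLa0 : (0:ℝ) < L ^ (-α) := Real.rpow_pos_of_pos hL0 _
    have hLA0 : (0:ℝ) < L ^ α := Real.rpow_pos_of_pos hL0 _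
    have hx0 : (0:ℝ) < x := by positivity
    -- strip norms
    have hfC : f n ≤ C' * LL^3 := by
      have h1 : f n ≤ ‖f n‖ := le_abs_self _
      have h2 : ‖(LL)^3‖ = LL^3 := by
        rw [Real.norm_eq_abs, abs_of_nonneg (by positivity)]
      have h3 : C₀ * LL^3 ≤ C' * LL^3 := by
        have : (0:ℝ) ≤ LL^3 := by positivity
        exact mul_le_mul_of_nonneg_right (le_max_left _ _) this
      calc f n ≤ ‖f n‖ := h1
        _ ≤ C₀ * ‖(LL)^3‖ := hfB
        _ = C₀ * LL^3 := by rw [h2]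
        _ ≤ C' * LL^3 := h3
    have hLK_le_n : L ^ K ≤ (n:ℝ) := by
      have h1 : ‖L ^ K‖ = L ^ K := by
        rw [Real.norm_eq_abs, abs_of_nonneg (Real.rpow_nonneg hL0.le _)]
      have h2 : ‖((n:ℝ)) ^ (1:ℝ)‖ = (n:ℝ) := by
        rw [Real.rpow_one, Real.norm_eq_abs, abs_of_nonneg hn0.le]
      rw [h1, h2, one_mul] at h5
      exact h5
    have hp0 : 0 ≤ P n := by
      have : (0:ℝ) ≤ L ^ K := Real.rpow_nonneg hL0.le _
      exact div_nonneg this hn0.le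
    have hp1 : P n ≤ 1 := by
      rw [hPdef]
      exact (div_le_one hn0).2 hLK_le_n
    have hfL : f n ≤ L := by
      have h2 : ‖LL ^ (3:ℝ)‖ = LL^3 := by
        rw [Real.norm_eq_abs, abs_of_nonneg (Real.rpow_nonneg hLL0.le _),
          ← Real.rpow_natCast LL 3]
        norm_num
      have h3 : ‖L ^ (1:ℝ)‖ = L := by
        rw [Real.rpow_one, Real.norm_eq_abs, abs_of_nonneg hL0.le]
      rw [h2, h3] at h6
      calc f n ≤ C' * LL^3 := hfC
        _ ≤ C' * ((1/C') * L) := by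
            exact mul_le_mul_of_nonneg_left h6 hC'0.le
        _ = L := by field_simp
    have hLL4 : 16*(α+3)*C' * (LL^3 * LL) ≤ L ^ (K - α) := by
      have h2 : ‖LL ^ (4:ℝ)‖ = LL^3 * LL := by
        rw [Real.norm_eq_abs, abs_of_nonneg (Real.rpow_nonneg hLL0.le _),
          show (4:ℝ) = (3:ℝ) + 1 by norm_num, Real.rpow_add hLL0, Real.rpow_one,
          ← Real.rpow_natCast LL 3]
        norm_num
      have h3 : ‖L ^ (K - α)‖ = L ^ (K - α) := by
        rw [Real.norm_eq_abs, abs_of_nonneg (Real.rpow_nonneg hL0.le _)]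
      rw [h2, h3] at h7
      rw [div_mul_eq_mul_div, le_div_iff₀ hα30] at h7
      linarith only [h7]
    have hLa1 : L ^ (α + 1) ≤ (n:ℝ) ^ (1/2:ℝ) := by
      have h2 : ‖L ^ (α+1)‖ = L ^ (α+1) := by
        rw [Real.norm_eq_abs, abs_of_nonneg (Real.rpow_nonneg hL0.le _)]
      have h3 : ‖((n:ℝ)) ^ (1/2:ℝ)‖ = (n:ℝ) ^ (1/2:ℝ) := by
        rw [Real.norm_eq_abs, abs_of_nonneg (Real.rpow_nonneg hn0.le _)]
      rw [h2, h3, one_mul] at h8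
      exact h8
    -- x as a quotient
    have hxeq : x = (n:ℝ) / (f n * L ^ α) := by
      rw [hxdef, Real.rpow_neg hL0.le]
      field_simp
    have hfla : f n * L ^ α ≤ L ^ (α + 1) := by
      rw [Real.rpow_add hL0, Real.rpow_one]
      calc f n * L ^ α ≤ L * L ^ α := mul_le_mul_of_nonneg_right hfL hLA0.le
        _ = L ^ α * L := by ring
    have hflapos : (0:ℝ) < f n * L ^ α := by positivity
    have hsqn : (0:ℝ) < (n:ℝ) ^ (1/2:ℝ) := Real.rpow_pos_of_pos hn0 _
    have hsqmul : (n:ℝ) ^ (1/2:ℝ) * (n:ℝ) ^ (1/2:ℝ) = (n:ℝ) := by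
      rw [← Real.rpow_add hn0]
      norm_num
    have hsq_le_x : (n:ℝ) ^ (1/2:ℝ) ≤ x := by
      rw [hxeq, le_div_iff₀ hflapos]
      calc (n:ℝ) ^ (1/2:ℝ) * (f n * L ^ α) ≤ (n:ℝ) ^ (1/2:ℝ) * (n:ℝ) ^ (1/2:ℝ) := by
            refine mul_le_mul_of_nonneg_left ?_ hsqn.le
            exact le_trans hfla hLa1
        _ = (n:ℝ) := hsqmul
    have hsq4 : (2:ℝ) ≤ (n:ℝ) ^ (1/2:ℝ) := by
      have h42 : ((4:ℝ)^(2:ℕ)) ^ (1/2:ℝ) = 4 := by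
        rw [← Real.rpow_natCast (4:ℝ) 2, ← Real.rpow_mul (by norm_num : (0:ℝ) ≤ 4)]
        norm_num
      have h16' : ((4:ℝ)^(2:ℕ)) ≤ (n:ℝ) := le_trans (by norm_num) h16
      have := Real.rpow_le_rpow (by norm_num : (0:ℝ) ≤ (4:ℝ)^(2:ℕ))
        h16' (by norm_num : (0:ℝ) ≤ 1/2)
      rw [h42] at this
      linarith
    have hx2 : (2:ℝ) ≤ x := le_trans hsq4 hsq_le_x
    have hm1 : 1 ≤ M n := by
      rw [hMdef]
      exact Nat.le_floor (by push_cast; linarith)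
    have hmR1 : (1:ℝ) ≤ (M n : ℝ) := by exact_mod_cast hm1
    have hmR0 : (0:ℝ) < (M n : ℝ) := by linarith only [hmR1]
    have hmx : (M n : ℝ) ≤ x := Nat.floor_le hx0.le
    have hxm : x ≤ 2 * (M n : ℝ) := by
      have := Nat.sub_one_lt_floor x
      have h2 : x - 1 < (M n : ℝ) := by rw [hMdef]; exact_mod_cast this
      linarith only [h2, hx2]
    have hx_le_n : x ≤ (n:ℝ) := by
      have h1 : (f n)⁻¹ ≤ 1 := by
        rw [inv_le_one_iff₀]; right; exact hf₁ n
      have h2 : L ^ (-α) ≤ 1 :=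
        Real.rpow_le_one_of_one_le_of_nonpos hL1 (by linarith)
      calc x = (n:ℝ) * ((f n)⁻¹ * L ^ (-α)) := by rw [hxdef]; ring
        _ ≤ (n:ℝ) * 1 := by
            refine mul_le_mul_of_nonneg_left ?_ hn0.le
            calc (f n)⁻¹ * L ^ (-α) ≤ 1 * 1 := by
                  refine mul_le_mul h1 h2 hLa0.le (by norm_num)
              _ = 1 := by norm_num
        _ = (n:ℝ) := by ring
    have hmn : (M n : ℝ) ≤ (n:ℝ) := le_trans hmx hx_le_n
    have hsqm : (n:ℝ) ^ (1/2:ℝ) / 2 ≤ (M n : ℝ) := by linarith only [hsq_le_x, hxm]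
    -- products with p
    have hLKa : L ^ K * L ^ (-α) = L ^ (K - α) := by
      rw [← Real.rpow_add hL0]; ring_nf
    have hpx : P n * x = (f n)⁻¹ * L ^ (K - α) := by
      have hn' : (n:ℝ) ≠ 0 := hn0.ne'
      calc P n * x = (L ^ K * L ^ (-α)) * ((n:ℝ)/(n:ℝ)) * (f n)⁻¹ := by
            rw [hPdef, hxdef]; ring
        _ = (f n)⁻¹ * L ^ (K - α) := by rw [div_self hn', hLKa]; ring
    have hLKa2 : L ^ K * (L ^ (-α))^(2:ℕ) = L ^ (K - 2*α) := by
      rw [← Real.rpow_natCast (L ^ (-α)) 2, ← Real.rpow_mul hL0.le, ← Real.rpow_add hL0]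
      norm_num
      ring_nf
    have hpx2 : P n * x^2 = (n:ℝ) * (f n)⁻¹^2 * L ^ (K - 2*α) := by
      have hn' : (n:ℝ) ≠ 0 := hn0.ne'
      calc P n * x^2 = (L ^ K * (L ^ (-α))^(2:ℕ)) * ((n:ℝ)/(n:ℝ)) * ((n:ℝ) * (f n)⁻¹^2) := by
            rw [hPdef, hxdef]; ring
        _ = (n:ℝ) * (f n)⁻¹^2 * L ^ (K - 2*α) := by rw [div_self hn', hLKa2]; ring
    have hpm : 8*(α+3)*LL ≤ P n * (M n : ℝ) := by
      have hfinv : (C' * LL^3)⁻¹ ≤ (f n)⁻¹ := by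
        refine inv_anti₀ hf0 hfC
      have hkey : 8*(α+3)*LL ≤ (C' * LL^3)⁻¹ * L ^ (K - α) / 2 := by
        rw [inv_mul_eq_div, div_div,
          le_div_iff₀ (by positivity : (0:ℝ) < C' * LL^3 * 2)]
        calc 8*(α+3)*LL * (C' * LL^3 * 2) = 16*(α+3)*C' * (LL^3 * LL) := by ring
          _ ≤ L ^ (K - α) := hLL4
      have h2 : (C' * LL^3)⁻¹ * L ^ (K - α) / 2 ≤ (f n)⁻¹ * L ^ (K - α) / 2 := by
        have : (0:ℝ) ≤ L ^ (K - α) := Real.rpow_nonneg hL0.le _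
        have h5' := mul_le_mul_of_nonneg_right hfinv this
        linarith only [h5']
      have h3 : (f n)⁻¹ * L ^ (K - α) / 2 ≤ P n * (M n : ℝ) := by
        rw [← hpx]
        have h6' := mul_le_mul_of_nonneg_left hxm hp0
        linarith only [h6']
      linarith only [hkey, h2, h3]
    have he1 : Real.log ((n:ℝ)/(M n : ℝ)) ≤ (α+2)*LL := by
      have hnm_pos : (0:ℝ) < (n:ℝ)/(M n : ℝ) := by positivity
      have hnx : (n:ℝ)/x = f n * L ^ α := by
        rw [hxeq]
        field_simp
      have hub : (n:ℝ)/(M n : ℝ) ≤ 2 * (f n * L ^ α) := by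
        rw [div_le_iff₀ hmR0, ← hnx]
        have h1 : (n:ℝ)/x * x ≤ 2 * ((n:ℝ)/x) * (M n : ℝ) := by
          have h2 : (0:ℝ) ≤ (n:ℝ)/x := by positivity
          calc (n:ℝ)/x * x ≤ (n:ℝ)/x * (2 * (M n:ℝ)) :=
                mul_le_mul_of_nonneg_left hxm h2
            _ = 2 * ((n:ℝ)/x) * (M n : ℝ) := by ring
        calc (n:ℝ) = (n:ℝ)/x * x := by field_simp
          _ ≤ 2 * ((n:ℝ)/x) * (M n : ℝ) := h1
      have hub2 : 2 * (f n * L ^ α) ≤ 2 * L ^ (α+1) := by linarith only [hfla]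
      have hlog2 : Real.log 2 ≤ 1 := by
        have h9' := Real.log_le_sub_one_of_pos (by norm_num : (0:ℝ) < 2)
        linarith only [h9']
      calc Real.log ((n:ℝ)/(M n : ℝ)) ≤ Real.log (2 * L ^ (α+1)) := by
            refine Real.log_le_log hnm_pos ?_
            linarith only [hub, hub2]
        _ = Real.log 2 + (α+1) * LL := by
            rw [Real.log_mul (by norm_num) (Real.rpow_pos_of_pos hL0 _).ne',
              Real.log_rpow hL0]
        _ ≤ (α+2)*LL := by linarith only [hlog2, hLL1, hα₁]
    have he2 : T n ≤ P n * (M n : ℝ)^2/8 := by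
      have hx2m : x^2 ≤ 4 * (M n:ℝ)^2 := by
        calc x^2 ≤ (2*(M n:ℝ))^2 := by
              exact pow_le_pow_left₀ hx0.le hxm 2
          _ = 4 * (M n:ℝ)^2 := by ring
      have h1 : P n * x^2 ≤ 4 * (P n * (M n:ℝ)^2) := by
        have h7' := mul_le_mul_of_nonneg_left hx2m hp0
        linarith only [h7']
      have hTeq : T n = P n * x^2 / 32 := by
        simp only [hTdef]
        rw [← hLdef, hpx2]
        ring
      rw [hTeq]
      linarith only [h1]
    -- the exponent inequality for failure_bound
    have hexp : 2*(M n:ℝ)*Real.log ((n:ℝ)/(M n:ℝ)) + 2*(M n:ℝ) + T n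
        ≤ P n * (M n:ℝ)^2/2 - (M n:ℝ) := by
      set mR : ℝ := (M n : ℝ)
      set S : ℝ := P n * mR^2 with hSdef
      have hS : 8*(α+3)*(LL*mR) ≤ S := by
        rw [hSdef]
        have := mul_le_mul_of_nonneg_right hpm hmR0.le
        calc 8*(α+3)*(LL*mR) = 8*(α+3)*LL * mR := by ring
          _ ≤ P n * mR * mR := this
          _ = P n * mR^2 := by ring
      have hA' : 2*(mR*Real.log ((n:ℝ)/mR)) ≤ 2*(α+2)*(LL*mR) := by
        have h8' := mul_le_mul_of_nonneg_left he1 hmR0.le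
        nlinarith only [h8']
      have h6' : 3*mR ≤ (α+5)*(LL*mR) := by
        have h1 : (α+5) * 1 ≤ (α+5)*LL :=
          mul_le_mul_of_nonneg_left hLL1 (by linarith)
        have h2 : 3 ≤ (α+5)*LL := by linarith
        have h9' := mul_le_mul_of_nonneg_right h2 hmR0.le
        nlinarith only [h9']
      have ht2 : T n ≤ S/8 := by exact he2
      linarith only [hS, hA', h6', ht2]
    -- assemble the failure bound
    refine ⟨⟨hp0, hp1⟩, hsqm, ?_⟩
    have hcompl : (E n)ᶜ = {G : SimpleGraph (Fin n) | ∃ U W : Finset (Fin n),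
        Disjoint U W ∧ U.card = M n ∧ W.card = M n ∧
          ((G.edgesBetween ↑U ↑W).ncard : ℝ) < T n} := by
      ext G
      simp only [hEdef, Set.mem_compl_iff, Set.mem_setOf_eq]
      push_neg
      rfl
    rw [hcompl]
    calc gnpProb n (P n) {G : SimpleGraph (Fin n) | ∃ U W : Finset (Fin n),
        Disjoint U W ∧ U.card = M n ∧ W.card = M n ∧
          ((G.edgesBetween ↑U ↑W).ncard : ℝ) < T n}
        ≤ ((n.choose (M n) : ℝ))^2 * (Real.exp (T n) *
            (P n * Real.exp (-1) + (1 - P n)) ^ (M n * M n)) :=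
          union_step hp0 hp1 (M n)
      _ ≤ Real.exp (-(M n : ℝ)) := failure_bound hm1 hmn hp0 hp1 hexp
  -- conclude by squeezing
  have hrt : Filter.Tendsto (fun n : ℕ => ((n:ℝ)) ^ (1/2:ℝ) / 2) Filter.atTop
      Filter.atTop :=
    ((tendsto_rpow_atTop (by norm_num : (0:ℝ) < 1/2)).comp hnat).atTop_div_const
      (by norm_num)
  have hmT : Filter.Tendsto (fun n => (M n : ℝ)) Filter.atTop Filter.atTop :=
    Filter.tendsto_atTop_mono' Filter.atTop (hmain.mono fun n h => h.2.1) hrt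
  have hexp0 : Filter.Tendsto (fun n => Real.exp (-(M n : ℝ))) Filter.atTop (nhds 0) :=
    Real.tendsto_exp_atBot.comp (Filter.tendsto_neg_atTop_atBot.comp hmT)
  have hg : Filter.Tendsto (fun n => 1 - Real.exp (-(M n : ℝ))) Filter.atTop (nhds 1) := by
    have := (tendsto_const_nhds (x := (1:ℝ)) (f := Filter.atTop)).sub hexp0
    simpa using this
  refine tendsto_of_tendsto_of_tendsto_of_le_of_le' hg tendsto_const_nhds ?_ ?_
  · filter_upwards [hmain] with n hn
    have h1 := gnpProb_add_compl (n := n) (p := P n) (E n)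
    linarith only [h1, hn.2.2]
  · filter_upwards [hmain] with n hn
    have h1 := gnpProb_add_compl (n := n) (p := P n) (E n)
    have h2 := gnpProb_nonneg hn.1.1 hn.1.2 ((E n)ᶜ)
    linarith only [h1, h2]
end

section
/- Let m be a positive integer and let D = (V,E) be an oriented graph with the following property: for any two disjoint subsets S, T ⊆ V with |S| = |T| = m there exists an edge of D directed from a vertex of S to a vertex of T. Then D contains a directed path of length at least |V| − 2m + 1 (i.e., a directed path on at least |V| − 2m + 2 distinct vertices). -/
open Finset

private lemma card_split {V : Type*} [Fintype V] [DecidableEq V]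
    (P : List V) (hnd : P.Nodup) (D : Finset V) (hdisj : ∀ v ∈ P, v ∉ D) :
    D.card + P.length + (univ.filter fun u => u ∉ D ∧ u ∉ P).card = Fintype.card V := by
  classical
  have hset : (univ.filter fun u => u ∉ D ∧ u ∉ P) = (D ∪ P.toFinset)ᶜ := by
    ext u
    simp [List.mem_toFinset, not_or, and_comm]
  have hdis : Disjoint D P.toFinset := by
    rw [Finset.disjoint_right]
    intro v hv
    exact hdisj v (List.mem_toFinset.mp hv)
  have hcu : (D ∪ P.toFinset).card = D.card + P.length := by
    rw [Finset.card_union_of_disjoint hdis, List.toFinset_card_of_nodup hnd]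
  have hle : (D ∪ P.toFinset).card ≤ Fintype.card V := Finset.card_le_univ _
  rw [hset, Finset.card_compl]
  omega

private lemma finish_path {V : Type*} [Fintype V] [DecidableEq V]
    (E : V → V → Prop) (m : ℕ) (P : List V) (D : Finset V)
    (hnd : P.Nodup) (hch : P.Chain' E) (hdisj : ∀ v ∈ P, v ∉ D)
    (hDm : D.card + 1 ≤ m)
    (hU : (univ.filter fun u => u ∉ D ∧ u ∉ P).card < m) :
    ∃ Q : List V, Q.Nodup ∧ Q.Chain' E ∧
      (Fintype.card V : ℤ) - 2 * m + 2 ≤ Q.length := by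
  have hc := card_split P hnd D hdisj
  exact ⟨P, hnd, hch, by omega⟩

private lemma key {V : Type*} [Fintype V] [DecidableEq V]
    (E : V → V → Prop) (m : ℕ)
    (hexp : ∀ S T : Finset V, Disjoint S T → S.card = m → T.card = m →
      ∃ s ∈ S, ∃ t ∈ T, E s t) :
    ∀ n (P : List V) (D : Finset V),
      P.Nodup → P.Chain' E → (∀ v ∈ P, v ∉ D) →
      (∀ d ∈ D, ∀ u, u ∉ D → u ∉ P → ¬ E d u) →
      D.card + 1 ≤ m →
      2 * (univ.filter fun u => u ∉ D ∧ u ∉ P).card + P.length ≤ n →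
      ∃ Q : List V, Q.Nodup ∧ Q.Chain' E ∧
        (Fintype.card V : ℤ) - 2 * m + 2 ≤ Q.length := by
  classical
  intro n
  induction n with
  | zero =>
    intro P D hnd hch hdisj hDU hDm hmeas
    exact finish_path E m P D hnd hch hdisj hDm (by omega)
  | succ n ih =>
    intro P D hnd hch hdisj hDU hDm hmeas
    by_cases hU : (univ.filter fun u => u ∉ D ∧ u ∉ P).card < m
    · exact finish_path E m P D hnd hch hdisj hDm hU
    · push_neg at hU
      have hUne : (univ.filter fun u => u ∉ D ∧ u ∉ P).Nonempty :=
        Finset.card_pos.mp (by omega)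
      rcases P.eq_nil_or_concat with hPnil | ⟨L, v, hPc⟩
      · -- P = [], push an arbitrary unvisited vertex
        subst hPnil
        obtain ⟨u, hu⟩ := hUne
        have hu' : u ∉ D := ((Finset.mem_filter.mp hu).2).1
        have hfe : (univ.filter fun w => w ∉ D ∧ w ∉ [u])
            = (univ.filter fun w => w ∉ D ∧ w ∉ ([] : List V)).erase u := by
          ext w
          simp only [Finset.mem_filter, Finset.mem_univ, true_and, Finset.mem_erase,
            List.mem_singleton, List.not_mem_nil, not_false_iff, and_true, ne_eq]
          tauto
        have hce := Finset.card_erase_add_one hu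
        refine ih [u] D (by simp) (List.isChain_singleton u) ?_ ?_ hDm ?_
        · intro w hw
          simp only [List.mem_singleton] at hw
          subst hw; exact hu'
        · intro d hd w hwD hwP
          exact hDU d hd w hwD (by simp)
        · rw [hfe]
          simp only [List.length_nil, add_zero] at hmeas
          simp only [List.length_singleton]
          omega
      · -- P = L ++ [v]
        have hP : P = L ++ [v] := by simpa [List.concat_eq_append] using hPc
        clear hPc
        subst hP
        by_cases hpush : ∃ u ∈ (univ.filter fun w => w ∉ D ∧ w ∉ L ++ [v]), E v u
        · -- push u
          obtain ⟨u, hu, hEvu⟩ := hpush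
          obtain ⟨huD, huP⟩ := (Finset.mem_filter.mp hu).2
          have hnd' : ((L ++ [v]) ++ [u]).Nodup := by
            rw [List.nodup_append']
            exact ⟨hnd, List.nodup_singleton u, by simpa using fun h => huP h⟩
          have hch' : ((L ++ [v]) ++ [u]).Chain' E := by
            show List.IsChain E _
            rw [List.isChain_append]
            refine ⟨hch, List.isChain_singleton u, ?_⟩
            intro x hx y hy
            simp only [List.getLast?_concat, Option.mem_def, Option.some.injEq] at hx
            simp only [List.head?_cons, Option.mem_def, Option.some.injEq] at hy
            subst hx; subst hy; exact hEvu
          have hfe : (univ.filter fun w => w ∉ D ∧ w ∉ (L ++ [v]) ++ [u])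
              = (univ.filter fun w => w ∉ D ∧ w ∉ L ++ [v]).erase u := by
            ext w
            simp only [Finset.mem_filter, Finset.mem_univ, true_and, Finset.mem_erase,
              List.mem_append, List.mem_singleton, not_or, ne_eq]
            tauto
          have hce := Finset.card_erase_add_one hu
          refine ih ((L ++ [v]) ++ [u]) D hnd' hch' ?_ ?_ hDm ?_
          · intro w hw
            rcases List.mem_append.mp hw with h | h
            · exact hdisj w h
            · simp only [List.mem_singleton] at h; subst h; exact huD
          · intro d hd w hwD hwP
            exact hDU d hd w hwD fun h => hwP (List.mem_append.mpr (Or.inl h))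
          · rw [hfe]
            simp only [List.length_append, List.length_singleton] at hmeas ⊢
            omega
        · -- pop v
          push_neg at hpush
          have hvP : v ∈ L ++ [v] := by simp
          have hvD : v ∉ D := hdisj v hvP
          have hvL : v ∉ L := by
            rw [List.nodup_append'] at hnd
            intro h
            exact hnd.2.2 h (List.mem_singleton_self v)
          -- no edges from insert v D to the unvisited set
          have hD'U : ∀ d ∈ insert v D, ∀ u, u ∉ insert v D → u ∉ L → ¬ E d u := by
            intro d hd u huD huL hE
            rw [Finset.mem_insert] at hd
            rw [Finset.mem_insert, not_or] at huD
            have huP : u ∉ L ++ [v] := by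
              rw [List.mem_append, List.mem_singleton]
              push_neg
              exact ⟨huL, huD.1⟩
            rcases hd with rfl | hd
            · exact hpush u (Finset.mem_filter.mpr ⟨Finset.mem_univ u, huD.2, huP⟩) hE
            · exact hDU d hd u huD.2 huP hE
          by_cases hDm' : D.card + 2 ≤ m
          · -- recurse with shorter path
            have hndL : L.Nodup := (List.nodup_append'.mp hnd).1
            have hchL : L.Chain' E := (List.isChain_append.mp hch).1
            have hdisjL : ∀ w ∈ L, w ∉ insert v D := by
              intro w hw
              rw [Finset.mem_insert, not_or]
              exact ⟨fun h => hvL (h ▸ hw),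
                hdisj w (List.mem_append.mpr (Or.inl hw))⟩
            have hcard' : (insert v D).card + 1 ≤ m := by
              rw [Finset.card_insert_of_notMem hvD]; omega
            have hUsame : (univ.filter fun w => w ∉ insert v D ∧ w ∉ L)
                = (univ.filter fun w => w ∉ D ∧ w ∉ L ++ [v]) := by
              ext w
              simp only [Finset.mem_filter, Finset.mem_univ, true_and,
                Finset.mem_insert, not_or, List.mem_append, List.mem_singleton]
              tauto
            refine ih L (insert v D) hndL hchL hdisjL hD'U hcard' ?_
            rw [hUsame]
            simp only [List.length_append, List.length_singleton] at hmeas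
            omega
          · -- |D| + 1 = m : contradiction with expansion
            exfalso
            obtain ⟨T, hTU, hTcard⟩ :=
              Finset.exists_subset_card_eq hU
            have hdisjT : Disjoint (insert v D) T := by
              rw [Finset.disjoint_right]
              intro u huT
              have hu := Finset.mem_filter.mp (hTU huT)
              rw [Finset.mem_insert, not_or]
              exact ⟨fun h => hu.2.2 (h ▸ hvP), hu.2.1⟩
            have hcardD' : (insert v D).card = m := by
              rw [Finset.card_insert_of_notMem hvD]; omega
            obtain ⟨s, hs, t, ht, hst⟩ := hexp (insert v D) T hdisjT hcardD' hTcard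
            have htU := Finset.mem_filter.mp (hTU ht)
            have htL : t ∉ L := fun h => htU.2.2 (List.mem_append.mpr (Or.inl h))
            have htD' : t ∉ insert v D := by
              rw [Finset.mem_insert, not_or]
              exact ⟨fun h => htU.2.2 (h ▸ hvP), htU.2.1⟩
            exact hD'U s hs t htD' htL hst


/-- Let `D` be an oriented graph (no loops, no pair of opposite directed edges) on a
finite vertex set, and let `m ≥ 1`.  Suppose that for any two disjoint vertex sets
`S`, `T` with `|S| = |T| = m` there is an edge directed from `S` to `T`.  Then `D`
contains a directed path (with pairwise distinct vertices) on at least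
`|V| − 2m + 2` vertices, i.e. of length at least `|V| − 2m + 1`. -/
theorem long_directed_path_of_pseudorandom {V : Type*} [Fintype V] [DecidableEq V]
    (E : V → V → Prop) (horient : ∀ u v, E u v → ¬ E v u) (m : ℕ) (hm : 1 ≤ m)
    (hexp : ∀ S T : Finset V, Disjoint S T → S.card = m → T.card = m →
      ∃ s ∈ S, ∃ t ∈ T, E s t) :
    ∃ P : List V, P.Nodup ∧ P.Chain' E ∧
      (Fintype.card V : ℤ) - 2 * m + 2 ≤ P.length := by
  classical
  refine key E m hexp (2 * Fintype.card V) [] ∅ (by simp) List.isChain_nil (by simp)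
    (by simp) (by simpa using hm) ?_
  have h : (univ.filter fun u => u ∉ (∅ : Finset V) ∧ u ∉ ([] : List V)) = univ := by
    simp
  rw [h]
  simp [Finset.card_univ]
end

section
/- For all reals K > 12, a₂ ≥ a₁ > 0, c₁ > 0 and c₂ > 0 there exist a constant C > 0 and n₀ such that for all n ≥ n₀ the following holds. Set p = (ln n)^K/n and s = ⌊n/((ln n)⁵·(ln ln n)³)⌋. Let H = (V_H, E_H) be a graph with a₁·n/(ln n)⁴ ≤ |V_H| ≤ a₂·n/(ln n)⁴, let M and F be edge-disjoint spanning subgraphs of H whose edge sets partition E_H, and let A₂ = {v ∈ V_H : deg_F(v) ≥ c₁·(ln n)^{K−4}}. Assume: (a) for any two disjoint subsets U, W ⊆ V_H with |U| = |W| = s one has |E_H(U,W)| ≥ c₂·n·(ln n)^{K−10}/(ln ln n)⁶; and (b) for every subset U ⊆ V_H, |E_H(U)| ≤ max{100·|U|·ln n, 100·|U|²·p}. Then there exists a spanning subgraph H₁ = (V_H, E₁) of H such that: (i) every v ∈ A₂ has at least (c₁/2)·(ln n)³ edges of F incident to it that belong to E₁; (ii) for any two disjoint subsets U, W ⊆ V_H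 with |U| = |W| = s, the number of edges of E₁ between U and W is at least (c₂/2)·n/((ln n)³·(ln ln n)⁶); (iii) for every subset U ⊆ V_H, the number of edges of E₁ with both endpoints in U is at most max{1000·|U|·ln n, 1000·|U|²·(ln n)⁷/n}; and (iv) |E₁| ≤ C·n/ln n. -/
open Finset Real

/-- The set `E_G(U)` of edges of `G` with both endpoints in `U`. -/
def SimpleGraph.edgesWithin {V : Type*} (G : SimpleGraph V) (U : Set V) : Set (Sym2 V) :=
  {e | e ∈ G.edgeSet ∧ ∀ v ∈ e, v ∈ U}

set_option maxHeartbeats 3200000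

namespace SparseAux

variable {α : Type*} [DecidableEq α]

/-- Bernoulli(q) product weight of choosing exactly the subset `S` of `E`. -/
noncomputable def pw (q : ℝ) (E S : Finset α) : ℝ :=
  q ^ S.card * (1 - q) ^ (E \ S).card

lemma pw_nonneg {q : ℝ} (hq0 : 0 ≤ q) (hq1 : q ≤ 1) (E S : Finset α) :
    0 ≤ pw q E S := by
  have h : (0:ℝ) ≤ 1 - q := by linarith
  unfold pw; positivity

lemma mgf (q : ℝ) (E T : Finset α) (hT : T ⊆ E) (z : ℝ) :
    ∑ S ∈ E.powerset, pw q E S * z ^ (S ∩ T).card = (1 - q + q * z) ^ T.card := by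
  have key := Finset.prod_add (fun e => if e ∈ T then q * z else q) (fun _ => (1 - q)) E
  have lhs : ∏ e ∈ E, ((if e ∈ T then q * z else q) + (1 - q)) = (1 - q + q * z) ^ T.card := by
    have h : ∀ e ∈ E, ((if e ∈ T then q * z else q) + (1 - q))
        = if e ∈ T then (1 - q + q * z) else 1 := by
      intro e _; by_cases h : e ∈ T <;> simp [h] <;> ring
    rw [Finset.prod_congr rfl h, Finset.prod_ite, Finset.prod_const, Finset.prod_const,
      one_pow, mul_one, Finset.filter_mem_eq_inter, Finset.inter_eq_right.mpr hT]
  have rhs : ∀ S ∈ E.powerset,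
      (∏ e ∈ S, (if e ∈ T then q * z else q)) * ∏ _e ∈ E \ S, (1 - q)
        = pw q E S * z ^ (S ∩ T).card := by
    intro S _
    rw [Finset.prod_ite, Finset.prod_const, Finset.prod_const, Finset.prod_const,
      Finset.filter_mem_eq_inter, pw]
    have hcard : (S ∩ T).card + (S.filter (fun e => ¬ e ∈ T)).card = S.card := by
      rw [← Finset.filter_mem_eq_inter]
      exact Finset.card_filter_add_card_filter_not _
    rw [mul_pow, ← hcard, pow_add]
    ring
  rw [Finset.sum_congr rfl rhs] at key
  rw [← key, lhs]

lemma sum_pw (q : ℝ) (E : Finset α) : ∑ S ∈ E.powerset, pw q E S = 1 := by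
  have h := mgf q E ∅ (Finset.empty_subset E) 1
  simpa using h

lemma tail_lower {q : ℝ} (hq0 : 0 ≤ q) (hq1 : q ≤ 1) (E T : Finset α) (hT : T ⊆ E)
    (a : ℝ) (ha : 0 ≤ a) :
    ∑ S ∈ E.powerset.filter (fun S => ((S ∩ T).card : ℝ) ≤ a), pw q E S
      ≤ Real.exp (a * Real.log 2 - q * T.card / 2) := by
  have hmgf := mgf q E T hT (1/2)
  have hhalf : (0:ℝ) < 1/2 := by norm_num
  have hpw := pw_nonneg (α := α) hq0 hq1 E
  have h1 : ∑ S ∈ E.powerset.filter (fun S => ((S ∩ T).card : ℝ) ≤ a), pw q E S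
      ≤ (2:ℝ) ^ (a:ℝ) * ∑ S ∈ E.powerset, pw q E S * (1/2:ℝ) ^ (S ∩ T).card := by
    rw [Finset.mul_sum]
    calc ∑ S ∈ E.powerset.filter (fun S => ((S ∩ T).card : ℝ) ≤ a), pw q E S
        ≤ ∑ S ∈ E.powerset.filter (fun S => ((S ∩ T).card : ℝ) ≤ a),
            (2:ℝ) ^ (a:ℝ) * (pw q E S * (1/2:ℝ) ^ (S ∩ T).card) := by
          refine Finset.sum_le_sum ?_
          intro S hS
          have hSa : ((S ∩ T).card : ℝ) ≤ a := (Finset.mem_filter.mp hS).2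
          have hmono : ((1/2:ℝ)) ^ (a:ℝ) ≤ ((1/2:ℝ)) ^ (((S ∩ T).card : ℕ) : ℝ) :=
            Real.rpow_le_rpow_of_exponent_ge hhalf (by norm_num) hSa
          have hone : (1:ℝ) ≤ (2:ℝ) ^ (a:ℝ) * (1/2:ℝ) ^ ((S ∩ T).card : ℕ) := by
            have hmul : ((2:ℝ) ^ (a:ℝ)) * ((1/2:ℝ) ^ (a:ℝ)) = 1 := by
              rw [← Real.mul_rpow (by norm_num) (by norm_num)]
              norm_num
            calc (1:ℝ) = (2:ℝ) ^ (a:ℝ) * ((1/2:ℝ) ^ (a:ℝ)) := hmul.symm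
              _ ≤ (2:ℝ) ^ (a:ℝ) * (1/2:ℝ) ^ ((S ∩ T).card : ℕ) := by
                  refine mul_le_mul_of_nonneg_left ?_ (Real.rpow_nonneg (by norm_num) _)
                  rw [← Real.rpow_natCast (1/2:ℝ)]
                  exact hmono
          calc pw q E S = pw q E S * 1 := (mul_one _).symm
            _ ≤ pw q E S * ((2:ℝ) ^ (a:ℝ) * (1/2:ℝ) ^ ((S ∩ T).card : ℕ)) :=
                mul_le_mul_of_nonneg_left hone (hpw S)
            _ = (2:ℝ) ^ (a:ℝ) * (pw q E S * (1/2:ℝ) ^ (S ∩ T).card) := by ring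
      _ ≤ ∑ S ∈ E.powerset, (2:ℝ) ^ (a:ℝ) * (pw q E S * (1/2:ℝ) ^ (S ∩ T).card) := by
          refine Finset.sum_le_sum_of_subset_of_nonneg (Finset.filter_subset _ _) ?_
          intro S hS _
          have := hpw S
          positivity
  rw [hmgf] at h1
  refine h1.trans ?_
  have h2 : (1 - q + q * (1/2) : ℝ) = 1 - q/2 := by ring
  rw [h2]
  have h3 : (1 - q/2 : ℝ) ^ T.card ≤ Real.exp (-(q/2)) ^ T.card := by
    refine pow_le_pow_left₀ (by linarith) ?_ _
    have := Real.add_one_le_exp (-(q/2))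
    linarith
  have h4 : (2:ℝ) ^ (a:ℝ) = Real.exp (a * Real.log 2) := by
    rw [Real.rpow_def_of_pos (by norm_num : (0:ℝ) < 2), mul_comm]
  calc (2:ℝ) ^ (a:ℝ) * (1 - q/2) ^ T.card
      ≤ (2:ℝ) ^ (a:ℝ) * Real.exp (-(q/2)) ^ T.card :=
        mul_le_mul_of_nonneg_left h3 (Real.rpow_nonneg (by norm_num) _)
    _ = Real.exp (a * Real.log 2 - q * T.card / 2) := by
        rw [h4, ← Real.exp_nat_mul, ← Real.exp_add]
        ring_nf

lemma tail_upper {q : ℝ} (hq0 : 0 ≤ q) (hq1 : q ≤ 1) (E T : Finset α) (hT : T ⊆ E)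
    (t : ℝ) (ht : 10 * (q * T.card) ≤ t) :
    ∑ S ∈ E.powerset.filter (fun S => t ≤ ((S ∩ T).card : ℝ)), pw q E S
      ≤ Real.exp (-(t/2)) := by
  have hmgf := mgf q E T hT (Real.exp 2)
  have hpw := pw_nonneg (α := α) hq0 hq1 E
  have hqm : (0:ℝ) ≤ q * T.card := by positivity
  have ht0 : 0 ≤ t := le_trans (by linarith) ht
  have hexp2 : (1:ℝ) ≤ Real.exp 2 := by
    have := Real.add_one_le_exp (2:ℝ); linarith
  have hexp2u : Real.exp 2 ≤ 9 := by
    have h1 : Real.exp 1 < 2.7182818286 := Real.exp_one_lt_d9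
    have h2 : Real.exp 2 = Real.exp 1 * Real.exp 1 := by
      rw [← Real.exp_add]; norm_num
    nlinarith [Real.exp_pos 1]
  have h1 : Real.exp (2 * t) * ∑ S ∈ E.powerset.filter (fun S => t ≤ ((S ∩ T).card : ℝ)), pw q E S
      ≤ ∑ S ∈ E.powerset, pw q E S * (Real.exp 2) ^ (S ∩ T).card := by
    rw [Finset.mul_sum]
    calc ∑ S ∈ E.powerset.filter (fun S => t ≤ ((S ∩ T).card : ℝ)), Real.exp (2*t) * pw q E S
        ≤ ∑ S ∈ E.powerset.filter (fun S => t ≤ ((S ∩ T).card : ℝ)),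
            pw q E S * (Real.exp 2) ^ (S ∩ T).card := by
          refine Finset.sum_le_sum ?_
          intro S hS
          have hSt : t ≤ ((S ∩ T).card : ℝ) := (Finset.mem_filter.mp hS).2
          have hmono : (Real.exp 2) ^ (t:ℝ) ≤ (Real.exp 2) ^ (((S ∩ T).card : ℕ) : ℝ) :=
            Real.rpow_le_rpow_of_exponent_le hexp2 hSt
          have heq : (Real.exp 2) ^ (t:ℝ) = Real.exp (2 * t) := by
            rw [Real.rpow_def_of_pos (Real.exp_pos 2), Real.log_exp, mul_comm]
          rw [Real.rpow_natCast] at hmono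
          rw [← heq]
          calc (Real.exp 2) ^ (t:ℝ) * pw q E S
              ≤ (Real.exp 2) ^ (((S ∩ T).card : ℕ)) * pw q E S :=
                mul_le_mul_of_nonneg_right hmono (hpw S)
            _ = pw q E S * (Real.exp 2) ^ (S ∩ T).card := by ring
      _ ≤ ∑ S ∈ E.powerset, pw q E S * (Real.exp 2) ^ (S ∩ T).card := by
          refine Finset.sum_le_sum_of_subset_of_nonneg (Finset.filter_subset _ _) ?_
          intro S hS _
          have := hpw S
          positivity
  rw [hmgf] at h1
  have h2 : (1 - q + q * Real.exp 2 : ℝ) ^ T.card ≤ Real.exp (q * (Real.exp 2 - 1)) ^ T.card := by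
    refine pow_le_pow_left₀ ?_ ?_ _
    · nlinarith
    · have := Real.add_one_le_exp (q * (Real.exp 2 - 1))
      nlinarith
  have h3 : Real.exp (q * (Real.exp 2 - 1)) ^ T.card
      = Real.exp (q * (Real.exp 2 - 1) * T.card) := by
    rw [← Real.exp_nat_mul]; ring_nf
  have h4 : q * (Real.exp 2 - 1) * T.card ≤ (3/2) * t := by nlinarith
  have h5 : (1 - q + q * Real.exp 2 : ℝ) ^ T.card ≤ Real.exp ((3/2) * t) := by
    refine (h2.trans ?_)
    rw [h3]
    exact Real.exp_le_exp.mpr h4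
  have hepos : (0:ℝ) < Real.exp (2 * t) := Real.exp_pos _
  have h7 : ∑ S ∈ E.powerset.filter (fun S => t ≤ ((S ∩ T).card : ℝ)), pw q E S
      ≤ Real.exp ((3/2) * t) / Real.exp (2 * t) := by
    rw [le_div_iff₀ hepos]
    have h6 := le_trans h1 h5
    linarith [h6]
  refine h7.trans ?_
  rw [← Real.exp_sub]
  refine Real.exp_le_exp.mpr ?_
  linarith

lemma sum_filter_or_le {β : Type*} (s : Finset β) (p p' : β → Prop)
    [DecidablePred p] [DecidablePred p'] (f : β → ℝ) (hf : ∀ x ∈ s, 0 ≤ f x) :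
    ∑ x ∈ s.filter (fun x => p x ∨ p' x), f x
      ≤ ∑ x ∈ s.filter p, f x + ∑ x ∈ s.filter p', f x := by
  rw [Finset.sum_filter, Finset.sum_filter, Finset.sum_filter, ← Finset.sum_add_distrib]
  refine Finset.sum_le_sum ?_
  intro i hi
  have := hf i hi
  by_cases hp : p i <;> by_cases hq : p' i <;> simp [hp, hq] <;> linarith

lemma sum_filter_exists_le {ι β : Type*} (D : Finset ι) (s : Finset β) (b : ι → β → Prop)
    [∀ v, DecidablePred (b v)] [DecidablePred (fun x => ∃ v ∈ D, b v x)]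
    (f : β → ℝ) (hf : ∀ x ∈ s, 0 ≤ f x) :
    ∑ x ∈ s.filter (fun x => ∃ v ∈ D, b v x), f x
      ≤ ∑ v ∈ D, ∑ x ∈ s.filter (b v), f x := by
  have step : ∀ x ∈ s, (if ∃ v ∈ D, b v x then f x else 0)
      ≤ ∑ v ∈ D, (if b v x then f x else 0) := by
    intro x hx
    by_cases h : ∃ v ∈ D, b v x
    · rw [if_pos h]
      obtain ⟨v, hv, hb⟩ := h
      have h1 := Finset.single_le_sum (f := fun v => if b v x then f x else 0)
        (fun i _ => by by_cases hb' : b i x <;> simp [hb', hf x hx]) hv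
      simpa [hb] using h1
    · simp only [if_neg h]
      refine Finset.sum_nonneg ?_
      intro i _
      by_cases hb' : b i x <;> simp [hb', hf x hx]
  calc ∑ x ∈ s.filter (fun x => ∃ v ∈ D, b v x), f x
      = ∑ x ∈ s, (if ∃ v ∈ D, b v x then f x else 0) := Finset.sum_filter _ _
    _ ≤ ∑ x ∈ s, ∑ v ∈ D, (if b v x then f x else 0) := Finset.sum_le_sum step
    _ = ∑ v ∈ D, ∑ x ∈ s, (if b v x then f x else 0) := Finset.sum_comm
    _ = ∑ v ∈ D, ∑ x ∈ s.filter (b v), f x := by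
        refine Finset.sum_congr rfl ?_
        intro v _
        exact (Finset.sum_filter _ _).symm

lemma exists_not_bad {q : ℝ} (hq0 : 0 < q) (hq1 : q < 1) (E : Finset α)
    (bad : Finset α → Prop) [DecidablePred bad]
    (h : ∑ S ∈ E.powerset.filter bad, pw q E S < 1) :
    ∃ S ∈ E.powerset, ¬ bad S := by
  by_contra hc
  push_neg at hc
  have heq : E.powerset.filter bad = E.powerset := Finset.filter_true_of_mem hc
  rw [heq, sum_pw] at h
  exact lt_irrefl 1 h

/-- `(log t)^k` is eventually at most `b*t`. -/
lemma log_pow_le (k : ℕ) (b : ℝ) (hb : 0 < b) :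
    ∀ᶠ t : ℝ in Filter.atTop, (Real.log t) ^ k ≤ b * t := by
  set c : ℝ := 2 * k + 2 with hc
  have hc0 : 0 < c := by positivity
  have hck : (0:ℝ) < c ^ k := by positivity
  filter_upwards [Filter.eventually_ge_atTop (1:ℝ),
    Filter.eventually_ge_atTop ((c ^ k / b) ^ (2:ℕ))] with t h1 h2
  have ht0 : (0:ℝ) < t := lt_of_lt_of_le one_pos h1
  have hrp : (0:ℝ) < t ^ (1/c : ℝ) := Real.rpow_pos_of_pos ht0 _
  have hlog : Real.log t ≤ c * t ^ (1/c : ℝ) := by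
    have h3 : Real.log (t ^ (1/c : ℝ)) = (1/c) * Real.log t := Real.log_rpow ht0 _
    have h4 : Real.log (t ^ (1/c:ℝ)) ≤ t ^ (1/c:ℝ) := by
      have := Real.log_le_sub_one_of_pos hrp
      linarith
    have h5 : Real.log t = c * Real.log (t ^ (1/c:ℝ)) := by
      rw [h3]; field_simp
    rw [h5]
    exact mul_le_mul_of_nonneg_left h4 hc0.le
  have hlt0 : 0 ≤ Real.log t := Real.log_nonneg h1
  have h5 : Real.log t ^ k ≤ (c * t ^ (1/c:ℝ)) ^ k := pow_le_pow_left₀ hlt0 hlog k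
  have h7 : (t ^ (1/c:ℝ)) ^ k = t ^ ((k:ℝ)/c) := by
    rw [← Real.rpow_natCast (t ^ (1/c:ℝ)) k, ← Real.rpow_mul ht0.le]
    ring_nf
  have h8 : t ^ ((k:ℝ)/c) ≤ t ^ (1/2 : ℝ) := by
    refine Real.rpow_le_rpow_of_exponent_le h1 ?_
    rw [div_le_div_iff₀ hc0 (by norm_num : (0:ℝ) < 2)]
    simp only [hc]; push_cast; ring_nf; nlinarith [Nat.cast_nonneg (α := ℝ) k]
  have hM : c^k / b ≤ t ^ (1/2:ℝ) := by
    have hM0 : (0:ℝ) ≤ c^k / b := by positivity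
    have := Real.rpow_le_rpow (by positivity) h2 (by norm_num : (0:ℝ) ≤ 1/2)
    calc c^k/b = ((c^k/b) ^ (2:ℕ)) ^ ((1:ℝ)/2) := by
          rw [← Real.rpow_natCast (c^k/b) 2, ← Real.rpow_mul hM0]
          norm_num
      _ ≤ t ^ (1/2:ℝ) := this
  have hsq : t ^ (1/2:ℝ) * t ^ (1/2:ℝ) = t := by
    rw [← Real.rpow_add ht0]; norm_num
  have hfin : c^k * t ^ (1/2:ℝ) ≤ b * t := by
    have hrp2 : (0:ℝ) ≤ t ^ (1/2:ℝ) := le_of_lt (Real.rpow_pos_of_pos ht0 _)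
    have h10 : c^k * t ^ (1/2:ℝ) ≤ b * (t^(1/2:ℝ) * t^(1/2:ℝ)) := by
      calc c^k * t ^ (1/2:ℝ) = (c^k/b) * b * t ^ (1/2:ℝ) := by field_simp
        _ ≤ t^(1/2:ℝ) * b * t^(1/2:ℝ) :=
            mul_le_mul_of_nonneg_right (mul_le_mul_of_nonneg_right hM hb.le) hrp2
        _ = b * (t^(1/2:ℝ) * t^(1/2:ℝ)) := by ring
    rwa [hsq] at h10
  calc Real.log t ^ k ≤ (c * t ^ (1/c:ℝ)) ^ k := h5
    _ = c^k * t ^ ((k:ℝ)/c) := by rw [mul_pow, h7]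
    _ ≤ c^k * t ^ (1/2:ℝ) := mul_le_mul_of_nonneg_left h8 hck.le
    _ ≤ b * t := hfin

end SparseAux
/-- Existence of a sparse subgraph `H₁` of `H` retaining degree and expansion
properties: Lemma 2.13 of the paper. -/
theorem exists_sparse_subgraph (K a₁ a₂ c₁ c₂ : ℝ)
    (hK : 12 < K) (ha₁ : 0 < a₁) (ha : a₁ ≤ a₂) (hc₁ : 0 < c₁) (hc₂ : 0 < c₂) :
    ∃ C : ℝ, 0 < C ∧ ∃ n₀ : ℕ, ∀ n : ℕ, n₀ ≤ n →
      ∀ (V : Type) [Fintype V] (H M F : SimpleGraph V),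
        -- `H` has between `a₁·n/(ln n)⁴` and `a₂·n/(ln n)⁴` vertices
        a₁ * n / (Real.log n) ^ 4 ≤ (Fintype.card V : ℝ) →
        (Fintype.card V : ℝ) ≤ a₂ * n / (Real.log n) ^ 4 →
        -- `M` and `F` are edge-disjoint spanning subgraphs partitioning `E_H`
        (∀ u v, ¬ (M.Adj u v ∧ F.Adj u v)) →
        (∀ u v, H.Adj u v ↔ (M.Adj u v ∨ F.Adj u v)) →
        -- (a) expansion between disjoint sets of size `s = ⌊n/((ln n)⁵(ln ln n)³)⌋`
        (∀ U W : Set V, Disjoint U W →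
          U.ncard = ⌊(n : ℝ) / ((Real.log n) ^ 5 * (Real.log (Real.log n)) ^ 3)⌋₊ →
          W.ncard = ⌊(n : ℝ) / ((Real.log n) ^ 5 * (Real.log (Real.log n)) ^ 3)⌋₊ →
          c₂ * n * (Real.log n) ^ (K - 10) / (Real.log (Real.log n)) ^ 6 ≤
            ((H.edgesBetween U W).ncard : ℝ)) →
        -- (b) upper bound on the number of edges inside any set, with `p = (ln n)^K/n`
        (∀ U : Set V, ((H.edgesWithin U).ncard : ℝ) ≤
          max (100 * U.ncard * Real.log n)
              (100 * (U.ncard : ℝ) ^ 2 * ((Real.log n) ^ K / n))) →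
        -- conclusion: a sparse spanning subgraph `H₁ ≤ H` with properties (i)–(iv)
        ∃ H₁ : SimpleGraph V, H₁ ≤ H ∧
          -- (i) every `v ∈ A₂` keeps many `F`-edges in `H₁`
          (∀ v : V, c₁ * (Real.log n) ^ (K - 4) ≤ ((F.neighborSet v).ncard : ℝ) →
            c₁ / 2 * (Real.log n) ^ 3 ≤
              (({u : V | F.Adj v u ∧ H₁.Adj v u}).ncard : ℝ)) ∧
          -- (ii) expansion in `H₁` between disjoint sets of size `s`
          (∀ U W : Set V, Disjoint U W →
            U.ncard = ⌊(n : ℝ) / ((Real.log n) ^ 5 * (Real.log (Real.log n)) ^ 3)⌋₊ →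
            W.ncard = ⌊(n : ℝ) / ((Real.log n) ^ 5 * (Real.log (Real.log n)) ^ 3)⌋₊ →
            c₂ / 2 * n / ((Real.log n) ^ 3 * (Real.log (Real.log n)) ^ 6) ≤
              ((H₁.edgesBetween U W).ncard : ℝ)) ∧
          -- (iii) upper bound on the number of `H₁`-edges inside any set
          (∀ U : Set V, ((H₁.edgesWithin U).ncard : ℝ) ≤
            max (1000 * U.ncard * Real.log n)
                (1000 * (U.ncard : ℝ) ^ 2 * (Real.log n) ^ 7 / n)) ∧
          -- (iv) `H₁` has at most `C·n/ln n` edges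
          ((H₁.edgeSet.ncard : ℝ) ≤ C * n / Real.log n) := by
  classical
  have ha₂ : 0 < a₂ := lt_of_lt_of_le ha₁ ha
  refine ⟨1000 * (a₂ + a₂ ^ 2) + 1, by positivity, ?_⟩
  have hlog4 : 0 < Real.log 4 := Real.log_pos (by norm_num)
  -- eventual numeric conditions
  have e1 : ∀ᶠ t : ℝ in Filter.atTop, a₂ ≤ Real.log t ^ 4 := by
    have h := Real.tendsto_log_atTop.eventually (Filter.eventually_ge_atTop (max 1 a₂))
    filter_upwards [h] with t ht
    have h1 : (1:ℝ) ≤ Real.log t := le_trans (le_max_left _ _) ht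
    have h2 : a₂ ≤ Real.log t := le_trans (le_max_right _ _) ht
    have h3 : (1:ℝ) ≤ Real.log t ^ 3 := one_le_pow₀ h1
    nlinarith
  have e2 : ∀ᶠ t : ℝ in Filter.atTop, 16 ≤ c₁ * Real.log t ^ 2 := by
    have h := Real.tendsto_log_atTop.eventually (Filter.eventually_ge_atTop (max 1 (16/c₁)))
    filter_upwards [h] with t ht
    have h1 : (1:ℝ) ≤ Real.log t := le_trans (le_max_left _ _) ht
    have h2 : 16/c₁ ≤ Real.log t := le_trans (le_max_right _ _) ht
    have h3 : 16 ≤ c₁ * Real.log t := by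
      rw [div_le_iff₀ hc₁] at h2; linarith [h2]
    nlinarith [h1, h3, mul_le_mul_of_nonneg_left h1 (le_trans (by norm_num) h3)]
  have e3 : ∀ᶠ t : ℝ in Filter.atTop,
      Real.log 4 * (a₂ * t / (Real.log t)^4) + Real.log 4
        ≤ c₂/8 * (t / ((Real.log t)^3 * (Real.log (Real.log t))^6)) := by
    have h6 := SparseAux.log_pow_le 6 (c₂ / (16 * Real.log 4 * a₂)) (by positivity)
    have h9 := SparseAux.log_pow_le 9 (c₂ / (16 * Real.log 4)) (by positivity)
    filter_upwards [Real.tendsto_log_atTop.eventually h6,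
      Real.tendsto_log_atTop.eventually (Filter.eventually_ge_atTop (Real.exp 1)),
      h9, Filter.eventually_ge_atTop (1:ℝ)] with t hLL6 hL1 h9t ht1
    set L := Real.log t with hLdef
    set LL := Real.log L with hLLdef
    have he1 : (1:ℝ) < Real.exp 1 := by
      have := Real.add_one_le_exp (1:ℝ); linarith
    have hL1' : 1 < L := lt_of_lt_of_le he1 hL1
    have hL0 : 0 < L := by linarith
    have hLL1 : 1 ≤ LL := by
      have := Real.log_le_log (Real.exp_pos 1) hL1
      rwa [Real.log_exp] at this
    have hLL0 : 0 < LL := by linarith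
    have hLLle : LL ≤ L := by
      have := Real.log_le_sub_one_of_pos hL0
      linarith
    have ht0 : (0:ℝ) ≤ t := by linarith
    have pa : Real.log 4 * (a₂ * t / L^4) ≤ c₂/16 * (t / (L^3*LL^6)) := by
      have h1 : Real.log 4 * (a₂ * t / L^4) = t * (Real.log 4 * a₂ / L^4) := by ring
      have h2 : c₂/16 * (t/(L^3*LL^6)) = t * (c₂/(16*(L^3*LL^6))) := by ring
      rw [h1, h2]
      refine mul_le_mul_of_nonneg_left ?_ ht0
      rw [div_le_div_iff₀ (by positivity) (by positivity)]
      -- log4 * a₂ * (16*(L³LL⁶)) ≤ c₂ * L⁴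
      have key : LL^6 * (16 * Real.log 4 * a₂) ≤ c₂ * L := by
        have h3 := hLL6
        rw [div_mul_eq_mul_div, le_div_iff₀ (by positivity : (0:ℝ) < 16 * Real.log 4 * a₂)] at h3
        · linarith [h3]
      have hL3 : (0:ℝ) ≤ L^3 := by positivity
      nlinarith [mul_le_mul_of_nonneg_left key hL3]
    have pb : Real.log 4 ≤ c₂/16 * (t/(L^3*LL^6)) := by
      have h1 : L^3 * LL^6 ≤ L^9 := by
        have h2 : LL^6 ≤ L^6 := pow_le_pow_left₀ hLL0.le hLLle 6
        calc L^3*LL^6 ≤ L^3*L^6 := mul_le_mul_of_nonneg_left h2 (by positivity)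
          _ = L^9 := by ring
      have hd : (0:ℝ) < L^3*LL^6 := by positivity
      rw [show c₂/16 * (t/(L^3*LL^6)) = (c₂/16*t)/(L^3*LL^6) by ring, le_div_iff₀ hd]
      calc Real.log 4 * (L^3*LL^6) ≤ Real.log 4 * L^9 :=
            mul_le_mul_of_nonneg_left h1 hlog4.le
        _ ≤ Real.log 4 * (c₂/(16*Real.log 4) * t) := mul_le_mul_of_nonneg_left h9t hlog4.le
        _ = c₂/16*t := by field_simp
    have hfin : c₂/16 * (t / (L^3*LL^6)) + c₂/16 * (t / (L^3*LL^6))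
        = c₂/8 * (t / (L^3*LL^6)) := by ring
    linarith
  have eAll := (tendsto_natCast_atTop_atTop (R := ℝ)).eventually (e1.and (e2.and e3))
  obtain ⟨n₀', hn₀'⟩ := Filter.eventually_atTop.mp eAll
  refine ⟨max n₀' 16, ?_⟩
  intro n hn V _ H M F hV1 hV2 hMF hPart hExp hUpper
  obtain ⟨hA, hB, hC⟩ := hn₀' n (le_trans (le_max_left _ _) hn)
  have h16 : 16 ≤ n := le_trans (le_max_right _ _) hn
  -- basic numeric facts
  have hn16 : (16:ℝ) ≤ (n:ℝ) := by exact_mod_cast h16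
  have hn0 : (0:ℝ) < (n:ℝ) := by linarith
  set L := Real.log (n:ℝ) with hLdef
  set LL := Real.log L with hLLdef
  have hL2 : 2 ≤ L := by
    have h1 : Real.log 16 ≤ L := Real.log_le_log (by norm_num) hn16
    have h2 : Real.log 16 = 4 * Real.log 2 := by
      rw [show (16:ℝ) = 2^4 by norm_num, Real.log_pow]; push_cast; ring
    have h3 := Real.log_two_gt_d9
    linarith
  have hL0 : (0:ℝ) < L := by linarith
  have hL1 : (1:ℝ) < L := by linarith
  have hLL0 : (0:ℝ) < LL := Real.log_pos hL1
  set q : ℝ := L ^ (7 - K) with hqdef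
  have hq0 : 0 < q := Real.rpow_pos_of_pos hL0 _
  have hq1 : q < 1 := Real.rpow_lt_one_of_one_lt_of_neg hL1 (by linarith)
  set N := Fintype.card V with hNdef
  have hNn : (N:ℝ) ≤ (n:ℝ) := by
    refine le_trans hV2 ?_
    rw [div_le_iff₀ (by positivity)]
    nlinarith [hA, hn0.le]
  set sN := ⌊(n : ℝ) / (L ^ 5 * LL ^ 3)⌋₊ with hsNdef
  set E := H.edgeFinset with hEdef
  have hFH : ∀ {u v : V}, F.Adj u v → H.Adj u v := fun h => (hPart _ _).mpr (Or.inr h)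
  -- rpow algebra
  have hr3 : q * L ^ (K - 4) = L ^ (3:ℕ) := by
    rw [hqdef, ← Real.rpow_add hL0]
    rw [show (7 - K) + (K - 4) = ((3:ℕ):ℝ) by push_cast; ring, Real.rpow_natCast]
  have hr7 : q * L ^ K = L ^ (7:ℕ) := by
    rw [hqdef, ← Real.rpow_add hL0]
    rw [show (7 - K) + K = ((7:ℕ):ℝ) by push_cast; ring, Real.rpow_natCast]
  have hr8 : q * L = L ^ (8 - K) := by
    calc q * L = L ^ (7-K) * L ^ (1:ℝ) := by rw [hqdef, Real.rpow_one]
      _ = L ^ ((7-K)+1) := (Real.rpow_add hL0 _ _).symm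
      _ = L ^ (8-K) := by congr 1; ring
  have hrm3 : q * L ^ (K - 10) = (L ^ (3:ℕ))⁻¹ := by
    rw [hqdef, ← Real.rpow_add hL0]
    rw [show (7 - K) + (K - 10) = -((3:ℕ):ℝ) by push_cast; ring, Real.rpow_neg hL0.le,
      Real.rpow_natCast]
  have hL8K : L ^ (8 - K) ≤ 1 :=
    Real.rpow_le_one_of_one_le_of_nonpos hL1.le (by linarith)
  -- target edge families
  set T1 : V → Finset (Sym2 V) :=
    fun v => (Finset.univ.filter (fun u => F.Adj v u)).image (fun u => s(v,u)) with hT1def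
  have hT1sub : ∀ v, T1 v ⊆ E := by
    intro v e he
    simp only [hT1def, Finset.mem_image, Finset.mem_filter, Finset.mem_univ, true_and] at he
    obtain ⟨u, hadj, rfl⟩ := he
    rw [hEdef, SimpleGraph.mem_edgeFinset, SimpleGraph.mem_edgeSet]
    exact hFH hadj
  have hT1card : ∀ v, (T1 v).card = (F.neighborSet v).ncard := by
    intro v
    rw [hT1def]
    simp only []
    rw [Finset.card_image_of_injOn (fun u _ u' _ h => Sym2.congr_right.mp h)]
    rw [Set.ncard_eq_toFinset_card']
    congr 1
    ext u
    simp [SimpleGraph.mem_neighborSet]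
  set T2 : Finset V × Finset V → Finset (Sym2 V) :=
    fun UW => E.filter (fun e => ∃ u ∈ UW.1, ∃ w ∈ UW.2, e = s(u,w)) with hT2def
  have hT2eq : ∀ UW : Finset V × Finset V,
      (H.edgesBetween ↑UW.1 ↑UW.2).ncard = (T2 UW).card := by
    intro UW
    rw [← Set.ncard_coe_finset (T2 UW)]
    congr 1
    ext e
    simp only [SimpleGraph.edgesBetween, Set.mem_setOf_eq, hT2def, Finset.coe_filter,
      Finset.mem_coe, Finset.mem_filter, hEdef, SimpleGraph.mem_edgeFinset]
    try tauto
  set T3 : Finset V → Finset (Sym2 V) :=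
    fun U => E.filter (fun e => ∀ v ∈ e, v ∈ U) with hT3def
  have hT3eq : ∀ U : Finset V, (H.edgesWithin ↑U).ncard = (T3 U).card := by
    intro U
    rw [← Set.ncard_coe_finset (T3 U)]
    congr 1
    ext e
    simp only [SimpleGraph.edgesWithin, Set.mem_setOf_eq, hT3def, Finset.coe_filter,
      Finset.mem_coe, Finset.mem_filter, hEdef, SimpleGraph.mem_edgeFinset]
    try tauto
  -- nonnegativity of weights
  have hpwnn : ∀ S ∈ E.powerset, 0 ≤ SparseAux.pw q E S :=
    fun S _ => SparseAux.pw_nonneg hq0.le hq1.le E S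
  have hlog2 := Real.log_two_lt_d9
  have hlog2' := Real.log_two_gt_d9
  -- Tail bound for property (i)
  have P1 : ∀ v : V,
      ∑ S ∈ E.powerset.filter (fun S =>
        (c₁ * L ^ (K - 4) ≤ ((F.neighborSet v).ncard : ℝ)) ∧
          (((S ∩ T1 v).card : ℝ) < c₁ / 2 * L ^ 3)), SparseAux.pw q E S
        ≤ Real.exp (-(2 * L)) := by
    intro v
    by_cases hdeg : c₁ * L ^ (K - 4) ≤ ((F.neighborSet v).ncard : ℝ)
    · have hsub : E.powerset.filter (fun S =>
          (c₁ * L ^ (K - 4) ≤ ((F.neighborSet v).ncard : ℝ)) ∧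
            (((S ∩ T1 v).card : ℝ) < c₁ / 2 * L ^ 3))
          ⊆ E.powerset.filter (fun S => ((S ∩ T1 v).card : ℝ) ≤ c₁ / 2 * L ^ 3) :=
        Finset.monotone_filter_right _ (fun S _ h => le_of_lt h.2)
      refine le_trans (Finset.sum_le_sum_of_subset_of_nonneg hsub
        (fun S hS _ => hpwnn S (Finset.mem_filter.mp hS).1)) ?_
      refine le_trans (SparseAux.tail_lower hq0.le hq1.le E (T1 v) (hT1sub v) _
        (by positivity)) ?_
      rw [Real.exp_le_exp]
      have hcard : c₁ * L ^ (K-4) ≤ ((T1 v).card : ℝ) := by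
        rw [hT1card v]; exact hdeg
      have hqT : c₁ * L ^ (3:ℕ) ≤ q * ((T1 v).card:ℝ) := by
        calc c₁ * L ^ (3:ℕ) = q * (c₁ * L ^ (K-4)) := by
              rw [show q * (c₁ * L^(K-4)) = c₁ * (q * L^(K-4)) by ring, hr3]
          _ ≤ q * ((T1 v).card:ℝ) := mul_le_mul_of_nonneg_left hcard hq0.le
      have hX : 16 * L ≤ c₁ * L^3 := by nlinarith [mul_le_mul_of_nonneg_right hB hL0.le]
      have hprod : 0 ≤ (c₁ * L^3 - 16*L) * (1 - Real.log 2) :=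
        mul_nonneg (by linarith) (by linarith)
      nlinarith [hqT, mul_le_mul_of_nonneg_right hlog2.le hL0.le, hprod, hL0]
    · rw [Finset.filter_false_of_mem (fun S _ h => hdeg h.1)]
      simp [Real.exp_nonneg]
  -- Tail bound for property (ii)
  have P2 : ∀ UW : Finset V × Finset V,
      ∑ S ∈ E.powerset.filter (fun S =>
        Disjoint UW.1 UW.2 ∧ UW.1.card = sN ∧ UW.2.card = sN ∧
          (((S ∩ T2 UW).card : ℝ) < c₂ / 2 * (n:ℝ) / (L ^ 3 * LL ^ 6))), SparseAux.pw q E S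
        ≤ Real.exp (-(c₂ / 2 * (n:ℝ) / (L ^ 3 * LL ^ 6) / 4)) := by
    intro UW
    by_cases hcond : Disjoint UW.1 UW.2 ∧ UW.1.card = sN ∧ UW.2.card = sN
    · have hTlow : c₂ * (n:ℝ) * L ^ (K-10) / LL ^ 6 ≤ ((T2 UW).card : ℝ) := by
        have h := hExp ↑UW.1 ↑UW.2 (Finset.disjoint_coe.mpr hcond.1)
          (by rw [Set.ncard_coe_finset]; exact hcond.2.1)
          (by rw [Set.ncard_coe_finset]; exact hcond.2.2)
        rwa [hT2eq UW] at h
      have hsub : E.powerset.filter (fun S =>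
          Disjoint UW.1 UW.2 ∧ UW.1.card = sN ∧ UW.2.card = sN ∧
            (((S ∩ T2 UW).card : ℝ) < c₂ / 2 * (n:ℝ) / (L ^ 3 * LL ^ 6)))
          ⊆ E.powerset.filter (fun S =>
            ((S ∩ T2 UW).card : ℝ) ≤ c₂ / 2 * (n:ℝ) / (L ^ 3 * LL ^ 6)) :=
        Finset.monotone_filter_right _ (fun S _ h => le_of_lt h.2.2.2)
      refine le_trans (Finset.sum_le_sum_of_subset_of_nonneg hsub
        (fun S hS _ => hpwnn S (Finset.mem_filter.mp hS).1)) ?_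
      refine le_trans (SparseAux.tail_lower hq0.le hq1.le E (T2 UW)
        (Finset.filter_subset _ _) _ (by positivity)) ?_
      rw [Real.exp_le_exp]
      have hqT2 : 2 * (c₂ / 2 * (n:ℝ) / (L ^ 3 * LL ^ 6)) ≤ q * ((T2 UW).card:ℝ) := by
        have heq : q * (c₂ * (n:ℝ) * L ^ (K-10) / LL ^ 6)
            = 2 * (c₂ / 2 * (n:ℝ) / (L ^ 3 * LL ^ 6)) := by
          rw [show q * (c₂ * (n:ℝ) * L^(K-10) / LL^6)
              = c₂ * (n:ℝ) * (q * L^(K-10)) / LL^6 by ring, hrm3]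
          field_simp
        rw [← heq]
        exact mul_le_mul_of_nonneg_left hTlow hq0.le
      have hθnn : (0:ℝ) ≤ c₂ / 2 * (n:ℝ) / (L ^ 3 * LL ^ 6) := by positivity
      nlinarith [hqT2, hθnn, mul_le_mul_of_nonneg_left hlog2.le hθnn]
    · rw [Finset.filter_false_of_mem (fun S _ h => hcond ⟨h.1, h.2.1, h.2.2.1⟩)]
      simp [Real.exp_nonneg]
  -- Tail bound for property (iii)
  have P3 : ∀ U : Finset V,
      ∑ S ∈ E.powerset.filter (fun S =>
        max (1000 * (U.card:ℝ) * L) (1000 * (U.card:ℝ) ^ 2 * L ^ 7 / (n:ℝ))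
          < ((S ∩ T3 U).card : ℝ)), SparseAux.pw q E S
        ≤ Real.exp (-(500 * (U.card:ℝ) * L)) := by
    intro U
    set tU : ℝ := max (1000 * (U.card:ℝ) * L) (1000 * (U.card:ℝ) ^ 2 * L ^ 7 / (n:ℝ))
      with htUdef
    have hTup : ((T3 U).card:ℝ)
        ≤ max (100 * (U.card:ℝ) * L) (100 * (U.card:ℝ)^2 * (L^K / (n:ℝ))) := by
      have h := hUpper ↑U
      rwa [hT3eq U, Set.ncard_coe_finset] at h
    have hu0 : (0:ℝ) ≤ (U.card:ℝ) := Nat.cast_nonneg _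
    have h10 : 10 * (q * ((T3 U).card:ℝ)) ≤ tU := by
      have hmax : q * ((T3 U).card:ℝ)
          ≤ max (q * (100 * (U.card:ℝ) * L)) (q * (100 * (U.card:ℝ)^2 * (L^K / (n:ℝ)))) := by
        rcases max_cases (100 * (U.card:ℝ) * L) (100 * (U.card:ℝ)^2 * (L^K / (n:ℝ))) with
          ⟨hm, _⟩ | ⟨hm, _⟩
        · rw [hm] at hTup
          exact le_max_of_le_left (mul_le_mul_of_nonneg_left hTup hq0.le)
        · rw [hm] at hTup
          exact le_max_of_le_right (mul_le_mul_of_nonneg_left hTup hq0.le)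
      have hb1 : 10 * (q * (100 * (U.card:ℝ) * L)) ≤ tU := by
        rw [show q * (100 * (U.card:ℝ) * L) = 100 * (U.card:ℝ) * (q * L) by ring, hr8]
        refine le_trans ?_ (le_max_left _ _)
        have h2 : 100 * (U.card:ℝ) * L ^ (8-K) ≤ 100 * (U.card:ℝ) :=
          mul_le_of_le_one_right (by positivity) hL8K
        nlinarith [h2, mul_le_mul_of_nonneg_left hL2 hu0]
      have hb2 : 10 * (q * (100 * (U.card:ℝ)^2 * (L^K / (n:ℝ)))) ≤ tU := by
        rw [show q * (100 * (U.card:ℝ)^2 * (L^K / (n:ℝ)))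
            = 100 * (U.card:ℝ)^2 * (q * L^K) / (n:ℝ) by ring, hr7]
        exact le_trans (le_of_eq (by ring)) (le_max_right _ _)
      calc 10 * (q * ((T3 U).card:ℝ))
          ≤ 10 * max (q * (100 * (U.card:ℝ) * L))
              (q * (100 * (U.card:ℝ)^2 * (L^K / (n:ℝ)))) :=
            mul_le_mul_of_nonneg_left hmax (by norm_num)
        _ ≤ tU := by
            rcases max_cases (q * (100 * (U.card:ℝ) * L))
              (q * (100 * (U.card:ℝ)^2 * (L^K / (n:ℝ)))) with ⟨hm, _⟩ | ⟨hm, _⟩ <;>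
              rw [hm]
            · exact hb1
            · exact hb2
    have hsub : E.powerset.filter (fun S => tU < ((S ∩ T3 U).card : ℝ))
        ⊆ E.powerset.filter (fun S => tU ≤ ((S ∩ T3 U).card : ℝ)) :=
      Finset.monotone_filter_right _ (fun S _ h => le_of_lt h)
    refine le_trans (Finset.sum_le_sum_of_subset_of_nonneg hsub
      (fun S hS _ => hpwnn S (Finset.mem_filter.mp hS).1)) ?_
    refine le_trans (SparseAux.tail_upper hq0.le hq1.le E (T3 U)
      (Finset.filter_subset _ _) tU h10) ?_
    rw [Real.exp_le_exp]
    have htU1 : 1000 * (U.card:ℝ) * L ≤ tU := le_max_left _ _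
    linarith
  have hsmall : (N:ℝ) * Real.exp (-(2*L)) ≤ 1/16 := by
    have hexp : Real.exp (-(2*L)) = ((n:ℝ)^2)⁻¹ := by
      rw [Real.exp_neg]
      congr 1
      rw [show (2:ℝ)*L = L + L by ring, Real.exp_add, hLdef, Real.exp_log hn0]
      ring
    rw [hexp, ← div_eq_mul_inv, div_le_div_iff₀ (by positivity) (by norm_num)]
    nlinarith [hNn, hn16, Nat.cast_nonneg (α := ℝ) N]
  have hb1sum : ∑ S ∈ E.powerset.filter (fun S => ∃ v ∈ (Finset.univ : Finset V),
      (c₁ * L ^ (K - 4) ≤ ((F.neighborSet v).ncard : ℝ)) ∧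
        (((S ∩ T1 v).card : ℝ) < c₁ / 2 * L ^ 3)), SparseAux.pw q E S ≤ 1/16 := by
    refine le_trans (SparseAux.sum_filter_exists_le Finset.univ E.powerset _
      (SparseAux.pw q E) hpwnn) ?_
    refine le_trans (Finset.sum_le_sum (fun v _ => P1 v)) ?_
    rw [Finset.sum_const, Finset.card_univ, nsmul_eq_mul]
    exact hsmall
  have hb2sum : ∑ S ∈ E.powerset.filter (fun S =>
      ∃ UW ∈ (Finset.univ : Finset V).powerset ×ˢ (Finset.univ : Finset V).powerset,
        Disjoint UW.1 UW.2 ∧ UW.1.card = sN ∧ UW.2.card = sN ∧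
          (((S ∩ T2 UW).card : ℝ) < c₂ / 2 * (n:ℝ) / (L ^ 3 * LL ^ 6))),
      SparseAux.pw q E S ≤ 1/4 := by
    refine le_trans (SparseAux.sum_filter_exists_le _ E.powerset _ (SparseAux.pw q E) hpwnn) ?_
    refine le_trans (Finset.sum_le_sum (fun UW _ => P2 UW)) ?_
    rw [Finset.sum_const, nsmul_eq_mul, Finset.card_product, Finset.card_powerset,
      Finset.card_univ, ← hNdef]
    push_cast
    have h2 : (2:ℝ)^N * 2^N = Real.exp ((N:ℝ) * Real.log 4) := by
      rw [Real.exp_nat_mul, Real.exp_log (by norm_num : (0:ℝ) < 4), ← mul_pow]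
      norm_num
    rw [h2, ← Real.exp_add]
    have hele : (N:ℝ) * Real.log 4 + -(c₂ / 2 * (n:ℝ) / (L ^ 3 * LL ^ 6) / 4)
        ≤ -Real.log 4 := by
      have hNb := hV2
      have heq : c₂ / 2 * (n:ℝ) / (L ^ 3 * LL ^ 6) / 4
          = c₂/8*((n:ℝ)/(L^3*LL^6)) := by ring
      linarith [mul_le_mul_of_nonneg_right hNb hlog4.le, hC, heq]
    refine le_trans (Real.exp_le_exp.mpr hele) ?_
    rw [Real.exp_neg, Real.exp_log (by norm_num : (0:ℝ) < 4)]
    norm_num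
  have hb3sum : ∑ S ∈ E.powerset.filter (fun S =>
      ∃ U ∈ ((Finset.univ : Finset V).powerset.filter Finset.Nonempty),
        max (1000 * (U.card:ℝ) * L) (1000 * (U.card:ℝ) ^ 2 * L ^ 7 / (n:ℝ))
          < ((S ∩ T3 U).card : ℝ)), SparseAux.pw q E S ≤ 1/4 := by
    refine le_trans (SparseAux.sum_filter_exists_le _ E.powerset _ (SparseAux.pw q E) hpwnn) ?_
    refine le_trans (Finset.sum_le_sum (fun U _ => P3 U)) ?_
    set x : ℝ := Real.exp (-(500 * L)) with hxdef
    have hx0 : 0 < x := Real.exp_pos _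
    have hxe : ∀ U : Finset V, Real.exp (-(500 * (U.card:ℝ) * L)) = x ^ U.card := by
      intro U
      rw [hxdef, ← Real.exp_nat_mul]
      congr 1
      ring
    have hstep : ∑ U ∈ (Finset.univ : Finset V).powerset.filter Finset.Nonempty,
        Real.exp (-(500 * (U.card:ℝ) * L)) = (x+1)^N - 1 := by
      have htot : ∑ U ∈ (Finset.univ : Finset V).powerset, x ^ U.card = (x+1)^N := by
        have hpa := Finset.prod_add (fun _ : V => x) (fun _ => (1:ℝ)) Finset.univ
        simp only [Finset.prod_const, one_pow, mul_one] at hpa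
        rw [Finset.card_univ] at hpa
        exact hpa.symm
      have hD3 : (Finset.univ : Finset V).powerset.filter Finset.Nonempty
          = (Finset.univ : Finset V).powerset.erase ∅ := by
        ext U
        simp [Finset.nonempty_iff_ne_empty, and_comm]
      rw [Finset.sum_congr rfl (fun U _ => hxe U), hD3]
      have h := Finset.add_sum_erase (Finset.univ : Finset V).powerset
        (fun U => x ^ U.card) (Finset.empty_mem_powerset _)
      simp only [Finset.card_empty, pow_zero] at h
      rw [htot] at h
      linarith
    rw [hstep]
    have hxN : x * N ≤ 1/16 := by
      have h1 : x ≤ Real.exp (-(2*L)) := by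
        rw [hxdef, Real.exp_le_exp]
        nlinarith [hL0]
      calc x * N ≤ Real.exp (-(2*L)) * N := mul_le_mul_of_nonneg_right h1 (Nat.cast_nonneg _)
        _ = (N:ℝ) * Real.exp (-(2*L)) := by ring
        _ ≤ 1/16 := hsmall
    have h2 : (x+1)^N ≤ Real.exp (x * N) := by
      have h3 : x + 1 ≤ Real.exp x := Real.add_one_le_exp x
      calc (x+1)^N ≤ (Real.exp x)^N := pow_le_pow_left₀ (by positivity) h3 N
        _ = Real.exp ((N:ℝ) * x) := (Real.exp_nat_mul x N).symm
        _ = Real.exp (x * N) := by rw [mul_comm]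
    have hpos : (0:ℝ) < 1 - x * N := by linarith
    have h4 : Real.exp (x*N) ≤ (1 - x*N)⁻¹ := by
      have h5 : 1 - x*N ≤ Real.exp (-(x*N)) := by
        have := Real.add_one_le_exp (-(x*N)); linarith
      have h6 : (Real.exp (-(x*N)))⁻¹ ≤ (1 - x*N)⁻¹ := inv_anti₀ hpos h5
      rwa [← Real.exp_neg, neg_neg] at h6
    have hinv := mul_inv_cancel₀ (ne_of_gt hpos)
    have hxNnn : 0 ≤ x * N := by positivity
    nlinarith [h2, h4, hinv, inv_pos.mpr hpos,
      mul_nonneg (inv_pos.mpr hpos).le (by linarith : (0:ℝ) ≤ 1/16 - x * N)]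
  have hbadsum : ∑ S ∈ E.powerset.filter (fun S =>
      (∃ v ∈ (Finset.univ : Finset V),
        (c₁ * L ^ (K - 4) ≤ ((F.neighborSet v).ncard : ℝ)) ∧
          (((S ∩ T1 v).card : ℝ) < c₁ / 2 * L ^ 3)) ∨
      ((∃ UW ∈ (Finset.univ : Finset V).powerset ×ˢ (Finset.univ : Finset V).powerset,
        Disjoint UW.1 UW.2 ∧ UW.1.card = sN ∧ UW.2.card = sN ∧
          (((S ∩ T2 UW).card : ℝ) < c₂ / 2 * (n:ℝ) / (L ^ 3 * LL ^ 6))) ∨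
      (∃ U ∈ ((Finset.univ : Finset V).powerset.filter Finset.Nonempty),
        max (1000 * (U.card:ℝ) * L) (1000 * (U.card:ℝ) ^ 2 * L ^ 7 / (n:ℝ))
          < ((S ∩ T3 U).card : ℝ)))), SparseAux.pw q E S < 1 := by
    refine lt_of_le_of_lt (SparseAux.sum_filter_or_le E.powerset _ _ _ hpwnn) ?_
    refine lt_of_le_of_lt (add_le_add hb1sum
      (le_trans (SparseAux.sum_filter_or_le E.powerset _ _ _ hpwnn)
        (add_le_add hb2sum hb3sum))) ?_
    norm_num
  obtain ⟨S, hSpow, hgood⟩ := SparseAux.exists_not_bad hq0 hq1 E _ hbadsum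
  have hSE : S ⊆ E := Finset.mem_powerset.mp hSpow
  have hg1 : ∀ v : V, ¬ ((c₁ * L ^ (K - 4) ≤ ((F.neighborSet v).ncard : ℝ)) ∧
      (((S ∩ T1 v).card : ℝ) < c₁ / 2 * L ^ 3)) :=
    fun v h => hgood (Or.inl ⟨v, Finset.mem_univ v, h⟩)
  have hg2 : ∀ UW : Finset V × Finset V, ¬ (Disjoint UW.1 UW.2 ∧ UW.1.card = sN ∧
      UW.2.card = sN ∧ (((S ∩ T2 UW).card : ℝ) < c₂ / 2 * (n:ℝ) / (L ^ 3 * LL ^ 6))) :=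
    fun UW h => hgood (Or.inr (Or.inl ⟨UW, by
      simp [Finset.mem_product], h⟩))
  have hg3 : ∀ U : Finset V, U.Nonempty →
      ¬ (max (1000 * (U.card:ℝ) * L) (1000 * (U.card:ℝ) ^ 2 * L ^ 7 / (n:ℝ))
        < ((S ∩ T3 U).card : ℝ)) :=
    fun U hU h => hgood (Or.inr (Or.inr ⟨U, Finset.mem_filter.mpr
      ⟨Finset.mem_powerset.mpr (Finset.subset_univ U), hU⟩, h⟩))
  -- the random subgraph
  set H₁ := SimpleGraph.fromEdgeSet (↑S : Set (Sym2 V)) with hH₁def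
  have hH₁E : H₁.edgeSet = ↑S := by
    rw [hH₁def, SimpleGraph.edgeSet_fromEdgeSet]
    ext e
    simp only [Set.mem_diff, Finset.mem_coe, Set.mem_setOf_eq]
    refine ⟨fun h => h.1, fun h => ⟨h, ?_⟩⟩
    have hE : e ∈ H.edgeFinset := by
      have := hSE h; rwa [hEdef] at this
    exact SimpleGraph.not_isDiag_of_mem_edgeSet H (SimpleGraph.mem_edgeFinset.mp hE)
  have hH₁H : H₁ ≤ H := by
    intro u v huv
    rw [hH₁def, SimpleGraph.fromEdgeSet_adj] at huv
    have hE : s(u,v) ∈ H.edgeFinset := by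
      have := hSE (Finset.mem_coe.mp huv.1); rwa [hEdef] at this
    exact H.mem_edgeSet.mp (SimpleGraph.mem_edgeFinset.mp hE)
  have hSsubE : ∀ {e : Sym2 V}, e ∈ S → e ∈ H.edgeSet := by
    intro e he
    have := hSE he; rw [hEdef] at this
    exact SimpleGraph.mem_edgeFinset.mp this
  -- identification of edges within a set
  have hwithin : ∀ (U : Set V) (U' : Finset V), ↑U' = U →
      (H₁.edgesWithin U).ncard = (S ∩ T3 U').card := by
    intro U U' hU'
    subst hU'
    rw [← Set.ncard_coe_finset (S ∩ T3 U')]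
    congr 1
    ext e
    simp only [SimpleGraph.edgesWithin, Set.mem_setOf_eq, hH₁E, Finset.mem_coe,
      Finset.mem_inter, hT3def, Finset.mem_filter, hEdef, SimpleGraph.mem_edgeFinset]
    constructor
    · rintro ⟨heS, hall⟩
      exact ⟨heS, hSsubE heS, fun v hv => hall v hv⟩
    · rintro ⟨heS, _, hall⟩
      exact ⟨heS, fun v hv => hall v hv⟩
  -- property (iii)
  have hiii : ∀ U : Set V, ((H₁.edgesWithin U).ncard : ℝ) ≤
      max (1000 * U.ncard * L) (1000 * (U.ncard : ℝ) ^ 2 * L ^ 7 / n) := by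
    intro U
    have hUfin : U.Finite := Set.toFinite U
    have hcoe : ↑hUfin.toFinset = U := Set.Finite.coe_toFinset hUfin
    have hncard : U.ncard = hUfin.toFinset.card := by
      conv_lhs => rw [← hcoe]
      exact Set.ncard_coe_finset _
    rw [hwithin U hUfin.toFinset hcoe, hncard]
    rcases Finset.eq_empty_or_nonempty hUfin.toFinset with hemp | hne
    · rw [hemp]
      have hT3e : S ∩ T3 (∅ : Finset V) = ∅ := by
        rw [Finset.eq_empty_iff_forall_notMem]
        intro e he
        have h2 := (Finset.mem_filter.mp (by
          have := (Finset.mem_inter.mp he).2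
          rwa [hT3def] at this)).2
        exact absurd (h2 e.out.1 (Sym2.out_fst_mem e)) (Finset.notMem_empty _)
      rw [hT3e]
      simp
    · exact not_lt.mp (hg3 hUfin.toFinset hne)
  -- property (iv)
  have hiv : ((H₁.edgeSet.ncard : ℝ)) ≤ (1000 * (a₂ + a₂ ^ 2) + 1) * n / L := by
    have h := hiii Set.univ
    have hwu : H₁.edgesWithin Set.univ = H₁.edgeSet := by
      ext e; simp [SimpleGraph.edgesWithin]
    rw [hwu, Set.ncard_univ, Nat.card_eq_fintype_card, ← hNdef] at h
    refine le_trans h ?_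
    have hNL4 : (N:ℝ) * L^4 ≤ a₂ * n := by
      have h2 := hV2
      rwa [le_div_iff₀ (by positivity)] at h2
    rw [max_le_iff]
    constructor
    · rw [le_div_iff₀ hL0]
      have h1 : (N:ℝ)*L^2*4 ≤ (N:ℝ)*L^4 := by
        have hp : 0 ≤ (N:ℝ) * L^2 * (L^2 - 4) :=
          mul_nonneg (mul_nonneg (Nat.cast_nonneg _) (sq_nonneg L)) (by nlinarith [hL2])
        nlinarith [hp]
      nlinarith [hNL4, hn0.le, ha₂, Nat.cast_nonneg (α:=ℝ) N, hL0,
        mul_nonneg (mul_nonneg ha₂.le ha₂.le) hn0.le, mul_nonneg ha₂.le hn0.le]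
    · rw [div_le_div_iff₀ hn0 hL0]
      have hsq : ((N:ℝ)*L^4)*((N:ℝ)*L^4) ≤ (a₂*n)*(a₂*n) :=
        mul_self_le_mul_self (by positivity) hNL4
      nlinarith [hsq, hn0.le, ha₂, sq_nonneg ((n:ℝ)), mul_pos hn0 hn0]
  refine ⟨H₁, hH₁H, ?_, ?_, hiii, hiv⟩
  · -- property (i)
    intro v hv
    have hge : c₁ / 2 * L ^ 3 ≤ ((S ∩ T1 v).card : ℝ) := by
      by_contra hcon
      exact hg1 v ⟨hv, lt_of_not_ge hcon⟩
    have hseteq : {u : V | F.Adj v u ∧ H₁.Adj v u}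
        = ↑(Finset.univ.filter (fun u => F.Adj v u ∧ s(v,u) ∈ S)) := by
      ext u
      simp only [Set.mem_setOf_eq, Finset.coe_filter, Finset.mem_univ, true_and,
        Set.mem_setOf_eq]
      constructor
      · rintro ⟨hF, hH₁a⟩
        rw [hH₁def, SimpleGraph.fromEdgeSet_adj] at hH₁a
        exact ⟨hF, Finset.mem_coe.mp hH₁a.1⟩
      · rintro ⟨hF, hmem⟩
        refine ⟨hF, ?_⟩
        rw [hH₁def, SimpleGraph.fromEdgeSet_adj]
        exact ⟨Finset.mem_coe.mpr hmem, F.ne_of_adj hF⟩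
    have himg : (Finset.univ.filter (fun u => F.Adj v u ∧ s(v,u) ∈ S)).image
        (fun u => s(v,u)) = S ∩ T1 v := by
      ext e
      simp only [Finset.mem_inter, hT1def]
      constructor
      · intro he
        obtain ⟨u, hu, rfl⟩ := Finset.mem_image.mp he
        obtain ⟨hF, hmem⟩ := (Finset.mem_filter.mp hu).2
        exact ⟨hmem, Finset.mem_image.mpr
          ⟨u, Finset.mem_filter.mpr ⟨Finset.mem_univ u, hF⟩, rfl⟩⟩
      · rintro ⟨hmem, himg2⟩
        obtain ⟨u, hu, rfl⟩ := Finset.mem_image.mp himg2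
        have hF := (Finset.mem_filter.mp hu).2
        exact Finset.mem_image.mpr ⟨u,
          Finset.mem_filter.mpr ⟨Finset.mem_univ u, hF, hmem⟩, rfl⟩
    have hcard : {u : V | F.Adj v u ∧ H₁.Adj v u}.ncard = (S ∩ T1 v).card := by
      rw [hseteq, Set.ncard_coe_finset, ← himg,
        Finset.card_image_of_injOn (fun u _ u' _ h => Sym2.congr_right.mp h)]
    rw [hcard]
    exact hge
  · -- property (ii)
    intro U W hUW hUc hWc
    have hUfin : U.Finite := Set.toFinite U
    have hWfin : W.Finite := Set.toFinite W
    have hUcoe : ↑hUfin.toFinset = U := Set.Finite.coe_toFinset hUfin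
    have hWcoe : ↑hWfin.toFinset = W := Set.Finite.coe_toFinset hWfin
    have hd : Disjoint hUfin.toFinset hWfin.toFinset := by
      rw [← Finset.disjoint_coe, hUcoe, hWcoe]; exact hUW
    have hcU : hUfin.toFinset.card = sN := by
      rw [← Set.ncard_coe_finset, hUcoe]; exact hUc
    have hcW : hWfin.toFinset.card = sN := by
      rw [← Set.ncard_coe_finset, hWcoe]; exact hWc
    have hge : c₂ / 2 * (n:ℝ) / (L ^ 3 * LL ^ 6)
        ≤ ((S ∩ T2 (hUfin.toFinset, hWfin.toFinset)).card : ℝ) := by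
      by_contra hcon
      exact hg2 (hUfin.toFinset, hWfin.toFinset) ⟨hd, hcU, hcW, lt_of_not_ge hcon⟩
    have hbet : H₁.edgesBetween U W = ↑(S ∩ T2 (hUfin.toFinset, hWfin.toFinset)) := by
      ext e
      simp only [SimpleGraph.edgesBetween, Set.mem_setOf_eq, hH₁E, Finset.mem_coe,
        Finset.mem_inter, hT2def, Finset.mem_filter, hEdef, SimpleGraph.mem_edgeFinset]
      constructor
      · rintro ⟨heS, u, hu, w, hw, rfl⟩
        exact ⟨heS, hSsubE heS, u, (Set.Finite.mem_toFinset hUfin).mpr hu, w,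
          (Set.Finite.mem_toFinset hWfin).mpr hw, rfl⟩
      · rintro ⟨heS, _, u, hu, w, hw, rfl⟩
        exact ⟨heS, u, (Set.Finite.mem_toFinset hUfin).mp hu, w,
          (Set.Finite.mem_toFinset hWfin).mp hw, rfl⟩
    rw [hbet, Set.ncard_coe_finset]
    exact hge
end

section
/- For every real K > 5 and every constant c > 0 there exists n₀ such that for every n ≥ n₀ the following holds: if G is a graph on n vertices with minimum degree at least c·(ln n)^K, then there exists a vertex subset U₀ ⊆ V(G) with |U₀| = ⌈n/(ln n)⁴⌉ such that every vertex v ∈ V(G) has at least (c/2)·(ln n)^{K−4} neighbors in U₀. -/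
open Finset Real

lemma moment_eq (n b : ℕ) (hb : 0 < b) (A : Finset (Fin n)) (x : ℝ) :
    ∑ f : Fin n → Fin b, x ^ (A.filter fun u => (f u).val = 0).card
      = (x + ((b : ℝ) - 1)) ^ A.card * (b : ℝ) ^ (n - A.card) := by
  have h1 : ∀ f : Fin n → Fin b,
      x ^ (A.filter fun u => (f u).val = 0).card
        = ∏ u, (if u ∈ A then (if (f u).val = 0 then x else 1) else 1) := by
    intro f
    rw [Finset.prod_ite_mem, Finset.univ_inter, Finset.prod_ite, Finset.prod_const,
      Finset.prod_const, one_pow, mul_one]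
  simp only [h1]
  rw [show (Finset.univ : Finset (Fin n → Fin b)) = Fintype.piFinset fun _ => univ from
      (Fintype.piFinset_univ).symm,
    ← Finset.prod_univ_sum (fun _ : Fin n => (Finset.univ : Finset (Fin b)))
      (fun u v => if u ∈ A then (if (v : ℕ) = 0 then x else 1) else 1)]
  have h3 : ∀ u : Fin n, (∑ v : Fin b, if u ∈ A then (if (v : ℕ) = 0 then x else 1) else 1)
      = if u ∈ A then (x + ((b : ℝ) - 1)) else (b : ℝ) := by
    intro u
    by_cases h : u ∈ A
    · simp only [h, if_true]
      calc ∑ v : Fin b, (if (v : ℕ) = 0 then x else 1)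
          = ∑ v : Fin b, ((if v = (⟨0, hb⟩ : Fin b) then x - 1 else 0) + 1) := by
            refine Finset.sum_congr rfl fun v _ => ?_
            by_cases hv : (v : ℕ) = 0 <;> simp [hv, Fin.ext_iff] <;> ring
        _ = x + ((b : ℝ) - 1) := by
            rw [Finset.sum_add_distrib, Finset.sum_ite_eq' Finset.univ (⟨0, hb⟩ : Fin b)]
            simp [Finset.card_univ]
            ring
    · simp [h, Finset.card_univ]
  rw [Finset.prod_congr rfl fun u _ => h3 u, Finset.prod_ite, Finset.prod_const,
    Finset.prod_const]
  congr 1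
  · congr 1
    simp
  · congr 1
    rw [Finset.filter_not]
    simp [Finset.card_univ_diff]

lemma tail_low (n b k : ℕ) (hb : 0 < b) (A : Finset (Fin n)) (x : ℝ)
    (hx0 : 0 < x) (hx1 : x ≤ 1) :
    ((Finset.univ.filter fun f : Fin n → Fin b =>
        (A.filter fun u => (f u).val = 0).card ≤ k).card : ℝ) * x ^ k
      ≤ (x + ((b : ℝ) - 1)) ^ A.card * (b : ℝ) ^ (n - A.card) := by
  rw [← moment_eq n b hb A x]
  calc ((Finset.univ.filter fun f : Fin n → Fin b =>
        (A.filter fun u => (f u).val = 0).card ≤ k).card : ℝ) * x ^ k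
      = ∑ _f ∈ (Finset.univ.filter fun f : Fin n → Fin b =>
          (A.filter fun u => (f u).val = 0).card ≤ k), x ^ k := by
        rw [Finset.sum_const, nsmul_eq_mul]
    _ ≤ ∑ f ∈ (Finset.univ.filter fun f : Fin n → Fin b =>
          (A.filter fun u => (f u).val = 0).card ≤ k),
          x ^ (A.filter fun u => (f u).val = 0).card := by
        refine Finset.sum_le_sum fun f hf => ?_
        exact pow_le_pow_of_le_one hx0.le hx1 (Finset.mem_filter.mp hf).2
    _ ≤ ∑ f : Fin n → Fin b, x ^ (A.filter fun u => (f u).val = 0).card := by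
        refine Finset.sum_le_sum_of_subset_of_nonneg (Finset.filter_subset _ _)
          fun f _ _ => by positivity

lemma tail_high (n b m : ℕ) (hb : 0 < b) (y : ℝ) (hy : 1 ≤ y) :
    ((Finset.univ.filter fun f : Fin n → Fin b =>
        m < (Finset.univ.filter fun u => (f u).val = 0).card).card : ℝ) * y ^ (m + 1)
      ≤ (y + ((b : ℝ) - 1)) ^ n := by
  have h := moment_eq n b hb Finset.univ y
  simp only [Finset.card_univ, Fintype.card_fin, Nat.sub_self, pow_zero, mul_one] at h
  rw [← h]
  calc ((Finset.univ.filter fun f : Fin n → Fin b =>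
        m < (Finset.univ.filter fun u => (f u).val = 0).card).card : ℝ) * y ^ (m + 1)
      = ∑ _f ∈ (Finset.univ.filter fun f : Fin n → Fin b =>
          m < (Finset.univ.filter fun u => (f u).val = 0).card), y ^ (m + 1) := by
        rw [Finset.sum_const, nsmul_eq_mul]
    _ ≤ ∑ f ∈ (Finset.univ.filter fun f : Fin n → Fin b =>
          m < (Finset.univ.filter fun u => (f u).val = 0).card),
          y ^ (Finset.univ.filter fun u => (f u).val = 0).card := by
        refine Finset.sum_le_sum fun f hf => ?_
        exact pow_le_pow_right₀ hy (Finset.mem_filter.mp hf).2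
    _ ≤ ∑ f : Fin n → Fin b, y ^ (Finset.univ.filter fun u => (f u).val = 0).card := by
        refine Finset.sum_le_sum_of_subset_of_nonneg (Finset.filter_subset _ _)
          fun f _ _ => by positivity

lemma log_five_quarter : (11 / 50 : ℝ) ≤ Real.log (5 / 4) := by
  rw [Real.le_log_iff_exp_le (by norm_num)]
  have h5 : Real.exp (11 / 50 : ℝ) ^ (5 : ℕ) = Real.exp (11 / 10) := by
    rw [← Real.exp_nat_mul]; norm_num
  have he1 : Real.exp 1 < 2.7182818286 := Real.exp_one_lt_d9
  have he10 : Real.exp (1 / 10 : ℝ) ≤ 10 / 9 := by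
    have h := Real.add_one_le_exp (-(1 / 10 : ℝ))
    have hpos : (0:ℝ) < Real.exp (-(1/10:ℝ)) := Real.exp_pos _
    rw [show Real.exp (1/10:ℝ) = (Real.exp (-(1/10:ℝ)))⁻¹ by
      rw [← Real.exp_neg]; norm_num]
    rw [inv_le_comm₀ hpos (by norm_num)]
    linarith
  have h11 : Real.exp (11 / 10 : ℝ) ≤ 2.7182818286 * (10 / 9) := by
    rw [show (11/10 : ℝ) = 1 + 1/10 by norm_num, Real.exp_add]
    exact mul_le_mul he1.le he10 (Real.exp_pos _).le (by norm_num)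
  have hfin : Real.exp (11 / 50 : ℝ) ^ (5 : ℕ) ≤ (5 / 4 : ℝ) ^ (5 : ℕ) := by
    rw [h5]
    calc Real.exp (11/10 : ℝ) ≤ 2.7182818286 * (10/9) := h11
      _ ≤ (5/4 : ℝ)^(5:ℕ) := by norm_num
  exact le_of_pow_le_pow_left₀ (by norm_num) (by norm_num) hfin

lemma eventual_conditions (K c : ℝ) (hK : 5 < K) (hc : 0 < c) :
    ∀ᶠ n : ℕ in Filter.atTop, 3 ≤ n ∧ 20 ≤ (Real.log n) ^ (4:ℕ) ∧
      Real.log n + Real.log 4 ≤ c / 156 * (Real.log n) ^ (K - 4) ∧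
      150 ≤ (n : ℝ) / (Real.log n) ^ (4:ℕ) := by
  have hlog : Filter.Tendsto (fun n : ℕ => Real.log n) Filter.atTop Filter.atTop :=
    Real.tendsto_log_atTop.comp tendsto_natCast_atTop_atTop
  have p1 : ∀ᶠ n : ℕ in Filter.atTop, 3 ≤ n := Filter.eventually_ge_atTop 3
  have p2 : ∀ᶠ n : ℕ in Filter.atTop, 20 ≤ (Real.log n) ^ (4:ℕ) := by
    filter_upwards [hlog.eventually_ge_atTop 20] with n hn
    calc (20:ℝ) ≤ Real.log n := hn
      _ ≤ (Real.log n) ^ (4:ℕ) := le_self_pow₀ (by linarith) (by norm_num)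
  have p3 : ∀ᶠ n : ℕ in Filter.atTop,
      Real.log n + Real.log 4 ≤ c / 156 * (Real.log n) ^ (K - 4) := by
    have hr : Filter.Tendsto (fun n : ℕ => (Real.log n) ^ (K - 5)) Filter.atTop
        Filter.atTop := (tendsto_rpow_atTop (by linarith : (0:ℝ) < K - 5)).comp hlog
    filter_upwards [hlog.eventually_ge_atTop (max 2 (Real.log 4)),
      hr.eventually_ge_atTop (312 / c)] with n h1 h2
    have hL2 : (2:ℝ) ≤ Real.log n := le_trans (le_max_left _ _) h1
    have hL4 : Real.log 4 ≤ Real.log n := le_trans (le_max_right _ _) h1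
    have hLpos : (0:ℝ) < Real.log n := by linarith
    have hsplit : (Real.log n) ^ (K - 4) = (Real.log n) ^ (K - 5) * Real.log n := by
      rw [← Real.rpow_add_one hLpos.ne' (K - 5)]; ring_nf
    rw [hsplit]
    have : (312 / c) * Real.log n ≤ (Real.log n) ^ (K - 5) * Real.log n :=
      mul_le_mul_of_nonneg_right h2 hLpos.le
    calc Real.log n + Real.log 4 ≤ 2 * Real.log n := by linarith
      _ ≤ c / 156 * ((312 / c) * Real.log n) := by
          rw [show c / 156 * ((312 / c) * Real.log n) = 2 * Real.log n * (c / c) by ring,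
            div_self hc.ne']
          linarith
      _ ≤ c / 156 * ((Real.log n) ^ (K - 5) * Real.log n) := by
          have := mul_le_mul_of_nonneg_left this (by positivity : (0:ℝ) ≤ c / 156)
          linarith
  have p4 : ∀ᶠ n : ℕ in Filter.atTop, 150 ≤ (n : ℝ) / (Real.log n) ^ (4:ℕ) := by
    have ho := Real.isLittleO_pow_log_id_atTop (n := 4)
    have hb := ho.bound (by norm_num : (0:ℝ) < 1/150)
    have hb' : ∀ᶠ n : ℕ in Filter.atTop,
        ‖(Real.log n) ^ (4:ℕ)‖ ≤ 1/150 * ‖id (n:ℝ)‖ := tendsto_natCast_atTop_atTop.eventually hb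
    filter_upwards [hb', p2, p1] with n h1 h2 h3
    have hL4pos : (0:ℝ) < (Real.log n) ^ (4:ℕ) := by linarith
    have hnpos : (0:ℝ) < (n:ℝ) := by positivity
    rw [Real.norm_eq_abs, Real.norm_eq_abs, abs_of_pos hL4pos, id, abs_of_pos hnpos] at h1
    rw [le_div_iff₀ hL4pos]
    linarith
  filter_upwards [p1, p2, p3, p4] with n h1 h2 h3 h4
  exact ⟨h1, h2, h3, h4⟩

set_option maxHeartbeats 1000000


/-- For every real `K > 5` and constant `c > 0`, for all sufficiently large `n`:
if `G` is a graph on `n` vertices with minimum degree at least `c·(ln n)^K`, then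
there is a vertex subset `U₀` of size `⌈n/(ln n)⁴⌉` such that every vertex has at
least `(c/2)·(ln n)^{K−4}` neighbors in `U₀`. -/
theorem exists_dominating_core (K c : ℝ) (hK : 5 < K) (hc : 0 < c) :
    ∃ n₀ : ℕ, ∀ n : ℕ, n₀ ≤ n → ∀ G : SimpleGraph (Fin n),
      (∀ v : Fin n, c * (Real.log n) ^ K ≤ ((G.neighborSet v).ncard : ℝ)) →
      ∃ U₀ : Finset (Fin n), U₀.card = ⌈(n : ℝ) / (Real.log n) ^ 4⌉₊ ∧
        ∀ v : Fin n,
          c / 2 * (Real.log n) ^ (K - 4) ≤ ((G.neighborSet v ∩ ↑U₀).ncard : ℝ) := by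
  classical
  obtain ⟨n₀, hn₀⟩ := Filter.eventually_atTop.mp (eventual_conditions K c hK hc)
  refine ⟨n₀, fun n hn G hdeg => ?_⟩
  obtain ⟨hn3, hL4, hC3, hC4⟩ := hn₀ n hn
  set L := Real.log n with hLdef
  have hL0 : 0 ≤ L := Real.log_nonneg (by exact_mod_cast Nat.one_le_of_lt hn3)
  have hL1 : 1 ≤ L := by
    by_contra h
    push_neg at h
    have : L ^ (4:ℕ) < 1 := pow_lt_one₀ hL0 h (by norm_num)
    linarith
  have hLpos : 0 < L := by linarith
  have hL4pos : (0:ℝ) < L ^ (4:ℕ) := by positivity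
  set b := ⌈(5/4 : ℝ) * L ^ (4:ℕ)⌉₊ with hbdef
  set m := ⌈(n : ℝ) / L ^ (4:ℕ)⌉₊ with hmdef
  set t := c / 2 * L ^ (K - 4) with htdef
  set k := ⌊t⌋₊ with hkdef
  have hE0 : (0:ℝ) ≤ L ^ (K - 4) := Real.rpow_nonneg hL0 _
  have ht0 : 0 ≤ t := by positivity
  have hb_lb : (5/4 : ℝ) * L ^ (4:ℕ) ≤ (b:ℝ) := Nat.le_ceil _
  have hb_ub : (b:ℝ) ≤ (13/10) * L ^ (4:ℕ) := by
    have h1 : (b:ℝ) < (5/4 : ℝ) * L ^ (4:ℕ) + 1 :=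
      Nat.ceil_lt_add_one (by positivity)
    linarith
  have hbRpos : (0:ℝ) < (b:ℝ) := lt_of_lt_of_le (by positivity) hb_lb
  have hbpos : 0 < b := by exact_mod_cast hbRpos
  have hbR1 : (1:ℝ) ≤ (b:ℝ) := by exact_mod_cast hbpos
  have hnR : (0:ℝ) < (n:ℝ) := by
    have : 0 < n := by omega
    exact_mod_cast this
  have hm_lb : (n:ℝ) / L ^ (4:ℕ) ≤ (m:ℝ) := Nat.le_ceil _
  have hmn : m ≤ n := Nat.ceil_le.mpr (div_le_self hnR.le (by linarith))
  have hk_le : (k:ℝ) ≤ t := Nat.floor_le ht0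
  have hkt : t < (k:ℝ) + 1 := Nat.lt_floor_add_one t
  -- degree facts
  have hdeg' : ∀ v, c * L ^ K ≤ ((G.neighborFinset v).card : ℝ) := by
    intro v
    have h := hdeg v
    rw [SimpleGraph.neighborFinset_def, ← Set.ncard_eq_toFinset_card']
    exact h
  have hdle : ∀ v : Fin n, (G.neighborFinset v).card ≤ n := fun v =>
    le_trans (Finset.card_le_univ _) (by simp)
  -- split rpow
  have hLK : L ^ K = L ^ (K - 4) * L ^ (4:ℕ) := by
    rw [← Real.rpow_natCast L 4, ← Real.rpow_add hLpos]
    norm_num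
  have hDb : (10/39) * (c * L ^ (K - 4)) ≤ (c * L ^ K) / (3 * (b:ℝ)) := by
    have h1 : (c * L ^ K) / (3 * ((13/10) * L ^ (4:ℕ))) ≤ (c * L ^ K) / (3 * (b:ℝ)) := by
      apply div_le_div_of_nonneg_left (by positivity) (by positivity)
      linarith
    have h2 : (c * L ^ K) / (3 * ((13/10) * L ^ (4:ℕ))) = (10/39) * (c * L ^ (K - 4)) := by
      rw [hLK]
      field_simp
      ring
    linarith
  have hlin_a : Real.log 4 + L + (k:ℝ) * Real.log (3/2) ≤ (c * L ^ K) / (3 * (b:ℝ)) := by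
    have hlog32 : Real.log (3/2) ≤ 1/2 := by
      have := Real.log_le_sub_one_of_pos (by norm_num : (0:ℝ) < 3/2)
      linarith
    have hklog : (k:ℝ) * Real.log (3/2) ≤ t * (1/2) :=
      mul_le_mul hk_le hlog32 (Real.log_nonneg (by norm_num)) ht0
    rw [htdef] at hklog
    nlinarith [hDb, hC3, hklog]
  -- per-vertex bad count
  have hbadv : ∀ v : Fin n,
      ((Finset.univ.filter fun f : Fin n → Fin b =>
        ((G.neighborFinset v).filter fun u => (f u).val = 0).card ≤ k).card : ℝ) * (4 * (n:ℝ))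
        ≤ (b:ℝ) ^ n := by
    intro v
    set d := (G.neighborFinset v).card with hddef
    have htl := tail_low n b k hbpos (G.neighborFinset v) (2/3) (by norm_num) (by norm_num)
    have hq : (2/3 : ℝ) + ((b:ℝ) - 1) ≤ (b:ℝ) * Real.exp (-(1 / (3 * (b:ℝ)))) := by
      have h := Real.add_one_le_exp (-(1 / (3 * (b:ℝ))))
      calc (2/3 : ℝ) + ((b:ℝ) - 1) = (b:ℝ) * (-(1 / (3 * (b:ℝ))) + 1) := by
            field_simp
            ring
        _ ≤ (b:ℝ) * Real.exp (-(1 / (3 * (b:ℝ)))) := mul_le_mul_of_nonneg_left h hbRpos.le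
    have hS1 : ((2/3 : ℝ) + ((b:ℝ) - 1)) ^ d * (b:ℝ) ^ (n - d)
        ≤ (b:ℝ) ^ n * Real.exp (-(c * L ^ K / (3 * (b:ℝ)))) := by
      have hq0 : (0:ℝ) ≤ (2/3 : ℝ) + ((b:ℝ) - 1) := by linarith
      calc ((2/3 : ℝ) + ((b:ℝ) - 1)) ^ d * (b:ℝ) ^ (n - d)
          ≤ ((b:ℝ) * Real.exp (-(1 / (3 * (b:ℝ))))) ^ d * (b:ℝ) ^ (n - d) :=
            mul_le_mul_of_nonneg_right (pow_le_pow_left₀ hq0 hq d) (by positivity)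
        _ = (b:ℝ) ^ n * Real.exp (-((d:ℝ) / (3 * (b:ℝ)))) := by
            rw [mul_pow, ← Real.exp_nat_mul]
            rw [show (b:ℝ) ^ d * Real.exp ((d:ℝ) * -(1 / (3 * (b:ℝ)))) * (b:ℝ) ^ (n - d)
                = (b:ℝ) ^ d * (b:ℝ) ^ (n - d) * Real.exp ((d:ℝ) * -(1 / (3 * (b:ℝ)))) from by
              ring]
            rw [← pow_add, Nat.add_sub_cancel' (hdle v)]
            congr 1
            ring
        _ ≤ (b:ℝ) ^ n * Real.exp (-(c * L ^ K / (3 * (b:ℝ)))) := by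
            apply mul_le_mul_of_nonneg_left _ (by positivity)
            apply Real.exp_le_exp.mpr
            apply neg_le_neg
            exact (div_le_div_iff_of_pos_right (by positivity)).mpr (hdeg' v)
    have h2 : ((Finset.univ.filter fun f : Fin n → Fin b =>
        ((G.neighborFinset v).filter fun u => (f u).val = 0).card ≤ k).card : ℝ) * (2/3:ℝ) ^ k
        ≤ (b:ℝ) ^ n * Real.exp (-(c * L ^ K / (3 * (b:ℝ)))) := le_trans htl hS1
    have hcore : 4 * (n:ℝ) * Real.exp (-(c * L ^ K / (3 * (b:ℝ)))) ≤ (2/3 : ℝ) ^ k := by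
      have hxk : ((2/3 : ℝ)) ^ k = Real.exp ((k:ℝ) * Real.log (2/3)) := by
        rw [Real.exp_nat_mul, Real.exp_log (by norm_num : (0:ℝ) < 2/3)]
      have hlhs : 4 * (n:ℝ) * Real.exp (-(c * L ^ K / (3 * (b:ℝ))))
          = Real.exp (Real.log (4 * (n:ℝ)) + -(c * L ^ K / (3 * (b:ℝ)))) := by
        rw [Real.exp_add, Real.exp_log (by positivity : (0:ℝ) < 4 * (n:ℝ))]
      rw [hlhs, hxk, Real.exp_le_exp]
      have hlog4n : Real.log (4 * (n:ℝ)) = Real.log 4 + L := by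
        rw [Real.log_mul (by norm_num) (ne_of_gt hnR)]
      have hlog23 : Real.log (2/3 : ℝ) = -Real.log (3/2) := by
        rw [show (2/3 : ℝ) = (3/2 : ℝ)⁻¹ by norm_num, Real.log_inv]
      rw [hlog4n, hlog23]
      nlinarith [hlin_a]
    have hxpos : (0:ℝ) < (2/3 : ℝ) ^ k := by positivity
    have h3 : ((Finset.univ.filter fun f : Fin n → Fin b =>
        ((G.neighborFinset v).filter fun u => (f u).val = 0).card ≤ k).card : ℝ) * (4 * (n:ℝ))
        * (2/3:ℝ) ^ k ≤ (b:ℝ) ^ n * (2/3:ℝ) ^ k := by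
      calc ((Finset.univ.filter fun f : Fin n → Fin b =>
            ((G.neighborFinset v).filter fun u => (f u).val = 0).card ≤ k).card : ℝ)
            * (4 * (n:ℝ)) * (2/3:ℝ) ^ k
          = (((Finset.univ.filter fun f : Fin n → Fin b =>
            ((G.neighborFinset v).filter fun u => (f u).val = 0).card ≤ k).card : ℝ)
            * (2/3:ℝ) ^ k) * (4 * (n:ℝ)) := by ring
        _ ≤ ((b:ℝ) ^ n * Real.exp (-(c * L ^ K / (3 * (b:ℝ))))) * (4 * (n:ℝ)) :=
            mul_le_mul_of_nonneg_right h2 (by positivity)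
        _ = (b:ℝ) ^ n * (4 * (n:ℝ) * Real.exp (-(c * L ^ K / (3 * (b:ℝ))))) := by ring
        _ ≤ (b:ℝ) ^ n * (2/3:ℝ) ^ k := mul_le_mul_of_nonneg_left hcore (by positivity)
    exact le_of_mul_le_mul_right h3 hxpos
  -- size bad count
  have hsize : ((Finset.univ.filter fun f : Fin n → Fin b =>
      m < (Finset.univ.filter fun u => (f u).val = 0).card).card : ℝ) * 4 ≤ (b:ℝ) ^ n := by
    have htl := tail_high n b m hbpos (5/4) (by norm_num)
    have hq : (5/4 : ℝ) + ((b:ℝ) - 1) ≤ (b:ℝ) * Real.exp (1 / (4 * (b:ℝ))) := by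
      have h := Real.add_one_le_exp (1 / (4 * (b:ℝ)))
      calc (5/4 : ℝ) + ((b:ℝ) - 1) = (b:ℝ) * (1 / (4 * (b:ℝ)) + 1) := by
            field_simp
            ring
        _ ≤ (b:ℝ) * Real.exp (1 / (4 * (b:ℝ))) := mul_le_mul_of_nonneg_left h hbRpos.le
    have hS1 : ((5/4 : ℝ) + ((b:ℝ) - 1)) ^ n ≤ (b:ℝ) ^ n * Real.exp ((n:ℝ) / (4 * (b:ℝ))) := by
      have hq0 : (0:ℝ) ≤ (5/4 : ℝ) + ((b:ℝ) - 1) := by linarith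
      calc ((5/4 : ℝ) + ((b:ℝ) - 1)) ^ n
          ≤ ((b:ℝ) * Real.exp (1 / (4 * (b:ℝ)))) ^ n := pow_le_pow_left₀ hq0 hq n
        _ = (b:ℝ) ^ n * Real.exp ((n:ℝ) / (4 * (b:ℝ))) := by
            rw [mul_pow, ← Real.exp_nat_mul]
            congr 1
            ring
    have hcore : 4 * Real.exp ((n:ℝ) / (4 * (b:ℝ))) ≤ (5/4 : ℝ) ^ (m + 1) := by
      have hyk : ((5/4 : ℝ)) ^ (m + 1) = Real.exp (((m:ℝ) + 1) * Real.log (5/4)) := by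
        rw [show ((m:ℝ) + 1) = ((m + 1 : ℕ) : ℝ) by push_cast; ring]
        rw [Real.exp_nat_mul, Real.exp_log (by norm_num : (0:ℝ) < 5/4)]
      have hlhs : 4 * Real.exp ((n:ℝ) / (4 * (b:ℝ)))
          = Real.exp (Real.log 4 + (n:ℝ) / (4 * (b:ℝ))) := by
        rw [Real.exp_add, Real.exp_log (by norm_num : (0:ℝ) < 4)]
      rw [hlhs, hyk, Real.exp_le_exp]
      have hnb : (n:ℝ) / (4 * (b:ℝ)) ≤ (n:ℝ) / L ^ (4:ℕ) * (1/5) := by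
        have h5 : 5 * L ^ (4:ℕ) ≤ 4 * (b:ℝ) := by linarith
        have := div_le_div_of_nonneg_left hnR.le (by positivity : (0:ℝ) < 4 * (b:ℝ))
          (le_refl (4 * (b:ℝ)))
        calc (n:ℝ) / (4 * (b:ℝ)) ≤ (n:ℝ) / (5 * L ^ (4:ℕ)) :=
              div_le_div_of_nonneg_left hnR.le (by positivity) h5
          _ = (n:ℝ) / L ^ (4:ℕ) * (1/5) := by
              rw [mul_comm (5:ℝ) _, ← div_div]
              ring
      have hlog4 : Real.log 4 ≤ 3 := by
        have := Real.log_le_sub_one_of_pos (by norm_num : (0:ℝ) < 4)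
        linarith
      have hmlog : (n:ℝ) / L ^ (4:ℕ) * (11/50) ≤ ((m:ℝ) + 1) * Real.log (5/4) := by
        have h1 : (n:ℝ) / L ^ (4:ℕ) ≤ (m:ℝ) + 1 := by linarith
        exact mul_le_mul h1 log_five_quarter (by norm_num) (by positivity)
      nlinarith [hnb, hlog4, hmlog, hC4]
    have hypos : (0:ℝ) < (5/4 : ℝ) ^ (m + 1) := by positivity
    have h3 : ((Finset.univ.filter fun f : Fin n → Fin b =>
        m < (Finset.univ.filter fun u => (f u).val = 0).card).card : ℝ) * 4
        * (5/4:ℝ) ^ (m+1) ≤ (b:ℝ) ^ n * (5/4:ℝ) ^ (m+1) := by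
      calc ((Finset.univ.filter fun f : Fin n → Fin b =>
            m < (Finset.univ.filter fun u => (f u).val = 0).card).card : ℝ) * 4
            * (5/4:ℝ) ^ (m+1)
          = (((Finset.univ.filter fun f : Fin n → Fin b =>
            m < (Finset.univ.filter fun u => (f u).val = 0).card).card : ℝ)
            * (5/4:ℝ) ^ (m+1)) * 4 := by ring
        _ ≤ (((5/4:ℝ) + ((b:ℝ) - 1)) ^ n) * 4 := mul_le_mul_of_nonneg_right htl (by norm_num)
        _ ≤ ((b:ℝ) ^ n * Real.exp ((n:ℝ) / (4 * (b:ℝ)))) * 4 :=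
            mul_le_mul_of_nonneg_right hS1 (by norm_num)
        _ = (b:ℝ) ^ n * (4 * Real.exp ((n:ℝ) / (4 * (b:ℝ)))) := by ring
        _ ≤ (b:ℝ) ^ n * (5/4:ℝ) ^ (m+1) := mul_le_mul_of_nonneg_left hcore (by positivity)
    exact le_of_mul_le_mul_right h3 hypos
  -- union bound
  set BadV : Finset (Fin n → Fin b) := Finset.univ.biUnion (fun v : Fin n =>
    Finset.univ.filter fun f : Fin n → Fin b =>
      ((G.neighborFinset v).filter fun u => (f u).val = 0).card ≤ k) with hBadV
  set BadS : Finset (Fin n → Fin b) := Finset.univ.filter fun f : Fin n → Fin b =>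
    m < (Finset.univ.filter fun u => (f u).val = 0).card with hBadS
  have hcard : ((BadS ∪ BadV).card : ℝ) < (b:ℝ) ^ n := by
    have hvbound : ∀ v : Fin n, ((Finset.univ.filter fun f : Fin n → Fin b =>
        ((G.neighborFinset v).filter fun u => (f u).val = 0).card ≤ k).card : ℝ)
        ≤ (b:ℝ) ^ n / (4 * (n:ℝ)) := fun v =>
      (le_div_iff₀ (by positivity)).mpr (hbadv v)
    have hsumv : ((BadV.card : ℕ) : ℝ) ≤ (n:ℝ) * ((b:ℝ) ^ n / (4 * (n:ℝ))) := by
      calc ((BadV.card : ℕ) : ℝ)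
          ≤ ((∑ v : Fin n, (Finset.univ.filter fun f : Fin n → Fin b =>
            ((G.neighborFinset v).filter fun u => (f u).val = 0).card ≤ k).card : ℕ) : ℝ) := by
            exact_mod_cast Finset.card_biUnion_le
        _ = ∑ v : Fin n, (((Finset.univ.filter fun f : Fin n → Fin b =>
            ((G.neighborFinset v).filter fun u => (f u).val = 0).card ≤ k).card : ℕ) : ℝ) := by
            push_cast
            rfl
        _ ≤ ∑ _v : Fin n, (b:ℝ) ^ n / (4 * (n:ℝ)) :=
            Finset.sum_le_sum fun v _ => hvbound v
        _ = (n:ℝ) * ((b:ℝ) ^ n / (4 * (n:ℝ))) := by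
            rw [Finset.sum_const, Finset.card_univ, Fintype.card_fin, nsmul_eq_mul]
    have hsb : ((BadS.card : ℕ) : ℝ) ≤ (b:ℝ) ^ n / 4 := by
      rw [hBadS]
      linarith [hsize]
    have hbn : (0:ℝ) < (b:ℝ) ^ n := by positivity
    have hhalf : (n:ℝ) * ((b:ℝ) ^ n / (4 * (n:ℝ))) = (b:ℝ) ^ n / 4 := by
      field_simp
    calc ((BadS ∪ BadV).card : ℝ)
        ≤ ((BadS.card + BadV.card : ℕ) : ℝ) := by exact_mod_cast Finset.card_union_le _ _
      _ = ((BadS.card : ℕ) : ℝ) + ((BadV.card : ℕ) : ℝ) := by push_cast; ring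
      _ ≤ (b:ℝ) ^ n / 4 + (b:ℝ) ^ n / 4 := by
          rw [hhalf] at hsumv
          linarith
      _ < (b:ℝ) ^ n := by linarith
  have hne : BadS ∪ BadV ≠ Finset.univ := by
    intro h
    rw [h, Finset.card_univ] at hcard
    have : Fintype.card (Fin n → Fin b) = b ^ n := by
      simp [Fintype.card_fun]
    rw [this] at hcard
    push_cast at hcard
    exact lt_irrefl _ hcard
  obtain ⟨f, hf⟩ : ∃ f : Fin n → Fin b, f ∉ BadS ∪ BadV := by
    by_contra h
    push_neg at h
    exact hne (Finset.eq_univ_iff_forall.mpr h)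
  rw [Finset.mem_union, not_or] at hf
  obtain ⟨hf1, hf2⟩ := hf
  have hf1' : (Finset.univ.filter fun u : Fin n => (f u).val = 0).card ≤ m := by
    rw [hBadS] at hf1
    simp only [Finset.mem_filter, Finset.mem_univ, true_and, not_lt] at hf1
    exact hf1
  have hf2' : ∀ v : Fin n,
      k + 1 ≤ ((G.neighborFinset v).filter fun u => (f u).val = 0).card := by
    intro v
    rw [hBadV] at hf2
    simp only [Finset.mem_biUnion, Finset.mem_filter, Finset.mem_univ, true_and,
      not_exists, not_le] at hf2
    exact hf2 v
  set U' := Finset.univ.filter fun u : Fin n => (f u).val = 0 with hU'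
  obtain ⟨U₀, hU0sub, _, hU₀card⟩ := Finset.exists_subsuperset_card_eq
    (Finset.subset_univ U') (hf1'.trans (le_refl m))
    (by rw [Finset.card_univ, Fintype.card_fin]; exact hmn)
  refine ⟨U₀, hU₀card, ?_⟩
  intro v
  have hits_eq : (G.neighborFinset v).filter (fun u => (f u).val = 0)
      = G.neighborFinset v ∩ U' := by
    ext u
    simp [hU', Finset.mem_inter, Finset.mem_filter]
  have hsub : G.neighborFinset v ∩ U' ⊆ G.neighborFinset v ∩ U₀ :=
    Finset.inter_subset_inter (le_refl _) hU0sub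
  have hcardle : k + 1 ≤ (G.neighborFinset v ∩ U₀).card := by
    calc k + 1 ≤ ((G.neighborFinset v).filter fun u => (f u).val = 0).card := hf2' v
      _ = (G.neighborFinset v ∩ U').card := by rw [hits_eq]
      _ ≤ (G.neighborFinset v ∩ U₀).card := Finset.card_le_card hsub
  have hset : G.neighborSet v ∩ ↑U₀ = ↑(G.neighborFinset v ∩ U₀) := by
    rw [Finset.coe_inter, SimpleGraph.neighborFinset_def, Set.coe_toFinset]
  rw [hset, Set.ncard_coe_finset]
  have hcast : ((k:ℝ) + 1) ≤ ((G.neighborFinset v ∩ U₀).card : ℝ) := by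
    exact_mod_cast hcardle
  linarith [hkt]
end

section
/- Let G be a graph, let r ≥ 1 and t ≥ 0 be integers, and let P₀, P₁, …, P_t be pairwise vertex-disjoint paths in G, each with more than 2r vertices and each given a fixed orientation. Suppose that for every 0 ≤ i < t there is an edge of G joining one of the last r vertices of P_i to one of the first r vertices of P_{i+1}. Then G contains a path with at least (Σ_{i=0}^{t} |V(P_i)|) − 2r(t+1) vertices. -/
/-- Let `r ≥ 1`, `t ≥ 0`, and let `P 0, …, P t` be pairwise vertex-disjoint (oriented)
paths in a graph `G`, each on more than `2r` vertices.  If for every `i < t` there is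
an edge of `G` from one of the last `r` vertices of `P i` to one of the first `r`
vertices of `P (i+1)`, then `G` contains a path on at least
`(Σ_i |V(P i)|) − 2r(t+1)` vertices. -/
theorem long_path_of_linked_paths {V : Type*} (G : SimpleGraph V)
    (r t : ℕ) (hr : 1 ≤ r) (P : Fin (t + 1) → List V)
    (hpath : ∀ i, (P i).Nodup ∧ (P i).Chain' G.Adj)
    (hlong : ∀ i, 2 * r < (P i).length)
    (hdisj : ∀ i j, i ≠ j → ∀ v, v ∈ P i → v ∉ P j)
    (hlink : ∀ i : Fin t, ∃ x ∈ (P i.castSucc).reverse.take r,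
      ∃ y ∈ (P i.succ).take r, G.Adj x y) :
    ∃ Q : List V, Q.Nodup ∧ Q.Chain' G.Adj ∧
      (∑ i, ((P i).length : ℤ)) - 2 * r * (t + 1) ≤ Q.length := by
  classical
  set L : ℕ → List V := fun n => if h : n < t + 1 then P ⟨n, h⟩ else [] with hLdef
  have hL : ∀ m (h : m < t + 1), L m = P ⟨m, h⟩ := fun m h => dif_pos h
  have key : ∀ n, n ≤ t → ∃ Q : List V, Q.Nodup ∧ Q.Chain' G.Adj ∧
      (∀ v ∈ Q, ∃ j, j ≤ n ∧ v ∈ L j) ∧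
      (∃ k, k < r ∧ (L n).drop k <:+ Q) ∧
      (∑ j ∈ Finset.range (n + 1), ((L j).length : ℤ)) - 2 * r * (n + 1)
        ≤ (Q.length : ℤ) := by
    intro n
    induction n with
    | zero =>
      intro _
      refine ⟨L 0, ?_, ?_, fun v hv => ⟨0, le_refl 0, hv⟩,
        ⟨0, hr, by simpa using List.suffix_refl (L 0)⟩, ?_⟩
      · rw [hL 0 (by omega)]; exact (hpath _).1
      · rw [hL 0 (by omega)]; exact (hpath _).2
      · have hs : (∑ j ∈ Finset.range (0 + 1), ((L j).length : ℤ)) = (L 0).length := by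
          simp
        rw [hs]
        have h0 : (0:ℤ) ≤ (r:ℤ) := by positivity
        push_cast
        linarith
    | succ n ih =>
      intro hn
      have hnt : n < t := hn
      have hn1 : n < t + 1 := by omega
      have hn2 : n + 1 < t + 1 := by omega
      obtain ⟨Q, hnd, hch, hmem, ⟨k, hk, A, hA⟩, hlen⟩ := ih (by omega)
      obtain ⟨x, hxmem, y, hymem, hadj⟩ := hlink ⟨n, hnt⟩
      have hLc : P (Fin.castSucc ⟨n, hnt⟩) = L n := (hL n hn1).symm
      have hLs : P (Fin.succ ⟨n, hnt⟩) = L (n + 1) := (hL (n + 1) hn2).symm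
      rw [hLc] at hxmem
      rw [hLs] at hymem
      have hlongn : 2 * r < (L n).length := by rw [hL n hn1]; exact hlong _
      have hlongn1 : 2 * r < (L (n + 1)).length := by rw [hL _ hn2]; exact hlong _
      have hndLn : (L n).Nodup := by rw [hL n hn1]; exact (hpath _).1
      have hndLn1 : (L (n + 1)).Nodup := by rw [hL _ hn2]; exact (hpath _).1
      have hchLn1 : (L (n + 1)).Chain' G.Adj := by rw [hL _ hn2]; exact (hpath _).2
      -- x lies among the last r entries of L n
      have hxd : x ∈ (L n).drop ((L n).length - r) := by
        rw [List.take_reverse, List.mem_reverse] at hxmem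
        exact hxmem
      -- x lies in the suffix (L n).drop k
      have hxS : x ∈ (L n).drop k := by
        refine List.drop_subset_drop_left (L n) (show k ≤ (L n).length - r by omega) hxd
      obtain ⟨S₁, S₂, hS⟩ := List.append_of_mem hxS
      -- lengths
      have hlenS : (L n).length = k + (S₁.length + 1 + S₂.length) := by
        have h1 : ((L n).drop k).length = (L n).length - k := List.length_drop
        have h2 : ((L n).drop k).length = S₁.length + 1 + S₂.length := by
          rw [hS]
          simp only [List.length_append, List.length_cons]
          omega
        omega
      have hbS : (L n).drop (k + S₁.length + 1) = S₂ := by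
        have : (L n).drop (k + S₁.length + 1)
            = ((L n).drop k).drop (S₁.length + 1) := by
          rw [List.drop_drop, Nat.add_assoc]
        rw [this, hS]
        rw [show S₁ ++ x :: S₂ = (S₁ ++ [x]) ++ S₂ by simp]
        exact List.drop_left' (by simp)
      -- x is not in S₂
      have hxnotS₂ : x ∉ S₂ := by
        have h1 : (S₁ ++ x :: S₂).Nodup := by
          rw [← hS]; exact (List.drop_sublist _ _).nodup hndLn
        have h2 : (x :: S₂).Nodup := h1.of_append_right
        exact (List.nodup_cons.mp h2).1
      -- the key bound: at most r - 1 vertices after x in L n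
      have hS₂r : S₂.length + 1 ≤ r := by
        by_contra hcon
        push_neg at hcon
        have hle : k + S₁.length + 1 ≤ (L n).length - r := by omega
        have : (L n).drop ((L n).length - r)
            = S₂.drop ((L n).length - r - (k + S₁.length + 1)) := by
          rw [← hbS, List.drop_drop]; congr 1; omega
        rw [this] at hxd
        exact hxnotS₂ (List.drop_subset _ _ hxd)
      -- decompose L (n+1) around y
      obtain ⟨T₁, T₂, hT⟩ := List.append_of_mem hymem
      have hT1r : T₁.length + 1 ≤ r := by
        have h1 := congrArg List.length hT
        simp only [List.length_take, List.length_append, List.length_cons] at h1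
        omega
      obtain ⟨D, hD⟩ : ∃ D, D = y :: (T₂ ++ (L (n + 1)).drop r) := ⟨_, rfl⟩
      have hLn1split : L (n + 1) = T₁ ++ D := by
        rw [hD]
        conv_lhs => rw [← List.take_append_drop r (L (n + 1))]
        rw [hT]; simp
      have hDdrop : (L (n + 1)).drop T₁.length = D := by
        conv_lhs => rw [hLn1split]
        exact List.drop_left
      -- define the new path
      set Q' : List V := A ++ S₁ ++ [x] with hQ'def
      have hQdecomp : Q = Q' ++ S₂ := by rw [hQ'def, ← hA, hS]; simp
      have hpre : Q' <+: Q := ⟨S₂, hQdecomp.symm⟩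
      have hQ'sub : ∀ v ∈ Q', v ∈ Q := fun v hv => hpre.subset hv
      have hDsub : ∀ v ∈ D, v ∈ L (n + 1) := by
        intro v hv; rw [← hDdrop] at hv; exact List.drop_subset _ _ hv
      refine ⟨Q' ++ D, ?_, ?_, ?_, ⟨T₁.length, by omega, ?_⟩, ?_⟩
      · -- Nodup
        rw [List.nodup_append]
        refine ⟨hpre.sublist.nodup hnd, ?_, ?_⟩
        · rw [← hDdrop]; exact (List.drop_sublist _ _).nodup hndLn1
        · intro a haQ' b haD hab; subst hab
          obtain ⟨j, hj, hjmem⟩ := hmem a (hQ'sub a haQ')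
          have haL : a ∈ L (n + 1) := hDsub a haD
          refine hdisj ⟨j, by omega⟩ ⟨n + 1, hn2⟩ ?_ a ?_ ?_
          · simp only [ne_eq, Fin.mk.injEq]; omega
          · rwa [hL j (by omega)] at hjmem
          · rwa [hL (n + 1) hn2] at haL
      · -- Chain'
        rw [show List.Chain' G.Adj (Q' ++ D) = List.IsChain G.Adj (Q' ++ D) from rfl, List.isChain_append]
        refine ⟨?_, ?_, ?_⟩
        · have hch' : List.Chain' G.Adj (Q' ++ S₂) := hQdecomp ▸ hch
          exact (List.isChain_append.mp hch').1
        · have hch' : List.Chain' G.Adj (T₁ ++ D) := hLn1split ▸ hchLn1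
          exact (List.isChain_append.mp hch').2.1
        · intro a ha b hb
          have ha' : a = x := by
            rw [hQ'def, List.getLast?_concat] at ha
            exact (by simpa using ha : x = a).symm
          have hb' : b = y := by
            rw [hD] at hb
            exact (by simpa using hb : y = b).symm
          rw [ha', hb']; exact hadj
      · -- membership
        intro v hv
        rcases List.mem_append.mp hv with h | h
        · obtain ⟨j, hj, hjm⟩ := hmem v (hQ'sub v h)
          exact ⟨j, by omega, hjm⟩
        · exact ⟨n + 1, le_refl _, hDsub v h⟩
      · -- suffix
        rw [hDdrop]; exact List.suffix_append Q' D
      · -- length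
        rw [Finset.sum_range_succ]
        have e1 : Q.length = Q'.length + S₂.length := by
          rw [hQdecomp]; exact List.length_append
        have e2 : (L (n + 1)).length = T₁.length + D.length := by
          rw [hLn1split]; exact List.length_append
        have e3 : (Q' ++ D).length = Q'.length + D.length := List.length_append
        have c1 : (Q.length : ℤ) = (Q'.length : ℤ) + S₂.length := by exact_mod_cast e1
        have c2 : ((L (n + 1)).length : ℤ) = (T₁.length : ℤ) + D.length := by
          exact_mod_cast e2
        have c3 : ((Q' ++ D).length : ℤ) = (Q'.length : ℤ) + D.length := by
          exact_mod_cast e3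
        have c4 : (S₂.length : ℤ) + 1 ≤ (r : ℤ) := by exact_mod_cast hS₂r
        have c5 : (T₁.length : ℤ) + 1 ≤ (r : ℤ) := by exact_mod_cast hT1r
        push_cast
        push_cast at hlen
        linarith
  obtain ⟨Q, h1, h2, _, _, h5⟩ := key t le_rfl
  refine ⟨Q, h1, h2, ?_⟩
  have hsum : (∑ i : Fin (t + 1), ((P i).length : ℤ))
      = ∑ j ∈ Finset.range (t + 1), ((L j).length : ℤ) := by
    rw [← Fin.sum_univ_eq_sum_range (fun j => ((L j).length : ℤ)) (t + 1)]
    exact Finset.sum_congr rfl fun i _ => by rw [hL i.1 i.2]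
  rw [hsum]
  push_cast at h5 ⊢
  linarith
end
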